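/- arXiv:2603.05635 — 6 statements merged into one kernel-verified Lean document; each statement's English description precedes it below -/
import Mathlib

section
/- Let k be a commutative unital ring, let m ≥ 1, and let A be a k-algebra such that [x₁,x₂]^m is a polynomial identity of A. Then an element a ∈ A is nilpotent if and only if it is strongly nilpotent. -/
/-- `p` is a polynomial identity of the `k`-algebra `A`: every `k`-algebra
homomorphism from the free associative algebra on countably many variables to
`A` (equivalently, every substitution of elements of `A` for the variables)
sends `p` to `0`. -/
def IsPolyId (k A : Type*) [CommRing k] [Semiring A] [Algebra k A]
    (p : FreeAlgebra k ℕ) : Prop :=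
  ∀ f : ℕ → A, FreeAlgebra.lift k f p = 0

/-- `[x₁,x₂]^m`, the `m`-th power of the commutator of the first two variables
of the free algebra. -/
noncomputable def commPow (k : Type*) [CommRing k] (m : ℕ) : FreeAlgebra k ℕ :=
  (FreeAlgebra.ι k 0 * FreeAlgebra.ι k 1 - FreeAlgebra.ι k 1 * FreeAlgebra.ι k 0) ^ m

/-- `[x₁,x₂][x₃,x₄]⋯[x₂ₘ₋₁,x₂ₘ]`, the product of `m` commutators in `2m`
distinct variables of the free algebra. -/
noncomputable def commProd (k : Type*) [CommRing k] (m : ℕ) : FreeAlgebra k ℕ :=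
  ((List.range m).map (fun i =>
    FreeAlgebra.ι k (2 * i) * FreeAlgebra.ι k (2 * i + 1)
      - FreeAlgebra.ι k (2 * i + 1) * FreeAlgebra.ι k (2 * i))).prod

/-- The standard polynomial `st_d(x₁,…,x_d) = Σ_{σ ∈ S_d} sgn(σ) x_{σ(1)}⋯x_{σ(d)}`
in the free algebra. -/
noncomputable def stPoly (k : Type*) [CommRing k] (d : ℕ) : FreeAlgebra k ℕ :=
  ∑ σ : Equiv.Perm (Fin d),
    (Equiv.Perm.sign σ : ℤ) •
      ((List.finRange d).map (fun i => FreeAlgebra.ι k ((σ i : Fin d) : ℕ))).prod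

/-- `A` satisfies a proper (monic multilinear) polynomial identity: for some
`n ≥ 1` there are coefficients `c σ ∈ k` for the non-identity permutations `σ`
of `{1,…,n}` such that `x₁⋯x_n + Σ_{σ ≠ id} c_σ x_{σ(1)}⋯x_{σ(n)}` is a
polynomial identity of `A`. -/
def SatisfiesProperId (k A : Type*) [CommRing k] [Semiring A] [Algebra k A] : Prop :=
  ∃ n : ℕ, 1 ≤ n ∧ ∃ c : Equiv.Perm (Fin n) → k,
    IsPolyId k A
      (((List.finRange n).map (fun i => FreeAlgebra.ι k (i : ℕ))).prod
        + ∑ σ ∈ Finset.univ.erase (1 : Equiv.Perm (Fin n)),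
            c σ • ((List.finRange n).map (fun i => FreeAlgebra.ι k ((σ i : Fin n) : ℕ))).prod)

/-- `a` is strongly nilpotent: every sequence `s` with `s 0 = a` and
`s (n+1) ∈ s n • A • s n` is eventually zero. -/
def IsStronglyNilpotent {A : Type*} [Ring A] (a : A) : Prop :=
  ∀ s : ℕ → A, s 0 = a → (∀ n, ∃ x : A, s (n + 1) = s n * x * s n) →
    ∃ N, ∀ n ≥ N, s n = 0



namespace NilpStrongAux

variable {A : Type*} [Ring A]

/-- A two-sided-ideal-like predicate on a set in a ring. -/
structure IsTI (P : Set A) : Prop where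
  zero_mem : (0:A) ∈ P
  add_mem : ∀ {x y : A}, x ∈ P → y ∈ P → x + y ∈ P
  mul_left : ∀ (r : A) {x : A}, x ∈ P → r * x ∈ P
  mul_right : ∀ {x : A} (r : A), x ∈ P → x * r ∈ P

namespace IsTI

theorem neg_mem {P : Set A} (hP : IsTI P) {x : A} (hx : x ∈ P) : -x ∈ P := by
  have := hP.mul_left (-1) hx; simpa using this

theorem sub_mem {P : Set A} (hP : IsTI P) {x y : A} (hx : x ∈ P) (hy : y ∈ P) : x - y ∈ P := by
  rw [sub_eq_add_neg]; exact hP.add_mem hx (hP.neg_mem hy)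

theorem sandwich {P : Set A} (hP : IsTI P) (u v : A) {x : A} (hx : x ∈ P) : u * x * v ∈ P :=
  hP.mul_right v (hP.mul_left u hx)

end IsTI

theorem shift_pow (x y : A) (n : ℕ) : (x * y) ^ (n + 1) = x * ((y * x) ^ n) * y := by
  induction n with
  | zero => simp
  | succ n ih => rw [pow_succ, ih, pow_succ]; simp only [mul_assoc]

theorem pow_shuffle (w : A) (i j : ℕ) : w ^ (i+1) * w ^ (j+1) = w ^ (j+2) * w ^ i := by
  rw [← pow_add, ← pow_add]; congr 1; omega

/-- Lemma A: if `b*b ∈ P` then `b*(v*b)^m ∈ P` for every `v`, given the identity. -/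
theorem lemA {P : Set A} (hP : IsTI P) {m : ℕ}
    (hcomm : ∀ x y : A, (x * y - y * x) ^ m = 0) {b : A} (hb : b * b ∈ P) :
    ∀ v : A, b * (v * b) ^ m ∈ P := by
  intro v
  have hbk : ∀ n : ℕ, b * (v * b) ^ n * b ∈ P := by
    intro n
    cases n with
    | zero => simpa using hb
    | succ n =>
      have h : ∀ X : A, b * (X * (v * b)) * b = b * X * v * (b * b) := by
        intro X; noncomm_ring
      rw [pow_succ, h]
      exact hP.mul_left _ hb
  have key : ∀ n : ℕ, b * (v * b) ^ n - b * (v * b - b * v) ^ n ∈ P := by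
    intro n
    induction n with
    | zero => simpa using hP.zero_mem
    | succ n ih =>
      have heq : ∀ X Y : A, b * (X * (v * b)) - b * (Y * (v * b - b * v))
          = (b * X - b * Y) * (v * b - b * v) + (b * X * b) * v := by
        intro X Y; noncomm_ring
      rw [pow_succ, pow_succ, heq]
      exact hP.add_mem (hP.mul_right _ ih) (hP.mul_right _ (hbk n))
  have h := key m
  rw [hcomm v b] at h
  simpa using h

/-- Lemma B: the key substitution step.  If `b*(v*b)^(n+2) ∈ P` for every `v`, then
for `c := b*(z*b)^(n+1)` we get `c*(t*c)^(n+1) ∈ P` for all `t`. -/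
theorem lemB {P : Set A} (hP : IsTI P) (n : ℕ) (b z t : A)
    (hH : ∀ v : A, b * (v * b) ^ (n + 2) ∈ P) :
    (b * (z * b) ^ (n + 1)) * (t * (b * (z * b) ^ (n + 1))) ^ (n + 1) ∈ P := by
  set U : A := t * (b * (z * b) ^ (n + 1)) with hU
  set g : A := (z * b) ^ (n + 1) * U ^ n * t with hg
  -- claim 1
  have claim1 : ∀ j s : ℕ, b * (z * b) ^ (s + 1) * ((z + g) * b) ^ j
      - b * (z * b) ^ (s + 1 + j) ∈ P := by
    intro j
    induction j with
    | zero => intro s; simpa using hP.zero_mem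
    | succ j ih =>
      intro s
      have e1 : ((z + g) * b) ^ (j + 1) = (z * b) * ((z + g) * b) ^ j
          + (g * b) * ((z + g) * b) ^ j := by
        rw [pow_succ', add_mul, add_mul]
      have e2 : b * (z * b) ^ (s + 1) * ((z * b) * ((z + g) * b) ^ j)
          = b * (z * b) ^ (s + 1 + 1) * ((z + g) * b) ^ j := by
        conv_rhs => rw [pow_succ]
        simp only [mul_assoc]
      have e3 : b * (z * b) ^ (s + 1) * ((g * b) * ((z + g) * b) ^ j)
          = b * (z * b) ^ (n + 2) * ((z * b) ^ s * (U ^ n * (t * (b * ((z + g) * b) ^ j)))) := by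
        calc b * (z * b) ^ (s + 1) * ((g * b) * ((z + g) * b) ^ j)
            = b * ((z * b) ^ (s+1) * (z * b) ^ (n+1))
              * (U ^ n * (t * (b * ((z + g) * b) ^ j))) := by
              rw [hg]; simp only [mul_assoc]
          _ = b * ((z * b) ^ (n+2) * (z * b) ^ s)
              * (U ^ n * (t * (b * ((z + g) * b) ^ j))) := by rw [pow_shuffle]
          _ = _ := by simp only [mul_assoc]
      have e4 : s + 1 + (j + 1) = s + 1 + 1 + j := by omega
      rw [e1, mul_add, e2, e3, e4]
      have hsplit : b * (z * b) ^ (s + 1 + 1) * ((z + g) * b) ^ j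
            + b * (z * b) ^ (n + 2) * ((z * b) ^ s * (U ^ n * (t * (b * ((z + g) * b) ^ j))))
            - b * (z * b) ^ (s + 1 + 1 + j)
          = (b * (z * b) ^ (s + 1 + 1) * ((z + g) * b) ^ j - b * (z * b) ^ (s + 1 + 1 + j))
            + b * (z * b) ^ (n + 2) * ((z * b) ^ s * (U ^ n * (t * (b * ((z + g) * b) ^ j)))) := by
        abel
      rw [hsplit]
      exact hP.add_mem (ih (s+1)) (hP.mul_right _ (hH z))
  -- claim 2
  have claim2 : ∀ j s : ℕ,
      b * (z * b) ^ (n+1) * U ^ n * (t * b) * (z * b) ^ s * ((z + g) * b) ^ j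
      - b * (z * b) ^ (n+1) * U ^ n * (t * b) * (z * b) ^ (s + j) ∈ P := by
    intro j
    induction j with
    | zero => intro s; simpa using hP.zero_mem
    | succ j ih =>
      intro s
      have e1 : ((z + g) * b) ^ (j + 1) = (z * b) * ((z + g) * b) ^ j
          + (g * b) * ((z + g) * b) ^ j := by
        rw [pow_succ', add_mul, add_mul]
      have e2 : b * (z * b) ^ (n+1) * U ^ n * (t * b) * (z * b) ^ s
            * ((z * b) * ((z + g) * b) ^ j)
          = b * (z * b) ^ (n+1) * U ^ n * (t * b) * (z * b) ^ (s+1) * ((z + g) * b) ^ j := by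
        conv_rhs => rw [pow_succ (z*b) s]
        simp only [mul_assoc]
      have death : b * (z * b) ^ (n+1) * U ^ n * (t * b) * (z * b) ^ s
            * ((g * b) * ((z + g) * b) ^ j) ∈ P := by
        cases s with
        | zero =>
          have hpows : ∀ R : A, U ^ n * (U * (U ^ n * R)) = U ^ (2*n+1) * R := by
            intro R
            simp only [← mul_assoc]
            rw [← pow_succ, ← pow_add, show n + 1 + n = 2*n+1 from by omega]
          have hwb : ((z * b) ^ (n+1) * t) * b = (z * b) ^ (n+1) * (t * b) := by
            simp only [mul_assoc]
          have hUU : (t * b) * (z * b) ^ (n+1) = U := by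
            rw [hU]; simp only [mul_assoc]
          have hpow2 : (((z * b) ^ (n+1) * t) * b) ^ (2*n+2)
              = (z * b) ^ (n+1) * U ^ (2*n+1) * (t * b) := by
            rw [hwb, show 2*n+2 = (2*n+1)+1 from rfl, shift_pow, hUU]
          have eL : b * (z * b) ^ (n+1) * U ^ n * (t * b) * (z * b) ^ 0
                * ((g * b) * ((z + g) * b) ^ j)
              = b * ((z * b) ^ (n+1) * (U ^ (2*n+1) * ((t * b) * ((z + g) * b) ^ j))) := by
            calc b * (z * b) ^ (n+1) * U ^ n * (t * b) * (z * b) ^ 0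
                  * ((g * b) * ((z + g) * b) ^ j)
                = b * ((z * b) ^ (n+1) * (U ^ n * (U * (U ^ n * ((t * b)
                    * ((z + g) * b) ^ j))))) := by
                  rw [hg, hU]
                  simp only [pow_zero, mul_one, one_mul, mul_assoc]
              _ = b * ((z * b) ^ (n+1) * (U ^ (2*n+1) * ((t * b) * ((z + g) * b) ^ j))) := by
                  rw [hpows]
          have eR : (b * (((z * b) ^ (n+1) * t) * b) ^ (n+2))
                * ((((z * b) ^ (n+1) * t) * b) ^ n * ((z + g) * b) ^ j)
              = b * ((z * b) ^ (n+1) * (U ^ (2*n+1) * ((t * b) * ((z + g) * b) ^ j))) := by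
            calc (b * (((z * b) ^ (n+1) * t) * b) ^ (n+2))
                  * ((((z * b) ^ (n+1) * t) * b) ^ n * ((z + g) * b) ^ j)
                = b * ((((z * b) ^ (n+1) * t) * b) ^ (n+2)
                    * (((z * b) ^ (n+1) * t) * b) ^ n) * ((z + g) * b) ^ j := by
                  simp only [mul_assoc]
              _ = b * (((z * b) ^ (n+1) * t) * b) ^ (2*n+2) * ((z + g) * b) ^ j := by
                  rw [← pow_add, show n + 2 + n = 2*n+2 from by omega]
              _ = b * ((z * b) ^ (n+1) * U ^ (2*n+1) * (t * b)) * ((z + g) * b) ^ j := by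
                  rw [hpow2]
              _ = _ := by simp only [mul_assoc]
          rw [eL, ← eR]
          exact hP.mul_right _ (hH ((z * b) ^ (n+1) * t))
        | succ s =>
          have e6 : b * (z * b) ^ (n+1) * U ^ n * (t * b) * (z * b) ^ (s+1)
                * ((g * b) * ((z + g) * b) ^ j)
              = (b * (z * b) ^ (n+1) * U ^ n * t) * (b * (z * b) ^ (n+2))
                * ((z * b) ^ s * (U ^ n * (t * (b * ((z + g) * b) ^ j)))) := by
            calc b * (z * b) ^ (n+1) * U ^ n * (t * b) * (z * b) ^ (s+1)
                  * ((g * b) * ((z + g) * b) ^ j)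
                = b * (z * b) ^ (n+1) * U ^ n * t * b
                    * ((z * b) ^ (s+1) * (z * b) ^ (n+1))
                    * (U ^ n * (t * (b * ((z + g) * b) ^ j))) := by
                  rw [hg]; simp only [mul_assoc]
              _ = b * (z * b) ^ (n+1) * U ^ n * t * b
                    * ((z * b) ^ (n+2) * (z * b) ^ s)
                    * (U ^ n * (t * (b * ((z + g) * b) ^ j))) := by rw [pow_shuffle]
              _ = _ := by simp only [mul_assoc]
          rw [e6]
          exact hP.sandwich _ _ (hH z)
      have e4 : s + (j + 1) = (s + 1) + j := by omega
      rw [e1, mul_add, e2, e4]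
      have hsplit : b * (z * b) ^ (n+1) * U ^ n * (t * b) * (z * b) ^ (s+1) * ((z + g) * b) ^ j
            + b * (z * b) ^ (n+1) * U ^ n * (t * b) * (z * b) ^ s
                * ((g * b) * ((z + g) * b) ^ j)
            - b * (z * b) ^ (n+1) * U ^ n * (t * b) * (z * b) ^ (s + 1 + j)
          = (b * (z * b) ^ (n+1) * U ^ n * (t * b) * (z * b) ^ (s+1) * ((z + g) * b) ^ j
              - b * (z * b) ^ (n+1) * U ^ n * (t * b) * (z * b) ^ (s + 1 + j))
            + b * (z * b) ^ (n+1) * U ^ n * (t * b) * (z * b) ^ s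
                * ((g * b) * ((z + g) * b) ^ j) := by abel
      rw [hsplit]
      exact hP.add_mem (ih (s+1)) death
  -- main assembly
  have hmain := hH (z + g)
  have e5 : b * ((z + g) * b) ^ (n + 2)
      = b * (z * b) ^ (0 + 1) * ((z + g) * b) ^ (n+1)
        + b * (z * b) ^ (n+1) * U ^ n * (t * b) * (z * b) ^ 0 * ((z + g) * b) ^ (n+1) := by
    rw [pow_succ', add_mul, add_mul, mul_add]
    congr 1
    · simp only [Nat.zero_add, pow_one, mul_assoc]
    · rw [hg]; simp only [pow_zero, mul_one, mul_assoc]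
  rw [e5] at hmain
  have h1 := claim1 (n+1) 0
  have h2 := claim2 (n+1) 0
  have h4 : b * (z * b) ^ (0 + 1 + (n + 1)) ∈ P := by
    rw [show 0 + 1 + (n+1) = n + 2 from by omega]
    exact hH z
  have hG : b * (z * b) ^ (n+1) * U ^ n * (t * b) * (z * b) ^ (0 + (n+1)) ∈ P := by
    have hh := hP.sub_mem (hP.sub_mem (hP.sub_mem hmain h1) h2) h4
    have heq : b * (z * b) ^ (0 + 1) * ((z + g) * b) ^ (n+1)
          + b * (z * b) ^ (n+1) * U ^ n * (t * b) * (z * b) ^ 0 * ((z + g) * b) ^ (n+1)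
        - (b * (z * b) ^ (0+1) * ((z + g) * b) ^ (n+1) - b * (z * b) ^ (0 + 1 + (n+1)))
        - (b * (z * b) ^ (n+1) * U ^ n * (t * b) * (z * b) ^ 0 * ((z + g) * b) ^ (n+1)
            - b * (z * b) ^ (n+1) * U ^ n * (t * b) * (z * b) ^ (0 + (n+1)))
        - b * (z * b) ^ (0 + 1 + (n+1))
        = b * (z * b) ^ (n+1) * U ^ n * (t * b) * (z * b) ^ (0 + (n+1)) := by abel
    rwa [heq] at hh
  have efin : (b * (z * b) ^ (n + 1)) * U ^ (n + 1)
      = b * (z * b) ^ (n+1) * U ^ n * (t * b) * (z * b) ^ (0 + (n+1)) := by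
    simp only [Nat.zero_add]
    rw [pow_succ U n, hU]
    simp only [mul_assoc]
  rw [efin]
  exact hG

/-- descent: if `b*(v*b)^(n+1) ∈ P` for all `v` then `b ∈ P`, for prime-like `P`. -/
theorem descend {P : Set A} (hP : IsTI P)
    (hprime : ∀ b : A, (∀ v : A, b * v * b ∈ P) → b ∈ P) :
    ∀ n : ℕ, ∀ b : A, (∀ v : A, b * (v * b) ^ (n + 1) ∈ P) → b ∈ P := by
  intro n
  induction n with
  | zero =>
    intro b hb
    apply hprime
    intro v
    have := hb v
    simpa [mul_assoc] using this
  | succ n ih =>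
    intro b hb
    apply ih
    intro z
    apply ih
    intro t
    exact lemB hP n b z t hb

end NilpStrongAux

namespace NilpStrongAux

variable {A : Type*} [Ring A]

/-- sandwiches of `x` -/
def sset (x : A) : Set A := {w : A | ∃ u v : A, w = u * x * v}

/-- the ideal generated by `P` and `x`. -/
def idl (P : Set A) (x : A) : Set A :=
  {w : A | ∃ p ∈ P, ∃ q ∈ AddSubgroup.closure (sset x), w = p + q}

theorem closure_mul_left (x r : A) {q : A} (hq : q ∈ AddSubgroup.closure (sset x)) :
    r * q ∈ AddSubgroup.closure (sset x) := by
  induction hq using AddSubgroup.closure_induction with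
  | mem w hw =>
    obtain ⟨u, v, rfl⟩ := hw
    exact AddSubgroup.subset_closure ⟨r * u, v, by simp [mul_assoc]⟩
  | zero => simpa using AddSubgroup.zero_mem _
  | add a c ha hc iha ihc => rw [mul_add]; exact AddSubgroup.add_mem _ iha ihc
  | neg a ha iha => rw [mul_neg]; exact AddSubgroup.neg_mem _ iha

theorem closure_mul_right (x r : A) {q : A} (hq : q ∈ AddSubgroup.closure (sset x)) :
    q * r ∈ AddSubgroup.closure (sset x) := by
  induction hq using AddSubgroup.closure_induction with
  | mem w hw =>
    obtain ⟨u, v, rfl⟩ := hw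
    exact AddSubgroup.subset_closure ⟨u, v * r, by simp [mul_assoc]⟩
  | zero => simpa using AddSubgroup.zero_mem _
  | add a c ha hc iha ihc => rw [add_mul]; exact AddSubgroup.add_mem _ iha ihc
  | neg a ha iha => rw [neg_mul]; exact AddSubgroup.neg_mem _ iha

theorem isTI_idl {P : Set A} (hP : IsTI P) (x : A) : IsTI (idl P x) := by
  constructor
  · exact ⟨0, hP.zero_mem, 0, AddSubgroup.zero_mem _, by simp⟩
  · rintro w w' ⟨p, hp, q, hq, rfl⟩ ⟨p', hp', q', hq', rfl⟩
    exact ⟨p + p', hP.add_mem hp hp', q + q', AddSubgroup.add_mem _ hq hq', by abel⟩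
  · rintro r w ⟨p, hp, q, hq, rfl⟩
    exact ⟨r * p, hP.mul_left r hp, r * q, closure_mul_left x r hq, by rw [mul_add]⟩
  · rintro w r ⟨p, hp, q, hq, rfl⟩
    exact ⟨p * r, hP.mul_right r hp, q * r, closure_mul_right x r hq, by rw [add_mul]⟩

theorem subset_idl (P : Set A) (x : A) : P ⊆ idl P x := fun p hp =>
  ⟨p, hp, 0, AddSubgroup.zero_mem _, by simp⟩

theorem mem_idl_self {P : Set A} (hP : IsTI P) (x : A) : x ∈ idl P x :=
  ⟨0, hP.zero_mem, 1 * x * 1, AddSubgroup.subset_closure ⟨1, 1, rfl⟩, by simp⟩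

theorem cross {P : Set A} (hP : IsTI P) {x y : A} (hxy : ∀ r : A, x * r * y ∈ P) :
    ∀ q ∈ AddSubgroup.closure (sset x), ∀ q' ∈ AddSubgroup.closure (sset y),
      ∀ r : A, q * r * q' ∈ P := by
  intro q hq
  induction hq using AddSubgroup.closure_induction with
  | mem w hw =>
    obtain ⟨u, v, rfl⟩ := hw
    intro q' hq'
    induction hq' using AddSubgroup.closure_induction with
    | mem w' hw' =>
      obtain ⟨u', v', rfl⟩ := hw'
      intro r
      have he : (u * x * v) * r * (u' * y * v') = u * (x * (v * r * u') * y) * v' := by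
        simp only [mul_assoc]
      rw [he]
      exact hP.sandwich u v' (hxy _)
    | zero => intro r; simpa using hP.zero_mem
    | add a c ha hc iha ihc =>
      intro r
      have he : (u * x * v) * r * (a + c) = (u * x * v) * r * a + (u * x * v) * r * c := by
        rw [mul_add]
      rw [he]; exact hP.add_mem (iha r) (ihc r)
    | neg a ha iha =>
      intro r
      have he : (u * x * v) * r * (-a) = -((u * x * v) * r * a) := by rw [mul_neg]
      rw [he]; exact hP.neg_mem (iha r)
  | zero => intro q' hq' r; simpa using hP.zero_mem
  | add a c ha hc iha ihc =>
    intro q' hq' r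
    have he : (a + c) * r * q' = a * r * q' + c * r * q' := by rw [add_mul, add_mul]
    rw [he]; exact hP.add_mem (iha q' hq' r) (ihc q' hq' r)
  | neg a ha iha =>
    intro q' hq' r
    have he : (-a) * r * q' = -(a * r * q') := by rw [neg_mul, neg_mul]
    rw [he]; exact hP.neg_mem (iha q' hq' r)

end NilpStrongAux


open NilpStrongAux in
theorem nilpotent_iff_stronglyNilpotent
    (k A : Type*) [CommRing k] [Ring A] [Algebra k A]
    (m : ℕ) (hm : 1 ≤ m) (hid : IsPolyId k A (commPow k m)) (a : A) :
    IsNilpotent a ↔ IsStronglyNilpotent a := by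
  constructor
  · -- hard direction
    intro hnil s hs0 hstep
    by_contra hev
    push_neg at hev
    -- everything of the sequence is nonzero
    have hnz : ∀ n, s n ≠ 0 := by
      intro n hn0
      have hz : ∀ j, s (n + j) = 0 := by
        intro j
        induction j with
        | zero => simpa using hn0
        | succ j ih =>
          obtain ⟨x, hx⟩ := hstep (n + j)
          rw [show n + (j+1) = (n+j) + 1 from rfl, hx, ih]
          simp
      obtain ⟨kk, hk, hkne⟩ := hev n
      apply hkne
      have := hz (kk - n)
      rwa [show n + (kk - n) = kk from by omega] at this
    -- the commutator identity in A
    have hcomm : ∀ x y : A, (x * y - y * x) ^ m = 0 := by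
      intro x y
      have h := hid (fun i => if i = 0 then x else y)
      simp only [commPow, map_pow, map_sub, map_mul, FreeAlgebra.lift_ι_apply] at h
      simpa using h
    -- Zorn's lemma: a maximal two-sided ideal avoiding the sequence
    have h0 : ({0} : Set A) ∈ {I : Set A | IsTI I ∧ ∀ n, s n ∉ I} := by
      constructor
      · constructor
        · rfl
        · rintro x y hx hy
          simp only [Set.mem_singleton_iff] at *
          rw [hx, hy]; simp
        · rintro r x hx
          simp only [Set.mem_singleton_iff] at *
          rw [hx]; simp
        · rintro x r hx
          simp only [Set.mem_singleton_iff] at *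
          rw [hx]; simp
      · intro n h
        exact hnz n (by simpa using h)
    have hchainub : ∀ c ⊆ {I : Set A | IsTI I ∧ ∀ n, s n ∉ I}, IsChain (· ⊆ ·) c →
        c.Nonempty → ∃ ub ∈ {I : Set A | IsTI I ∧ ∀ n, s n ∉ I}, ∀ t ∈ c, t ⊆ ub := by
      intro c hcS hchain hcne
      refine ⟨⋃₀ c, ⟨⟨?_, ?_, ?_, ?_⟩, ?_⟩, fun t ht => Set.subset_sUnion_of_mem ht⟩
      · obtain ⟨I, hI⟩ := hcne
        exact ⟨I, hI, (hcS hI).1.zero_mem⟩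
      · rintro x y ⟨I, hI, hxI⟩ ⟨J, hJ, hyJ⟩
        rcases hchain.total hI hJ with h | h
        · exact ⟨J, hJ, (hcS hJ).1.add_mem (h hxI) hyJ⟩
        · exact ⟨I, hI, (hcS hI).1.add_mem hxI (h hyJ)⟩
      · rintro r x ⟨I, hI, hxI⟩
        exact ⟨I, hI, (hcS hI).1.mul_left r hxI⟩
      · rintro x r ⟨I, hI, hxI⟩
        exact ⟨I, hI, (hcS hI).1.mul_right r hxI⟩
      · intro n hn
        obtain ⟨I, hI, hnI⟩ := hn
        exact (hcS hI).2 n hnI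
    obtain ⟨P, -, hPmax⟩ :=
      zorn_subset_nonempty {I : Set A | IsTI I ∧ ∀ n, s n ∉ I} hchainub _ h0
    obtain ⟨hP, havoid⟩ := hPmax.prop
    -- primality
    have hprime : ∀ b : A, (∀ v : A, b * v * b ∈ P) → b ∈ P := by
      intro b hb
      by_contra hbP
      have hnotS : ¬ (∀ n, s n ∉ idl P b) := by
        intro hav
        have hPle : idl P b ⊆ P := hPmax.2 ⟨isTI_idl hP b, hav⟩ (subset_idl P b)
        exact hbP (hPle (mem_idl_self hP b))
      push_neg at hnotS
      obtain ⟨n1, hn1⟩ := hnotS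
      obtain ⟨xx, hxx⟩ := hstep n1
      obtain ⟨p, hp, q, hq, hdecomp⟩ := hn1
      have hmem : s (n1 + 1) ∈ P := by
        rw [hxx, hdecomp]
        have expand : (p + q) * xx * (p + q)
            = p * (xx * (p + q)) + q * xx * p + q * xx * q := by noncomm_ring
        rw [expand]
        exact hP.add_mem (hP.add_mem (hP.mul_right _ hp) (hP.mul_left _ hp))
          (cross hP hb q hq q hq xx)
      exact havoid (n1 + 1) hmem
    -- nilpotent elements land in P
    obtain ⟨m', rfl⟩ : ∃ m', m = m' + 1 := ⟨m - 1, by omega⟩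
    have powP : ∀ kk : ℕ, a ^ kk ∈ P → a ∈ P := by
      intro kk
      induction kk using Nat.strong_induction_on with
      | _ kk ih =>
        intro hk
        match kk, hk with
        | 0, hk => simpa using hP.mul_right a hk
        | 1, hk => simpa using hk
        | (k + 2), hk =>
          have hj1 : (k + 3) / 2 < k + 2 := by omega
          have hbb : a ^ ((k+3)/2) * a ^ ((k+3)/2) ∈ P := by
            rw [← pow_add, show (k+3)/2 + (k+3)/2 = (k+2) + ((k+3)/2 + (k+3)/2 - (k+2)) from by
              omega, pow_add]
            exact hP.mul_right _ hk
          have hH := lemA hP hcomm hbb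
          have : a ^ ((k+3)/2) ∈ P := descend hP hprime m' (a ^ ((k+3)/2)) hH
          exact ih _ hj1 this
    obtain ⟨n0, hn0⟩ := hnil
    have haP : a ∈ P := powP n0 (by rw [hn0]; exact hP.zero_mem)
    exact havoid 0 (hs0 ▸ haP)
  · -- easy direction
    intro hsn
    obtain ⟨N, hN⟩ := hsn (fun n => a ^ (2 ^ n)) (by simp)
      (fun n => ⟨1, by
        show a ^ 2 ^ (n+1) = a ^ 2 ^ n * 1 * a ^ 2 ^ n
        rw [mul_one, ← pow_add, pow_succ, mul_two]⟩)
    exact ⟨2 ^ N, hN N le_rfl⟩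
end

section
/- Let k be a commutative unital ring, let m ≥ 1, and let A be a k-algebra such that [x₁,x₂]^m is a polynomial identity of A. Then for any nilpotent elements a, b ∈ A, the sum a + b is nilpotent. -/
namespace NilpAddAux


section CoreRing
variable {R : Type*} [Ring R]

lemma lemA (m : ℕ) (hid : ∀ x y : R, (x*y - y*x)^m = 0)
    (d : R) (hd : d * d = 0) (x : R) : d * (x*d)^m = 0 := by
  have hzero : ∀ j : ℕ, d * (x*d)^j * d = 0 := by
    intro j
    cases j with
    | zero => simpa using hd
    | succ i =>
      rw [pow_succ]
      simp only [mul_assoc]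
      rw [hd]
      simp
  have key : ∀ j : ℕ, d * (x*d - d*x)^j = d * (x*d)^j := by
    intro j
    induction j with
    | zero => simp
    | succ j ih =>
      rw [pow_succ, pow_succ, ← mul_assoc, ← mul_assoc, ih, mul_sub]
      have h2 : d * (x*d)^j * (d*x) = 0 := by
        rw [← mul_assoc, hzero j, zero_mul]
      rw [h2, sub_zero]
  have h3 := key m
  rw [hid x d, mul_zero] at h3
  exact h3.symm

lemma absorb (P Q : R) (hPQ : P + P*Q = 0) (n : ℕ) (hQ : Q^n = 0) : P = 0 := by
  have h7 : P = -(P*Q) := eq_neg_of_add_eq_zero_left hPQ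
  have h8 : P*Q = (-(P*Q))*Q := by rw [← h7]
  have e2 : P = P * (Q*Q) := by
    calc P = -(P*Q) := h7
    _ = -((-(P*Q))*Q) := by rw [← h8]
    _ = (P*Q)*Q := by rw [neg_mul, neg_neg]
    _ = P*(Q*Q) := by rw [mul_assoc]
  have heven : ∀ i : ℕ, P = P * (Q*Q)^i := by
    intro i
    induction i with
    | zero => simp
    | succ i ih => rw [pow_succ, ← mul_assoc, ← ih, ← e2]
  have h11 : (Q*Q)^n = 0 := by
    rw [← pow_two, ← pow_mul, two_mul, pow_add, hQ, zero_mul]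
  rw [heven n, h11, mul_zero]

lemma descent' (k : ℕ) (d : R) (H : ∀ w : R, d * (w*d)^(k+2) = 0) (x z : R) :
    (d * (x*d)^(k+1)) * z * (d * (x*d)^(k+1)) = 0 := by
  set s : R := x * d with hs
  set u : R := d * s^(k+1) with hu
  set b : R := s^(k+1) * (z * d) with hb
  have hds : ∀ i : ℕ, d * s^(k+2+i) = 0 := by
    intro i
    rw [pow_add, ← mul_assoc]
    have h0 : d * s^(k+2) = 0 := H x
    rw [h0, zero_mul]
  have hdsb : ∀ j : ℕ, d * s^(j+1) * b = 0 := by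
    intro j
    have h1 : s^(j+1) * (s^(k+1)*(z*d)) = s^(k+2+j)*(z*d) := by
      rw [← mul_assoc, ← pow_add]
      congr 2
      omega
    rw [hb, mul_assoc, h1, ← mul_assoc, hds j, zero_mul]
  have SUB : ∀ j : ℕ, d * (s+b)^(j+1) = d * s^(j+1) + (d * b) * (s+b)^j := by
    intro j
    induction j with
    | zero => simp [mul_add]
    | succ j ih =>
      rw [pow_succ, ← mul_assoc, ih, add_mul, mul_add, hdsb, add_zero,
        mul_assoc d (s^(j+1)) s, ← pow_succ, mul_assoc (d*b), ← pow_succ]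
  have hsb : (x + s^(k+1)*z) * d = s + b := by
    rw [add_mul, hb, mul_assoc]
  have hmain : d * (s+b)^(k+2) = 0 := by
    have h4 := H (x + s^(k+1)*z)
    rwa [hsb] at h4
  have hdb0 : (d * b) * (s+b)^(k+1) = 0 := by
    have h5 := SUB (k+1)
    rw [hmain, hds 0] at h5
    simpa using h5.symm
  set A : R := (s+b)^k with hA
  have hdbu : d * b = u * (z*d) := by
    rw [hu, hb]
    simp only [mul_assoc]
  have e0 : u*(z*(d*(s+b)^(k+1))) = 0 := by
    have h6 : u*(z*(d*(s+b)^(k+1))) = (d*b)*(s+b)^(k+1) := by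
      rw [hb, hu]
      simp only [mul_assoc]
    rw [h6, hdb0]
  rw [SUB k, ← hA, ← hu, hdbu] at e0
  have e1 : u*(z*u) + (u*(z*u))*(z*(d*A)) = 0 := by
    rw [← e0]
    simp only [mul_add, mul_assoc]
  -- kill power
  set W : R := A * (z*d) with hW
  have hiter : ∀ i : ℕ, (z*(d*A))^(i+1) = z * (d * (W^i * A)) := by
    intro i
    induction i with
    | zero => simp
    | succ i ih =>
      rw [pow_succ, ih, hW, pow_succ]
      simp only [mul_assoc]
  have hkill : (z*(d*A))^(k+3) = 0 := by
    rw [hiter (k+2)]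
    have h9 : d * W^(k+2) = 0 := by
      have h99 := H (A*z)
      rw [mul_assoc] at h99
      exact h99
    rw [← mul_assoc d, h9, zero_mul, mul_zero]
  have := absorb (u*(z*u)) (z*(d*A)) e1 (k+3) hkill
  rw [mul_assoc]
  exact this




theorem core_nilpotent_zero (m : ℕ) (hm : 1 ≤ m)
    (hid : ∀ x y : R, (x*y - y*x)^m = 0)
    (hpr : ∀ u v : R, (∀ r : R, u*r*v = 0) → u = 0 ∨ v = 0)
    (d : R) (hd : IsNilpotent d) : d = 0 := by
  have hsq : ∀ e : R, e * e = 0 → e = 0 := by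
    intro e he
    have hdesc : ∀ n : ℕ, (∀ w : R, e*(w*e)^(n+1) = 0) → e = 0 := by
      intro n
      induction n with
      | zero =>
        intro h1
        have h2 : ∀ r : R, e*r*e = 0 := by
          intro r
          have := h1 r
          rw [pow_one, ← mul_assoc] at this
          exact this
        rcases hpr e e h2 with h | h <;> exact h
      | succ n ih =>
        intro hH
        apply ih
        intro w
        have h3 : ∀ z : R, (e*(w*e)^(n+1)) * z * (e*(w*e)^(n+1)) = 0 :=
          fun z => descent' n e hH w z
        rcases hpr _ _ h3 with h | h <;> exact h
    obtain ⟨j, rfl⟩ : ∃ j, m = j + 1 := ⟨m-1, by omega⟩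
    exact hdesc j (fun w => lemA (j+1) hid e he w)
  have haux : ∀ n : ℕ, ∀ c : R, c^n = 0 → c = 0 := by
    intro n
    induction n using Nat.strong_induction_on with
    | _ n ih =>
      intro c hc
      match n, ih with
      | 0, ih =>
        have h1 : (1 : R) = 0 := by simpa using hc
        calc c = c * 1 := (mul_one c).symm
        _ = c * 0 := by rw [h1]
        _ = 0 := mul_zero c
      | 1, ih => simpa using hc
      | (j+2), ih =>
        have he : c ^ (j+1) * c ^ (j+1) = 0 := by
          rw [← pow_add]
          have h2 : (j+1) + (j+1) = (j+2) + j := by omega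
          rw [h2, pow_add, hc, zero_mul]
        have h3 : c ^ (j+1) = 0 := hsq _ he
        exact ih (j+1) (by omega) c h3
  obtain ⟨n, hn⟩ := hd
  exact haux n d hn

end CoreRing


section ZornPart
variable {A : Type*} [Ring A]

def IsTsi (P : Set A) : Prop :=
  0 ∈ P ∧ (∀ x ∈ P, ∀ y ∈ P, x + y ∈ P) ∧
    (∀ x ∈ P, ∀ r : A, r * x ∈ P) ∧ (∀ x ∈ P, ∀ r : A, x * r ∈ P)

theorem exists_prime_avoiding (c : A) (hc : ∀ n : ℕ, c^n ≠ 0) :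
    ∃ P : Set A, IsTsi P ∧ (∀ n : ℕ, c^n ∉ P) ∧
      (∀ u v : A, (∀ r : A, u*r*v ∈ P) → u ∈ P ∨ v ∈ P) := by
  set S : Set (Set A) := {P | IsTsi P ∧ ∀ n : ℕ, c^n ∉ P} with hS
  have h0S : ({0} : Set A) ∈ S := by
    refine ⟨⟨rfl, ?_, ?_, ?_⟩, ?_⟩
    · intro x hx y hy
      simp only [Set.mem_singleton_iff] at *
      rw [hx, hy, add_zero]
    · intro x hx r
      simp only [Set.mem_singleton_iff] at *
      rw [hx, mul_zero]
    · intro x hx r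
      simp only [Set.mem_singleton_iff] at *
      rw [hx, zero_mul]
    · intro n hn
      exact hc n (by simpa using hn)
  have hchain : ∀ C ⊆ S, IsChain (· ⊆ ·) C → C.Nonempty → ∃ ub ∈ S, ∀ s ∈ C, s ⊆ ub := by
    rintro C hCS hCchain ⟨P₀, hP₀⟩
    refine ⟨⋃₀ C, ⟨⟨?_, ?_, ?_, ?_⟩, ?_⟩, fun s hs => Set.subset_sUnion_of_mem hs⟩
    · exact ⟨P₀, hP₀, (hCS hP₀).1.1⟩
    · rintro x ⟨Px, hPx, hxPx⟩ y ⟨Py, hPy, hyPy⟩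
      rcases IsChain.total hCchain hPx hPy with h | h
      · exact ⟨Py, hPy, (hCS hPy).1.2.1 x (h hxPx) y hyPy⟩
      · exact ⟨Px, hPx, (hCS hPx).1.2.1 x hxPx y (h hyPy)⟩
    · rintro x ⟨Px, hPx, hxPx⟩ r
      exact ⟨Px, hPx, (hCS hPx).1.2.2.1 x hxPx r⟩
    · rintro x ⟨Px, hPx, hxPx⟩ r
      exact ⟨Px, hPx, (hCS hPx).1.2.2.2 x hxPx r⟩
    · rintro n ⟨Px, hPx, hmem⟩
      exact (hCS hPx).2 n hmem
  obtain ⟨P, -, hPmax⟩ := zorn_subset_nonempty S hchain {0} h0S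
  have hPS : P ∈ S := hPmax.prop
  have hP0 : (0 : A) ∈ P := hPS.1.1
  have hPadd := hPS.1.2.1
  have hPml := hPS.1.2.2.1
  have hPmr := hPS.1.2.2.2
  have hPneg : ∀ x ∈ P, -x ∈ P := by
    intro x hx
    have := hPml x hx (-1)
    simpa using this
  refine ⟨P, hPS.1, hPS.2, ?_⟩
  intro u v huv
  by_contra hcon
  push_neg at hcon
  obtain ⟨hu, hv⟩ := hcon
  have key : ∀ w : A, w ∉ P →
      ∃ n : ℕ, ∃ p ∈ P, ∃ t ∈ AddSubgroup.closure {t : A | ∃ r s : A, t = r * w * s},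
        c^n = p + t := by
    intro w hw
    by_contra hno
    push_neg at hno
    set Tw := AddSubgroup.closure {t : A | ∃ r s : A, t = r * w * s} with hTw
    set Q : Set A := {y | ∃ p ∈ P, ∃ t ∈ Tw, y = p + t} with hQdef
    have hTml : ∀ r : A, ∀ t ∈ Tw, r * t ∈ Tw := by
      intro r t ht
      induction ht using AddSubgroup.closure_induction with
      | mem x hx =>
        obtain ⟨r', s', rfl⟩ := hx
        exact AddSubgroup.subset_closure ⟨r*r', s', by simp [mul_assoc]⟩
      | zero => rw [mul_zero]; exact zero_mem _
      | add x y hx hy ihx ihy => rw [mul_add]; exact add_mem ihx ihy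
      | neg x hx ihx => rw [mul_neg]; exact neg_mem ihx
    have hTmr : ∀ r : A, ∀ t ∈ Tw, t * r ∈ Tw := by
      intro r t ht
      induction ht using AddSubgroup.closure_induction with
      | mem x hx =>
        obtain ⟨r', s', rfl⟩ := hx
        exact AddSubgroup.subset_closure ⟨r', s'*r, by simp [mul_assoc]⟩
      | zero => rw [zero_mul]; exact zero_mem _
      | add x y hx hy ihx ihy => rw [add_mul]; exact add_mem ihx ihy
      | neg x hx ihx => rw [neg_mul]; exact neg_mem ihx
    have hQS : Q ∈ S := by
      refine ⟨⟨⟨0, hP0, 0, zero_mem _, by simp⟩, ?_, ?_, ?_⟩, ?_⟩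
      · rintro x ⟨p1, hp1, t1, ht1, rfl⟩ y ⟨p2, hp2, t2, ht2, rfl⟩
        exact ⟨p1 + p2, hPadd p1 hp1 p2 hp2, t1 + t2, add_mem ht1 ht2, by abel⟩
      · rintro x ⟨p1, hp1, t1, ht1, rfl⟩ r
        exact ⟨r * p1, hPml p1 hp1 r, r * t1, hTml r t1 ht1, by rw [mul_add]⟩
      · rintro x ⟨p1, hp1, t1, ht1, rfl⟩ r
        exact ⟨p1 * r, hPmr p1 hp1 r, t1 * r, hTmr r t1 ht1, by rw [add_mul]⟩
      · rintro n ⟨p1, hp1, t1, ht1, heq⟩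
        exact hno n p1 hp1 t1 ht1 heq
    have hPQ : P ⊆ Q := fun p hp => ⟨p, hp, 0, zero_mem _, by simp⟩
    have hQP : Q ⊆ P := hPmax.2 hQS hPQ
    apply hw
    apply hQP
    exact ⟨0, hP0, 1*w*1, AddSubgroup.subset_closure ⟨1, 1, rfl⟩, by simp⟩
  obtain ⟨n₁, p₁, hp₁, t₁, ht₁, he₁⟩ := key u hu
  obtain ⟨n₂, p₂, hp₂, t₂, ht₂, he₂⟩ := key v hv
  have htt : ∀ t₁ ∈ AddSubgroup.closure {t : A | ∃ r s : A, t = r * u * s},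
      ∀ t₂ ∈ AddSubgroup.closure {t : A | ∃ r s : A, t = r * v * s}, t₁ * t₂ ∈ P := by
    intro a ha
    induction ha using AddSubgroup.closure_induction with
    | mem x hx =>
      intro b hb
      induction hb using AddSubgroup.closure_induction with
      | mem y hy =>
        obtain ⟨r, s, rfl⟩ := hx
        obtain ⟨r', s', rfl⟩ := hy
        have hmid : u * (s * r') * v ∈ P := huv (s * r')
        have heq : (r*u*s)*(r'*v*s') = r * (u*(s*r')*v) * s' := by
          simp only [mul_assoc]
        rw [heq]
        exact hPmr _ (hPml _ hmid r) s'
      | zero => rw [mul_zero]; exact hP0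
      | add y z hy hz ihy ihz => rw [mul_add]; exact hPadd _ ihy _ ihz
      | neg y hy ihy => rw [mul_neg]; exact hPneg _ ihy
    | zero => intro b hb; rw [zero_mul]; exact hP0
    | add x y hx hy ihx ihy =>
      intro b hb
      rw [add_mul]
      exact hPadd _ (ihx b hb) _ (ihy b hb)
    | neg x hx ihx =>
      intro b hb
      rw [neg_mul]
      exact hPneg _ (ihx b hb)
  have hfin : c^(n₁+n₂) ∈ P := by
    rw [pow_add, he₁, he₂, add_mul, mul_add, mul_add]
    apply hPadd
    · apply hPadd
      · exact hPml _ hp₂ p₁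
      · exact hPmr _ hp₁ t₂  -- p₁ * t₂? careful
    · apply hPadd
      · exact hPml _ hp₂ t₁
      · exact htt t₁ ht₁ t₂ ht₂
  exact hPS.2 (n₁+n₂) hfin

end ZornPart

end NilpAddAux

open NilpAddAux in
theorem nilpotent_add_nilpotent
    (k A : Type*) [CommRing k] [Ring A] [Algebra k A]
    (m : ℕ) (hm : 1 ≤ m) (hid : IsPolyId k A (commPow k m))
    (a b : A) (ha : IsNilpotent a) (hb : IsNilpotent b) :
    IsNilpotent (a + b) := by
  have hidA : ∀ x y : A, (x*y - y*x)^m = 0 := by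
    intro x y
    have h1 := hid (fun i => if i = 0 then x else y)
    rw [commPow] at h1
    simpa using h1
  by_contra hnil
  have hc : ∀ n : ℕ, (a+b)^n ≠ 0 := fun n hn => hnil ⟨n, hn⟩
  obtain ⟨P, hPtsi, hPavoid, hPprime⟩ := exists_prime_avoiding (a+b) hc
  -- build quotient
  let I : TwoSidedIdeal A := TwoSidedIdeal.mk' P hPtsi.1
    (fun {x y} hx hy => hPtsi.2.1 x hx y hy)
    (fun {x} hx => by simpa using hPtsi.2.2.1 x hx (-1))
    (fun {x y} hy => hPtsi.2.2.1 y hy x)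
    (fun {x y} hx => hPtsi.2.2.2 x hx y)
  let c := I.ringCon
  let f : A →+* c.Quotient := c.mk'
  have hmem : ∀ x : A, f x = 0 ↔ x ∈ P := by
    intro x
    rw [← map_zero f]
    show (x : c.Quotient) = ((0:A) : c.Quotient) ↔ _
    rw [RingCon.eq]
    have h2 : c x 0 ↔ x ∈ I := (TwoSidedIdeal.mem_iff I x).symm
    rw [h2, TwoSidedIdeal.mem_mk']
  have hsurj : ∀ X : c.Quotient, ∃ x : A, f x = X := by
    intro X
    exact Quot.inductionOn X (fun x => ⟨x, rfl⟩)
  have hqid : ∀ X Y : c.Quotient, (X*Y - Y*X)^m = 0 := by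
    intro X Y
    obtain ⟨x, rfl⟩ := hsurj X
    obtain ⟨y, rfl⟩ := hsurj Y
    rw [← map_mul, ← map_mul, ← map_sub, ← map_pow, hidA x y, map_zero]
  have hqprime : ∀ U V : c.Quotient, (∀ W, U*W*V = 0) → U = 0 ∨ V = 0 := by
    intro U V hUV
    obtain ⟨u, rfl⟩ := hsurj U
    obtain ⟨v, rfl⟩ := hsurj V
    have h3 : ∀ r : A, u*r*v ∈ P := by
      intro r
      rw [← hmem, map_mul, map_mul]
      exact hUV (f r)
    rcases hPprime u v h3 with h | h
    · left; rw [hmem]; exact h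
    · right; rw [hmem]; exact h
  have hna : f a = 0 := by
    obtain ⟨n, hn⟩ := ha
    exact core_nilpotent_zero m hm hqid hqprime (f a) ⟨n, by rw [← map_pow, hn, map_zero]⟩
  have hnb : f b = 0 := by
    obtain ⟨n, hn⟩ := hb
    exact core_nilpotent_zero m hm hqid hqprime (f b) ⟨n, by rw [← map_pow, hn, map_zero]⟩
  have hab : a + b ∈ P := by
    rw [← hmem, map_add, hna, hnb, add_zero]
  have := hPavoid 1
  rw [pow_one] at this
  exact this hab
end

section
/- Let k be a commutative unital ring, let m ≥ 1, and let A be a k-algebra such that [x₁,x₂]^m is a polynomial identity of A. If a₁, …, a_t ∈ A are nilpotent elements, then the non-unital k-subalgebra of A generated by a₁, …, a_t is nilpotent: there exists N such that every product of N elements of this subalgebra equals 0. -/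
open Pointwise
set_option linter.unusedSectionVars false

section Helpers

variable {R : Type*} [Ring R]

/-- `I` is a two-sided ideal (as a `ℤ`-submodule). -/
def IsIdl (I : Submodule ℤ R) : Prop := ∀ r x : R, x ∈ I → r * x ∈ I ∧ x * r ∈ I

lemma isIdl_bot : IsIdl (⊥ : Submodule ℤ R) := by
  intro r x hx
  simp only [Submodule.mem_bot] at hx
  subst hx
  simp

/-- powers of an element of a span land in the span of products. -/
lemma span_pow_mem {C : Set R} {x : R} (hx : x ∈ Submodule.span ℤ C) (N : ℕ) :
    x ^ N ∈ Submodule.span ℤ {p : R | ∃ l : List R, (∀ y ∈ l, y ∈ C) ∧ l.length = N ∧ p = l.prod} := by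
  induction N with
  | zero =>
      apply Submodule.subset_span
      exact ⟨[], by simp, rfl, by simp⟩
  | succ n ih =>
      rw [pow_succ]
      have h2 : x ^ n * x ∈ Submodule.span ℤ
          ({p : R | ∃ l : List R, (∀ y ∈ l, y ∈ C) ∧ l.length = n ∧ p = l.prod} * C) := by
        rw [← Submodule.span_mul_span ℤ]
        exact Submodule.mul_mem_mul ih hx
      refine Submodule.span_le.mpr ?_ h2
      rintro z ⟨p, ⟨l, hl, hlen, rfl⟩, c, hc, rfl⟩
      apply Submodule.subset_span
      exact ⟨l ++ [c], by
        intro y hy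
        rcases List.mem_append.mp hy with h | h
        · exact hl y h
        · simp at h; subst h; exact hc, by simp [hlen], by simp⟩

end Helpers
section Helpers2
variable {R : Type*} [Ring R]


lemma sum_mul_v_mem {I : Submodule ℤ R} (hI : IsIdl I) {u v : R} (huv : u * v ∈ I) (j : ℕ) :
    (∑ i ∈ Finset.range (j+1), ((-1:ℤ)^i) • (v^i * u^(j-i))) * v
      - ((-1:ℤ)^j) • v^(j+1) ∈ I := by
  have e1 : (∑ i ∈ Finset.range (j+1), ((-1:ℤ)^i) • (v^i * u^(j-i))) * v
      = ∑ i ∈ Finset.range (j+1), ((-1:ℤ)^i) • (v^i * u^(j-i) * v) := by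
    rw [Finset.sum_mul]
    exact Finset.sum_congr rfl fun i _ => by rw [smul_mul_assoc]
  rw [e1, Finset.sum_range_succ, Nat.sub_self, pow_zero, mul_one, ← pow_succ]
  have e3 : (∑ i ∈ Finset.range j, ((-1:ℤ)^i) • (v^i * u^(j-i) * v)) ∈ I := by
    apply Submodule.sum_mem
    intro i hi
    apply Submodule.smul_mem
    have hij : i < j := Finset.mem_range.mp hi
    have e4 : v^i * u^(j-i) * v = (v^i * u^(j-i-1)) * (u * v) := by
      have h5 : u^(j-i) = u^(j-i-1) * u := by
        conv_lhs => rw [show j - i = (j-i-1)+1 by omega]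
        rw [pow_succ]
      rw [h5]
      noncomm_ring
    rw [e4]
    exact (hI _ _ huv).1
  convert Submodule.add_mem I e3 (Submodule.zero_mem I) using 1
  abel

lemma pow_sub_expand {I : Submodule ℤ R} (hI : IsIdl I) {u v : R} (huv : u * v ∈ I) (j : ℕ) :
    (u - v) ^ j - (∑ i ∈ Finset.range (j+1), ((-1:ℤ)^i) • (v^i * u^(j-i))) ∈ I := by
  induction j with
  | zero => simp
  | succ j ih =>
      set S : R := ∑ i ∈ Finset.range (j+1), ((-1:ℤ)^i) • (v^i * u^(j-i)) with hS
      have key : (u - v)^(j+1) = S * u - S * v + ((u-v)^j - S) * (u - v) := by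
        rw [pow_succ]
        noncomm_ring
      have hSu : S * u = ∑ i ∈ Finset.range (j+1), ((-1:ℤ)^i) • (v^i * u^(j+1-i)) := by
        rw [hS, Finset.sum_mul]
        refine Finset.sum_congr rfl fun i hi => ?_
        have hij : i < j + 1 := Finset.mem_range.mp hi
        have he : j - i + 1 = j + 1 - i := by omega
        rw [smul_mul_assoc, mul_assoc, ← pow_succ, he]
      have hSj1 : (∑ i ∈ Finset.range (j+1+1), ((-1:ℤ)^i) • (v^i * u^(j+1-i)))
          = (∑ i ∈ Finset.range (j+1), ((-1:ℤ)^i) • (v^i * u^(j+1-i)))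
            + ((-1:ℤ)^(j+1)) • v^(j+1) := by
        rw [Finset.sum_range_succ, Nat.sub_self, pow_zero, mul_one]
      have hneg : ((-1:ℤ)^(j+1)) • (v^(j+1)) = -(((-1:ℤ)^j) • v^(j+1)) := by
        rw [pow_succ, mul_neg_one, neg_smul]
      have expand : (u - v)^(j+1)
            - (∑ i ∈ Finset.range (j+1+1), ((-1:ℤ)^i) • (v^i * u^(j+1-i)))
          = (((u-v)^j - S) * (u - v)) - (S * v - ((-1:ℤ)^j) • v^(j+1)) := by
        rw [key, hSj1, hSu, hneg]
        abel
      rw [expand]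
      exact Submodule.sub_mem I ((hI _ _ ih).2) (sum_mul_v_mem hI huv j)

lemma bx_pow_mem {m : ℕ} (hcomm : ∀ x y : R, (x*y - y*x)^m = 0)
    {I : Submodule ℤ R} (hI : IsIdl I) {b : R} (hb : b * b ∈ I) (x : R) :
    (b * x) ^ (m + 1) ∈ I := by
  have huv : (x * b) * (b * x) ∈ I := by
    have h : (x * b) * (b * x) = (x * (b * b)) * x := by noncomm_ring
    rw [h]
    exact (hI _ _ ((hI _ _ hb).1)).2
  have h0 : ((x*b) - (b*x))^m = 0 := hcomm x b
  have hSm : (∑ i ∈ Finset.range (m+1), ((-1:ℤ)^i) • ((b*x)^i * (x*b)^(m-i))) ∈ I := by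
    have h1 := pow_sub_expand hI huv m
    rw [h0] at h1
    have h2 := Submodule.neg_mem I h1
    simpa using h2
  have hSmv : (∑ i ∈ Finset.range (m+1), ((-1:ℤ)^i) • ((b*x)^i * (x*b)^(m-i))) * (b*x) ∈ I :=
    (hI (b*x) _ hSm).2
  have hfin : ((-1:ℤ)^m) • (b*x)^(m+1) ∈ I := by
    have h3 := Submodule.sub_mem I hSmv (sum_mul_v_mem hI huv m)
    simpa using h3
  have h4 : ((-1:ℤ)^m) • (((-1:ℤ)^m) • (b*x)^(m+1)) ∈ I := Submodule.smul_mem I _ hfin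
  rw [smul_smul, ← pow_add, ← two_mul, pow_mul, neg_one_sq, one_pow, one_smul] at h4
  exact h4

end Helpers2
section SW
variable {R : Type*} [Ring R]

variable (B : NonUnitalSubring R)

/-- `s` is in `B` or equals `1`. -/
def BOne (s : R) : Prop := s ∈ B ∨ s = 1

lemma BOne_mul {s t : R} (hs : BOne B s) (ht : BOne B t) : BOne B (s * t) := by
  rcases hs with hs | rfl
  · rcases ht with ht | rfl
    · exact Or.inl (B.mul_mem hs ht)
    · rw [mul_one]; exact Or.inl hs
  · rw [one_mul]; exact ht

lemma Bpow_mem {y : R} (hy : y ∈ B) : ∀ n : ℕ, 1 ≤ n → y ^ n ∈ B := by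
  intro n hn
  induction n with
  | zero => omega
  | succ k ih =>
      rcases Nat.eq_or_lt_of_le hn with h | h
      · simp [← h]
        simpa using hy
      · rw [pow_succ]
        exact B.mul_mem (ih (by omega)) hy

lemma BOne_pow {y : R} (hy : y ∈ B) (n : ℕ) : BOne B (y ^ n) := by
  cases n with
  | zero => exact Or.inr (pow_zero y)
  | succ k => exact Or.inl (Bpow_mem B hy (k+1) (by omega))

variable {I : Submodule ℤ R}
  (habs : ∀ s ∈ B, ∀ x ∈ I, s * x ∈ I ∧ x * s ∈ I)

include habs in
lemma habs' : ∀ {s : R}, BOne B s → ∀ x ∈ I, s * x ∈ I ∧ x * s ∈ I := by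
  intro s hs x hx
  rcases hs with hs | rfl
  · exact habs s hs x hx
  · simpa using hx

include habs in
/-- If `w * y ∈ I` then `(y+w)^n ≡ Σ_j y^(n-j) w^j (mod I)`. -/
lemma add_pow_mod (hy : y ∈ B) (hw : w ∈ B) (hwy : w * y ∈ I) (n : ℕ) :
    (y + w)^n - (∑ j ∈ Finset.range (n+1), y^(n-j) * w^j) ∈ I := by
  induction n with
  | zero => simp
  | succ n ih =>
      set S : R := ∑ j ∈ Finset.range (n+1), y^(n-j) * w^j with hSdef
      have key : (y + w)^(n+1) = y * S + w * S + (y + w) * ((y+w)^n - S) := by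
        rw [pow_succ']
        noncomm_ring
      have hyS : y * S = ∑ j ∈ Finset.range (n+1), y^(n+1-j) * w^j := by
        rw [hSdef, Finset.mul_sum]
        refine Finset.sum_congr rfl fun j hj => ?_
        have hj' : j < n + 1 := Finset.mem_range.mp hj
        have he : n - j + 1 = n + 1 - j := by omega
        rw [← mul_assoc, ← pow_succ', ← he]
      have hwS : w * S - w^(n+1) ∈ I := by
        rw [hSdef, Finset.mul_sum, Finset.sum_range_succ, Nat.sub_self, pow_zero, one_mul,
          ← pow_succ']
        have hrest : (∑ j ∈ Finset.range n, w * (y^(n-j) * w^j)) ∈ I := by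
          apply Submodule.sum_mem
          intro j hj
          have hj' : j < n := Finset.mem_range.mp hj
          have he : w * (y^(n-j) * w^j) = (w * y) * (y^(n-j-1) * w^j) := by
            have h5 : y^(n-j) = y * y^(n-j-1) := by
              conv_lhs => rw [show n - j = (n-j-1)+1 by omega]
              rw [pow_succ']
            rw [h5]
            noncomm_ring
          rw [he]
          exact (habs' B habs (BOne_mul B (BOne_pow B hy _) (BOne_pow B hw _)) _ hwy).2
        convert Submodule.add_mem I hrest (Submodule.zero_mem I) using 1
        abel
      have hS1 : (∑ j ∈ Finset.range (n+1+1), y^(n+1-j) * w^j)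
          = (∑ j ∈ Finset.range (n+1), y^(n+1-j) * w^j) + w^(n+1) := by
        rw [Finset.sum_range_succ, Nat.sub_self, pow_zero, one_mul]
      have expand : (y+w)^(n+1) - (∑ j ∈ Finset.range (n+1+1), y^(n+1-j) * w^j)
          = (w * S - w^(n+1)) + (y + w) * ((y+w)^n - S) := by
        rw [key, hS1, hyS]
        abel
      rw [expand]
      exact Submodule.add_mem I hwS
        (habs' B habs (Or.inl (B.add_mem hy hw)) _ ih).1

include habs in
/-- Sandwich lemma: if every element of `B` has `q`-th power in `I` (`q ≥ 2`),
then `y^(q-1) * x * y^(q-1) ∈ I` for `x, y ∈ B`. -/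
lemma sandwich {q : ℕ} (hq2 : 2 ≤ q) (hq : ∀ u ∈ B, u ^ q ∈ I)
    {y x : R} (hy : y ∈ B) (hx : x ∈ B) :
    y^(q-1) * x * y^(q-1) ∈ I := by
  obtain ⟨q2, rfl⟩ : ∃ q2, q = q2 + 2 := ⟨q - 2, by omega⟩
  rw [show q2 + 2 - 1 = q2 + 1 by omega]
  set b : R := y^(q2+1) with hbdef
  have hbB : b ∈ B := Bpow_mem B hy _ (by omega)
  set w : R := x * b with hwdef
  have hwy : w * y ∈ I := by
    have he : w * y = x * y^(q2+2) := by
      rw [hwdef, hbdef, mul_assoc, ← pow_succ]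
    rw [he]
    exact (habs x hx _ (hq y hy)).1
  have hwB : w ∈ B := B.mul_mem hx hbB
  have h1 : (y + w)^(q2+2) ∈ I := hq _ (B.add_mem hy hwB)
  have h2 : (∑ j ∈ Finset.range (q2+2+1), y^(q2+2-j) * w^j) ∈ I := by
    have h3 := add_pow_mod B habs hy hwB hwy (q2+2)
    have h4 := Submodule.sub_mem I h1 h3
    simpa using h4
  have h5 : (∑ j ∈ Finset.range (q2+2), y^(q2+2-(j+1)) * w^(j+1)) ∈ I := by
    have e1 : (∑ j ∈ Finset.range (q2+2+1), y^(q2+2-j) * w^j)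
        = (∑ j ∈ Finset.range (q2+2), y^(q2+2-(j+1)) * w^(j+1)) + y^(q2+2-0) * w^0 := by
      rw [Finset.sum_range_succ']
    rw [e1] at h2
    have e2 : y^(q2+2-0) * w^0 ∈ I := by
      simpa using hq y hy
    have h6 := Submodule.sub_mem I h2 e2
    simpa using h6
  set T : R := b * x * b with hTdef
  have hTB : T ∈ B := B.mul_mem (B.mul_mem hbB hx) hbB
  set P : R := ∑ j ∈ Finset.range (q2+1), y^(q2-j) * ((x*b)^j * x) with hPdef
  have hcj : ∀ j : ℕ, (x*b)^j * x ∈ B := by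
    intro j
    cases j with
    | zero => simpa using hx
    | succ k => exact B.mul_mem (Bpow_mem B (B.mul_mem hx hbB) (k+1) (by omega)) hx
  have hPB : P ∈ B := by
    rw [hPdef]
    refine sum_mem fun j hj => ?_
    rcases BOne_pow B hy (q2-j) with h | h
    · exact B.mul_mem h (hcj j)
    · rw [h, one_mul]; exact hcj j
  have hTP : T + P * T ∈ I := by
    have e3 : (∑ j ∈ Finset.range (q2+2), y^(q2+2-(j+1)) * w^(j+1)) = P * T + T := by
      rw [Finset.sum_range_succ']
      congr 1
      · rw [hPdef, Finset.sum_mul]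
        refine Finset.sum_congr rfl fun j hj => ?_
        have e4 : w^(j+1+1) = ((x*b)^j * x) * T := by
          rw [hwdef, hTdef, pow_succ, pow_succ]
          noncomm_ring
        rw [show q2 + 2 - (j+1+1) = q2 - j by omega, e4]
        noncomm_ring
      · simp only [pow_one, show q2 + 2 - (0+1) = q2+1 from by omega]
        rw [hwdef, hTdef, hbdef]
        noncomm_ring
    rw [e3] at h5
    rwa [add_comm] at h5
  have iter : ∀ k : ℕ, T - ((-1:ℤ)^k) • (P^k * T) ∈ I := by
    intro k
    induction k with
    | zero => simp
    | succ k ih =>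
        have hk1 : P^k * (T + P*T) ∈ I :=
          (habs' B habs (BOne_pow B hPB k) _ hTP).1
        have e5 : P^k * (T + P*T) = P^k * T + P^(k+1) * T := by
          rw [pow_succ]
          noncomm_ring
        rw [e5] at hk1
        have hk2 : ((-1:ℤ)^k) • (P^k * T + P^(k+1) * T) ∈ I := Submodule.smul_mem I _ hk1
        have e6 : T - ((-1:ℤ)^(k+1)) • (P^(k+1) * T)
            = (T - ((-1:ℤ)^k) • (P^k * T)) + ((-1:ℤ)^k) • (P^k * T + P^(k+1) * T) := by
          rw [pow_succ, mul_neg_one, neg_smul, smul_add]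
          abel
        rw [e6]
        exact Submodule.add_mem I ih hk2
  have hPq : P^(q2+2) * T ∈ I := (habs T hTB _ (hq P hPB)).2
  have efin : T = (T - ((-1:ℤ)^(q2+2)) • (P^(q2+2) * T)) + ((-1:ℤ)^(q2+2)) • (P^(q2+2) * T) := by
    abel
  show T ∈ I
  rw [efin]
  exact Submodule.add_mem I (iter (q2+2)) (Submodule.smul_mem I _ hPq)


lemma list_prod_mem_closure {Z : Set R} {l : List R} (hl : ∀ z ∈ l, z ∈ Z)
    (hne : l ≠ []) : l.prod ∈ NonUnitalSubring.closure Z := by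
  induction l with
  | nil => exact absurd rfl hne
  | cons x rest ih =>
      rcases eq_or_ne rest [] with h | h
      · subst h
        simpa using NonUnitalSubring.subset_closure (hl x (by simp))
      · rw [List.prod_cons]
        exact (NonUnitalSubring.closure Z).mul_mem
          (NonUnitalSubring.subset_closure (hl x (by simp)))
          (ih (fun z hz => hl z (by simp [hz])) h)

lemma list_prod_BOne {l : List R} (hl : ∀ z ∈ l, z ∈ B) : BOne B l.prod := by
  induction l with
  | nil => exact Or.inr (by simp)
  | cons x rest ih =>
      rw [List.prod_cons]
      exact BOne_mul B (Or.inl (hl x (by simp)))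
        (ih fun z hz => hl z (by simp [hz]))

lemma BOne_mul_mem {s c : R} (hs : BOne B s) (hc : c ∈ B) : s * c ∈ B := by
  rcases hs with h | h
  · exact B.mul_mem h hc
  · rw [h, one_mul]; exact hc

lemma mem_mul_BOne {s c : R} (hs : BOne B s) (hc : c ∈ B) : c * s ∈ B := by
  rcases hs with h | h
  · exact B.mul_mem hc h
  · rw [h, mul_one]; exact hc

/-- finitely many lists of a fixed length over a finite set -/
lemma finite_lists {Z : Set R} (hZ : Z.Finite) (n : ℕ) :
    {l : List R | (∀ z ∈ l, z ∈ Z) ∧ l.length = n}.Finite := by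
  induction n with
  | zero =>
      apply Set.Finite.subset (Set.finite_singleton ([] : List R))
      rintro l ⟨-, hlen⟩
      simp [List.length_eq_zero_iff.mp hlen]
  | succ n ih =>
      apply Set.Finite.subset (Set.Finite.image2 List.cons hZ ih)
      rintro l ⟨hmem, hlen⟩
      cases l with
      | nil => simp at hlen
      | cons x rest =>
          exact Set.mem_image2_of_mem (hmem x (by simp))
            ⟨fun z hz => hmem z (by simp [hz]), by simpa using hlen⟩

/-- chunk a long list into `j` chunks of length exactly `c` plus a tail. -/
lemma chunk_list (c : ℕ) : ∀ (j : ℕ) (l : List R), c * j ≤ l.length →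
    ∃ (cs : List (List R)) (r : List R), l = cs.flatten ++ r ∧ cs.length = j ∧
      ∀ ch ∈ cs, ch.length = c := by
  intro j
  induction j with
  | zero => exact fun l _ => ⟨[], l, by simp, rfl, by simp⟩
  | succ j ih =>
      intro l hl
      have hmul : c * (j+1) = c * j + c := by ring
      have hcl : c ≤ l.length := by omega
      obtain ⟨cs, r, he, hlen, hch⟩ := ih (l.drop c) (by
        rw [List.length_drop]; omega)
      refine ⟨l.take c :: cs, r, ?_, by simp [hlen], ?_⟩
      · rw [List.flatten_cons, List.append_assoc, ← he, List.take_append_drop]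
      · intro ch hch2
        rcases List.mem_cons.mp hch2 with h | h
        · rw [h, List.length_take]
          omega
        · exact hch ch h

/-- split a list at two positions. -/
lemma split_two {l : List R} {k k' : ℕ} (hkk : k < k') (hk' : k' < l.length) :
    ∃ l₁ l₂ l₃, l = l₁ ++ l[k] :: (l₂ ++ l[k'] :: l₃) ∧
      (∀ z ∈ l₂, z ∈ l) ∧ (∀ z ∈ l₃, z ∈ l) ∧ (∀ z ∈ l₁, z ∈ l) := by
  have hk : k < l.length := lt_trans hkk hk'
  have e1 : l = l.take k ++ l[k] :: l.drop (k+1) := by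
    rw [← List.drop_eq_getElem_cons hk, List.take_append_drop]
  have hk2 : k' - (k+1) < (l.drop (k+1)).length := by
    rw [List.length_drop]; omega
  have e2 : l.drop (k+1) = (l.drop (k+1)).take (k' - (k+1))
      ++ (l.drop (k+1))[k' - (k+1)] :: (l.drop (k+1)).drop (k' - (k+1) + 1) := by
    rw [← List.drop_eq_getElem_cons hk2, List.take_append_drop]
  have e3 : (l.drop (k+1))[k' - (k+1)] = l[k'] := by
    rw [List.getElem_drop]
    congr 1
    omega
  refine ⟨l.take k, (l.drop (k+1)).take (k' - (k+1)), (l.drop (k+1)).drop (k' - (k+1) + 1),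
    ?_, ?_, ?_, ?_⟩
  · conv_lhs => rw [e1]
    conv_lhs => rw [e2]
    rw [e3]
  · intro z hz
    exact List.mem_of_mem_drop (List.mem_of_mem_take hz)
  · intro z hz
    exact List.mem_of_mem_drop (List.mem_of_mem_drop hz)
  · intro z hz
    exact List.mem_of_mem_take hz


include habs in
/-- expanding a product of elements of `I ⊔ span S'` (all in `B`), where `S' ⊆ B`. -/
lemma prod_mem_sup_span {S' : Set R} (hS'B : S' ⊆ (B : Set R)) :
    ∀ (ps : List R), (∀ p ∈ ps, p ∈ B ∧ p ∈ I ⊔ Submodule.span ℤ S') →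
    ps.prod ∈ I ⊔ Submodule.span ℤ
      {x : R | ∃ fs : List R, (∀ f ∈ fs, f ∈ S') ∧ fs.length = ps.length ∧ x = fs.prod} := by
  intro ps
  induction ps with
  | nil =>
      intro _
      apply Submodule.mem_sup_right
      apply Submodule.subset_span
      exact ⟨[], by simp, by simp, by simp⟩
  | cons p ps ih =>
      intro hmem
      have hp := hmem p (by simp)
      have hrest := ih (fun z hz => hmem z (by simp [hz]))
      rw [List.prod_cons]
      rw [Submodule.mem_sup] at hrest
      obtain ⟨i2, hi2, σ2, hσ2, he2⟩ := hrest
      have h1 : p * i2 ∈ I := (habs p hp.1 i2 hi2).1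
      -- p * σ2
      obtain ⟨i1, hi1, σ1, hσ1, he1⟩ := Submodule.mem_sup.mp hp.2
      -- i1 * σ2 ∈ I
      have h2 : i1 * σ2 ∈ I := by
        refine Submodule.span_induction ?_ ?_ ?_ ?_ hσ2
        · rintro x ⟨fs, hfs, hlen, rfl⟩
          have : BOne B fs.prod := list_prod_BOne B (fun z hz => hS'B (hfs z hz))
          rcases this with h | h
          · exact (habs _ h _ hi1).2
          · rw [h, mul_one]; exact hi1
        · simp
        · intro x y _ _ hx hy
          rw [mul_add]
          exact Submodule.add_mem I hx hy
        · intro a x _ hx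
          rw [mul_smul_comm]
          exact Submodule.smul_mem I a hx
      -- σ1 * σ2 ∈ span (words of length n+1)
      have h3 : σ1 * σ2 ∈ Submodule.span ℤ
          {x : R | ∃ fs : List R, (∀ f ∈ fs, f ∈ S') ∧ fs.length = ps.length + 1 ∧ x = fs.prod} := by
        have h4 : σ1 * σ2 ∈ Submodule.span ℤ S' * Submodule.span ℤ
            {x : R | ∃ fs : List R, (∀ f ∈ fs, f ∈ S') ∧ fs.length = ps.length ∧ x = fs.prod} :=
          Submodule.mul_mem_mul hσ1 hσ2
        rw [Submodule.span_mul_span ℤ] at h4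
        refine Submodule.span_le.mpr ?_ h4
        rintro z ⟨s1, hs1, s2, ⟨fs, hfs, hlen, rfl⟩, rfl⟩
        apply Submodule.subset_span
        exact ⟨s1 :: fs, by
          intro f hf
          rcases List.mem_cons.mp hf with h | h
          · rw [h]; exact hs1
          · exact hfs f h, by simp [hlen], by simp⟩
      have he : p * ps.prod = (p * i2 + i1 * σ2) + σ1 * σ2 := by
        rw [← he2, ← he1]
        noncomm_ring
      rw [he]
      have hlen' : ps.length + 1 = (p :: ps).length := by simp
      rw [hlen'] at h3
      exact Submodule.add_mem _
        (Submodule.mem_sup_left (Submodule.add_mem I h1 h2))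
        (Submodule.mem_sup_right h3)

include habs in
/-- pigeonhole: a product of more than `Y.card` sandwich factors lies in `I`. -/
lemma pigeon_prod_mem {q : ℕ} (hq : ∀ u ∈ B, u ^ (q+2) ∈ I) (Y : Finset R)
    (hYB : ∀ y ∈ Y, y ∈ B) :
    ∀ (fs : List R),
      (∀ f ∈ fs, ∃ y ∈ Y, ∃ u v : R, BOne B u ∧ BOne B v ∧ f = u * y^(q+1) * v) →
      Y.card + 1 ≤ fs.length → fs.prod ∈ I := by
  intro fs hfs hlen
  -- tag each position with its y
  have htag : ∀ i : Fin fs.length, ∃ y ∈ Y, ∃ u v : R, BOne B u ∧ BOne B v ∧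
      fs[(i : ℕ)] = u * y^(q+1) * v := fun i => hfs _ (List.getElem_mem i.2)
  choose g hgY u v hu hv he using htag
  have hpig : ∃ i j : Fin fs.length, (i:ℕ) < (j:ℕ) ∧ g i = g j := by
    have hcard : Y.card < (Finset.univ : Finset (Fin fs.length)).card := by
      simp only [Finset.card_univ, Fintype.card_fin]
      omega
    obtain ⟨i, _, j, _, hij, hgij⟩ :=
      Finset.exists_ne_map_eq_of_card_lt_of_maps_to hcard (fun i _ => hgY i)
    rcases lt_or_gt_of_ne (fun h : (i:ℕ) = (j:ℕ) => hij (Fin.ext h)) with h | h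
    · exact ⟨i, j, h, hgij⟩
    · exact ⟨j, i, h, hgij.symm⟩
  obtain ⟨i, j, hlt, hgij⟩ := hpig
  obtain ⟨l₁, l₂, l₃, hsplit, hl₂, hl₃, hl₁⟩ := split_two (l := fs) hlt j.2
  set y : R := g i with hydef
  have hyB : y ∈ B := hYB _ (hgY i)
  have hei : fs[(i:ℕ)] = u i * y^(q+1) * v i := he i
  have hej : fs[(j:ℕ)] = u j * y^(q+1) * v j := by
    rw [he j, ← hgij]
  set fill : R := v i * l₂.prod * u j with hfill
  have hSYB : ∀ f ∈ fs, f ∈ B := by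
    intro f hf
    obtain ⟨y', hy', u', v', hu', hv', rfl⟩ := hfs f hf
    exact mem_mul_BOne B hv' (BOne_mul_mem B hu' (Bpow_mem B (hYB _ hy') (q+1) (by omega)))
  have hfill1 : BOne B fill :=
    BOne_mul B (BOne_mul B (hv i)
      (list_prod_BOne B (fun z hz => hSYB z (hl₂ z hz)))) (hu j)
  have hcore : y^(q+1) * fill * y^(q+1) ∈ I := by
    rcases hfill1 with hf | hf
    · have := sandwich B habs (q := q+2) (by omega) hq hyB hf
      simpa using this
    · rw [hf, mul_one]
      have h9 : y^(q+1) * y^(q+1) = y^q * y^(q+2) := by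
        rw [← pow_add, ← pow_add]
        congr 1
        omega
      rw [h9]
      rcases BOne_pow B hyB q with h | h
      · exact (habs _ h _ (hq y hyB)).1
      · rw [h, one_mul]; exact hq y hyB
  have hprod : fs.prod = (l₁.prod * u i) * (y^(q+1) * fill * y^(q+1)) * (v j * l₃.prod) := by
    conv_lhs => rw [hsplit]
    rw [List.prod_append, List.prod_cons, List.prod_append, List.prod_cons, hei, hej, hfill]
    noncomm_ring
  rw [hprod]
  have s1 : BOne B (l₁.prod * u i) :=
    BOne_mul B (list_prod_BOne B fun z hz => hSYB z (hl₁ z hz)) (hu i)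
  have s2 : BOne B (v j * l₃.prod) :=
    BOne_mul B (hv j) (list_prod_BOne B fun z hz => hSYB z (hl₃ z hz))
  exact (habs' B habs s2 _ ((habs' B habs s1 _ hcore).1)).2

end SW

section LEV
variable {R : Type*} [Ring R]

/-- Levitzki-type theorem (relative version): if every element of the subring
generated by the finite set `Z` has `q`-th power in `I`, then all long enough
products of elements of `Z` lie in `I`. -/
theorem levrel (Z : Set R) (hZ : Z.Finite) :
    ∀ (q : ℕ) (I : Submodule ℤ R),
      (∀ s ∈ NonUnitalSubring.closure Z, ∀ x ∈ I, s * x ∈ I ∧ x * s ∈ I) →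
      (∀ u ∈ NonUnitalSubring.closure Z, u ^ q ∈ I) →
      ∃ K, 1 ≤ K ∧ ∀ l : List R, (∀ z ∈ l, z ∈ Z) → K ≤ l.length → l.prod ∈ I := by
  intro q
  induction q with
  | zero =>
      intro I habs hq
      refine ⟨1, le_refl 1, fun l hl hlen => ?_⟩
      have hne : l ≠ [] := by
        intro h; rw [h] at hlen; simp at hlen
      have hB := list_prod_mem_closure hl hne
      have h1 : (1:R) ∈ I := by simpa using hq _ hB
      have := (habs _ hB _ h1).1
      rwa [mul_one] at this
  | succ q ih =>
      rcases Nat.eq_zero_or_pos q with rfl | hqpos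
      · -- q+1 = 1
        intro I habs hq
        refine ⟨1, le_refl 1, fun l hl hlen => ?_⟩
        have hne : l ≠ [] := by
          intro h; rw [h] at hlen; simp at hlen
        have hB := list_prod_mem_closure hl hne
        simpa using hq _ hB
      · -- q ≥ 1, so current exponent q+1 ≥ 2
        intro I habs hq
        classical
        obtain ⟨q2, rfl⟩ : ∃ q2, q = q2 + 1 := ⟨q - 1, by omega⟩
        -- current exponent is q2+2
        set B := NonUnitalSubring.closure Z with hBdef
        set SY : Set R → Set R := fun Y =>
          {s : R | ∃ y ∈ Y, ∃ u' v' : R, BOne B u' ∧ BOne B v' ∧ s = u' * y^(q2+1) * v'}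
          with hSYdef
        have hSYmono : ∀ {Y Y' : Set R}, Y ⊆ Y' → SY Y ⊆ SY Y' := by
          rintro Y Y' hYY s ⟨y, hy, u', v', hu', hv', rfl⟩
          exact ⟨y, hYY hy, u', v', hu', hv', rfl⟩
        set I' : Submodule ℤ R := I ⊔ Submodule.span ℤ (SY (B : Set R)) with hI'def
        have habs' : ∀ s ∈ B, ∀ x ∈ I', s * x ∈ I' ∧ x * s ∈ I' := by
          intro s hs x hx
          rw [hI'def, Submodule.mem_sup] at hx
          obtain ⟨i, hi, σ, hσ, rfl⟩ := hx
          constructor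
          · rw [mul_add]
            refine Submodule.add_mem _ (Submodule.mem_sup_left (habs s hs i hi).1) ?_
            refine Submodule.mem_sup_right ?_
            refine Submodule.span_induction ?_ ?_ ?_ ?_ hσ
            · rintro z ⟨y, hy, u', v', hu', hv', rfl⟩
              apply Submodule.subset_span
              exact ⟨y, hy, s * u', v', BOne_mul B (Or.inl hs) hu', hv', by noncomm_ring⟩
            · simp
            · intro a b _ _ ha hb
              rw [mul_add]; exact Submodule.add_mem _ ha hb
            · intro n a _ ha
              rw [mul_smul_comm]; exact Submodule.smul_mem _ n ha
          · rw [add_mul]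
            refine Submodule.add_mem _ (Submodule.mem_sup_left (habs s hs i hi).2) ?_
            refine Submodule.mem_sup_right ?_
            refine Submodule.span_induction ?_ ?_ ?_ ?_ hσ
            · rintro z ⟨y, hy, u', v', hu', hv', rfl⟩
              apply Submodule.subset_span
              exact ⟨y, hy, u', v' * s, hu', BOne_mul B hv' (Or.inl hs), by noncomm_ring⟩
            · simp
            · intro a b _ _ ha hb
              rw [add_mul]; exact Submodule.add_mem _ ha hb
            · intro n a _ ha
              rw [smul_mul_assoc]; exact Submodule.smul_mem _ n ha
        have hq' : ∀ u ∈ B, u ^ (q2+1) ∈ I' := by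
          intro u' hu'
          refine Submodule.mem_sup_right (Submodule.subset_span ?_)
          exact ⟨u', hu', 1, 1, Or.inr rfl, Or.inr rfl, by rw [one_mul, mul_one]⟩
        obtain ⟨K₁, hK₁, hIH⟩ := ih I' habs' hq'
        -- extraction of finite Y
        have hextr : ∀ c ∈ I', ∃ Y : Finset R, (∀ y ∈ Y, y ∈ B) ∧
            c ∈ I ⊔ Submodule.span ℤ (SY ↑Y) := by
          intro c hc
          rw [hI'def, Submodule.mem_sup] at hc
          obtain ⟨i, hi, σ, hσ, rfl⟩ := hc
          have : ∃ Y : Finset R, (∀ y ∈ Y, y ∈ B) ∧ σ ∈ Submodule.span ℤ (SY ↑Y) := by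
            refine Submodule.span_induction ?_ ?_ ?_ ?_ hσ
            · rintro z ⟨y, hy, u', v', hu', hv', rfl⟩
              exact ⟨{y}, by simpa using hy, Submodule.subset_span
                ⟨y, by simp, u', v', hu', hv', rfl⟩⟩
            · exact ⟨∅, by simp, Submodule.zero_mem _⟩
            · rintro a b _ _ ⟨Y₁, hY₁, ha⟩ ⟨Y₂, hY₂, hb⟩
              refine ⟨Y₁ ∪ Y₂, ?_, ?_⟩
              · intro y hy
                rcases Finset.mem_union.mp hy with h | h
                · exact hY₁ y h
                · exact hY₂ y h
              · refine Submodule.add_mem _ ?_ ?_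
                · exact Submodule.span_mono (hSYmono (by simp [Finset.coe_union])) ha
                · exact Submodule.span_mono (hSYmono (by simp [Finset.coe_union])) hb
            · rintro n a _ ⟨Y₁, hY₁, ha⟩
              exact ⟨Y₁, hY₁, Submodule.smul_mem _ n ha⟩
          obtain ⟨Y, hYB, hσY⟩ := this
          exact ⟨Y, hYB, Submodule.add_mem _ (Submodule.mem_sup_left hi)
            (Submodule.mem_sup_right hσY)⟩
        -- the finite set of chunks
        set W : Set (List R) := {w : List R | (∀ z ∈ w, z ∈ Z) ∧ w.length = K₁} with hWdef
        have hWfin : W.Finite := finite_lists hZ K₁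
        have hWprod : ∀ w ∈ W, w.prod ∈ I' := by
          rintro w ⟨hw1, hw2⟩
          exact hIH w hw1 (le_of_eq hw2.symm)
        have hchoice : ∀ w : List R, w ∈ W → ∃ Y : Finset R, (∀ y ∈ Y, y ∈ B) ∧
            w.prod ∈ I ⊔ Submodule.span ℤ (SY ↑Y) := fun w hw => hextr _ (hWprod w hw)
        choose F hF1 hF2 using hchoice
        set Yall : Finset R := hWfin.toFinset.attach.biUnion
          (fun w => F w.1 (hWfin.mem_toFinset.mp w.2)) with hYalldef
        have hYallB : ∀ y ∈ Yall, y ∈ B := by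
          intro y hy
          rw [hYalldef, Finset.mem_biUnion] at hy
          obtain ⟨w, _, hw2⟩ := hy
          exact hF1 _ _ y hw2
        have hwY : ∀ w ∈ W, w.prod ∈ I ⊔ Submodule.span ℤ (SY ↑Yall) := by
          intro w hw
          have hsub : (↑(F w hw) : Set R) ⊆ (↑Yall : Set R) := by
            intro y hy
            simp only [Finset.mem_coe] at hy ⊢
            rw [hYalldef, Finset.mem_biUnion]
            exact ⟨⟨w, hWfin.mem_toFinset.mpr hw⟩, Finset.mem_attach _ _, hy⟩
          exact (show I ⊔ Submodule.span ℤ (SY ↑(F w hw)) ≤ I ⊔ Submodule.span ℤ (SY ↑Yall) from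
            sup_le_sup le_rfl (Submodule.span_mono (hSYmono hsub))) (hF2 w hw)
        refine ⟨K₁ * (Yall.card + 1),
          Nat.one_le_iff_ne_zero.mpr (Nat.mul_ne_zero (by omega) (by omega)), fun l hl hlen => ?_⟩
        obtain ⟨cs, r, hsplit, hcslen, hclen⟩ := chunk_list K₁ (Yall.card + 1) l hlen
        have hcsW : ∀ c ∈ cs, c ∈ W := by
          intro c hc
          refine ⟨fun z hz => hl z ?_, hclen c hc⟩
          rw [hsplit]
          exact List.mem_append_left _ (List.mem_flatten.mpr ⟨c, hc, hz⟩)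
        set ps : List R := cs.map List.prod with hpsdef
        have hps : ∀ p ∈ ps, p ∈ B ∧ p ∈ I ⊔ Submodule.span ℤ (SY ↑Yall) := by
          intro p hp
          rw [hpsdef, List.mem_map] at hp
          obtain ⟨c, hc, rfl⟩ := hp
          constructor
          · refine list_prod_mem_closure (fun z hz => (hcsW c hc).1 z hz) ?_
            intro h
            have := (hcsW c hc).2
            rw [h] at this
            simp at this
            omega
          · exact hwY c (hcsW c hc)
        have hSYB : SY ↑Yall ⊆ (B : Set R) := by
          rintro z ⟨y, hy, u', v', hu', hv', rfl⟩
          exact mem_mul_BOne B hv'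
            (BOne_mul_mem B hu' (Bpow_mem B (hYallB _ hy) (q2+1) (by omega)))
        have hprodmem := prod_mem_sup_span B habs hSYB ps hps
        have hspanle : Submodule.span ℤ
            {x : R | ∃ fs : List R, (∀ f ∈ fs, f ∈ SY ↑Yall) ∧ fs.length = ps.length ∧ x = fs.prod}
            ≤ I := by
          rw [Submodule.span_le]
          rintro x ⟨fs, hfs, hlen2, rfl⟩
          refine pigeon_prod_mem B habs hq Yall hYallB fs
            (fun f hf => ?_) ?_
          · obtain ⟨y, hy, u', v', hu', hv', rfl⟩ := hfs f hf
            exact ⟨y, hy, u', v', hu', hv', rfl⟩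
          · rw [hlen2, hpsdef, List.length_map, hcslen]
        have hpsI : ps.prod ∈ I := by
          rw [Submodule.mem_sup] at hprodmem
          obtain ⟨i, hi, σ, hσ, he⟩ := hprodmem
          rw [← he]
          exact Submodule.add_mem I hi (hspanle hσ)
        have hfinal : l.prod = ps.prod * r.prod := by
          rw [hsplit, List.prod_append, List.prod_flatten, hpsdef]
        rw [hfinal]
        have hrB : BOne B r.prod := by
          refine list_prod_BOne B (fun z hz => ?_)
          refine NonUnitalSubring.subset_closure (hl z ?_)
          rw [hsplit]
          exact List.mem_append_right _ hz
        rcases hrB with h | h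
        · exact (habs _ h _ hpsI).2
        · rw [h, mul_one]; exact hpsI

end LEV

section PAX
variable {R : Type*} [Ring R]

/-- regrouping a product of sandwich terms. -/
lemma regroup_prod (b : R) {s : ℕ} (U' V : Fin s → R) :
    ∀ (ks : List (Fin s)) (_ : ks ≠ []),
    ∃ (k₀ : Fin s) (w : R) (zs : List R),
      (∀ z ∈ zs, ∃ k k' : Fin s, z = b * (V k * U' k')) ∧
      zs.length + 1 = ks.length ∧
      (ks.map (fun k => U' k * b * V k)).prod = U' k₀ * (zs.prod * (b * w)) := by
  intro ks
  induction ks with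
  | nil => intro h; exact absurd rfl h
  | cons k rest ih =>
      intro _
      rcases eq_or_ne rest [] with h | h
      · subst h
        refine ⟨k, V k, [], by simp, by simp, ?_⟩
        simp only [List.map_cons, List.map_nil, List.prod_cons, List.prod_nil, mul_one]
        noncomm_ring
      · obtain ⟨k₀, w, zs, hzs, hlen, hprod⟩ := ih h
        refine ⟨k, w, (b * (V k * U' k₀)) :: zs, ?_, by simp [← hlen], ?_⟩
        · intro z hz
          rcases List.mem_cons.mp hz with h2 | h2
          · exact ⟨k, k₀, h2⟩
          · exact hzs z h2
        · rw [List.map_cons, List.prod_cons, hprod, List.prod_cons]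
          noncomm_ring

theorem paxrel (m : ℕ) (hcomm : ∀ x y : R, (x*y - y*x)^m = 0) :
    ∀ (n : ℕ) (I : Submodule ℤ R), IsIdl I → ∀ (a x : R), a^n ∈ I →
      ∃ Q, 1 ≤ Q ∧ (a*x)^Q ∈ I := by
  intro n
  induction n with
  | zero =>
      intro I hI a x ha
      refine ⟨1, le_rfl, ?_⟩
      have h1 : (1:R) ∈ I := by simpa using ha
      have h2 := (hI (a*x) 1 h1).1
      rw [mul_one] at h2
      simpa using h2
  | succ n ih =>
      rcases Nat.eq_zero_or_pos n with rfl | hn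
      · intro I hI a x ha
        refine ⟨1, le_rfl, ?_⟩
        rw [pow_one] at ha ⊢
        exact (hI x (a) ha).2
      · intro I hI a x ha
        classical
        set b : R := a^n with hbdef
        set Ib : Submodule ℤ R := Submodule.span ℤ {z : R | ∃ u v : R, z = u * b * v} with hIbdef
        set I₂ : Submodule ℤ R := I ⊔ Ib with hI2def
        have hI₂ : IsIdl I₂ := by
          intro r z hz
          rw [hI2def, Submodule.mem_sup] at hz
          obtain ⟨i, hi, σ, hσ, rfl⟩ := hz
          constructor
          · rw [mul_add]
            refine Submodule.add_mem _ (Submodule.mem_sup_left (hI r i hi).1)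
              (Submodule.mem_sup_right ?_)
            rw [hIbdef] at hσ ⊢
            refine Submodule.span_induction ?_ ?_ ?_ ?_ hσ
            · rintro z ⟨u, v, rfl⟩
              exact Submodule.subset_span ⟨r * u, v, by noncomm_ring⟩
            · simp
            · intro p q' _ _ hp hq'
              rw [mul_add]; exact Submodule.add_mem _ hp hq'
            · intro c p _ hp
              rw [mul_smul_comm]; exact Submodule.smul_mem _ c hp
          · rw [add_mul]
            refine Submodule.add_mem _ (Submodule.mem_sup_left (hI r i hi).2)
              (Submodule.mem_sup_right ?_)
            rw [hIbdef] at hσ ⊢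
            refine Submodule.span_induction ?_ ?_ ?_ ?_ hσ
            · rintro z ⟨u, v, rfl⟩
              exact Submodule.subset_span ⟨u, v * r, by noncomm_ring⟩
            · simp
            · intro p q' _ _ hp hq'
              rw [add_mul]; exact Submodule.add_mem _ hp hq'
            · intro c p _ hp
              rw [smul_mul_assoc]; exact Submodule.smul_mem _ c hp
        have hbI₂ : a^n ∈ I₂ := by
          refine Submodule.mem_sup_right (Submodule.subset_span ⟨1, 1, ?_⟩)
          rw [one_mul, mul_one, hbdef]
        obtain ⟨Q', hQ'1, hQ'⟩ := ih I₂ hI₂ a x hbI₂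
        rw [hI2def, Submodule.mem_sup] at hQ'
        obtain ⟨i0, hi0, σ, hσ, hce⟩ := hQ'
        rw [hIbdef, Submodule.mem_span_set'] at hσ
        obtain ⟨s, f, g, hg⟩ := hσ
        have hgdec : ∀ k : Fin s, ∃ u v : R, (g k : R) = u * b * v := fun k => (g k).2
        choose U V hUV using hgdec
        set U' : Fin s → R := fun k => (f k) • U k with hU'def
        have hσe : σ = ∑ k, U' k * b * (V k) := by
          rw [← hg]
          refine Finset.sum_congr rfl fun k _ => ?_
          rw [hUV k, hU'def, smul_mul_assoc, smul_mul_assoc]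
        have hbb : b * b ∈ I := by
          have he : b * b = a^(n+1) * a^(n-1) := by
            rw [hbdef, ← pow_add, ← pow_add]
            congr 1
            omega
          rw [he]
          exact (hI _ _ ha).2
        set Zb : Set R := Set.range (fun p : Fin s × Fin s => b * (V p.1 * U' p.2)) with hZbdef
        have hZfin : Zb.Finite := Set.finite_range _
        have hform : ∀ z ∈ NonUnitalSubring.closure Zb, ∃ w : R, z = b * w := by
          intro z hz
          refine NonUnitalSubring.closure_induction ?_ ?_ ?_ ?_ ?_ hz
          · rintro z ⟨p, rfl⟩
            exact ⟨V p.1 * U' p.2, rfl⟩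
          · exact ⟨0, by simp⟩
          · rintro z₁ z₂ _ _ ⟨w₁, rfl⟩ ⟨w₂, rfl⟩
            exact ⟨w₁ + w₂, by rw [mul_add]⟩
          · rintro z₁ _ ⟨w₁, rfl⟩
            exact ⟨-w₁, by rw [mul_neg]⟩
          · rintro z₁ z₂ _ _ ⟨w₁, rfl⟩ ⟨w₂, rfl⟩
            exact ⟨w₁ * b * w₂, by noncomm_ring⟩
        have hqq : ∀ z ∈ NonUnitalSubring.closure Zb, z^(m+1) ∈ I := by
          intro z hz
          obtain ⟨w, rfl⟩ := hform z hz
          exact bx_pow_mem hcomm hI hbb w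
        have habsZ : ∀ s' ∈ NonUnitalSubring.closure Zb, ∀ x' ∈ I, s' * x' ∈ I ∧ x' * s' ∈ I :=
          fun s' _ x' hx' => hI s' x' hx'
        obtain ⟨K₂, hK₂1, hK₂⟩ := levrel Zb hZfin (m+1) I habsZ hqq
        refine ⟨Q' * (K₂ + 1),
          Nat.one_le_iff_ne_zero.mpr (Nat.mul_ne_zero (by omega) (by omega)), ?_⟩
        rw [pow_mul]
        set c : R := (a*x)^Q' with hcdef
        -- c ≡ σ mod I
        have hmod : ∀ N : ℕ, c^N - σ^N ∈ I := by
          intro N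
          induction N with
          | zero => simp
          | succ N ihN =>
              have he : c^(N+1) - σ^(N+1) = (c^N - σ^N) * c + σ^N * i0 := by
                have : c = i0 + σ := hce.symm
                rw [pow_succ, pow_succ, this]
                noncomm_ring
              rw [he]
              exact Submodule.add_mem I ((hI c _ ihN).2) ((hI (σ^N) i0 hi0).1)
        -- σ^(K₂+1) ∈ I
        have hσC : σ ∈ Submodule.span ℤ {z : R | ∃ k : Fin s, z = U' k * b * V k} := by
          rw [hσe]
          exact Submodule.sum_mem _ fun k _ => Submodule.subset_span ⟨k, rfl⟩
        have hσpow := span_pow_mem hσC (K₂+1)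
        have hσI : σ^(K₂+1) ∈ I := by
          refine Submodule.span_le.mpr ?_ hσpow
          rintro p ⟨l, hl, hlen, rfl⟩
          -- l is a list of sandwich terms; write it as map over ks
          have hks : ∃ ks : List (Fin s), l = ks.map (fun k => U' k * b * V k)
              ∧ ks.length = l.length := by
            clear hlen
            induction l with
            | nil => exact ⟨[], by simp⟩
            | cons p rest ihl =>
                obtain ⟨k, hk⟩ := hl p (by simp)
                obtain ⟨ks, hks1, hks2⟩ := ihl (fun z hz => hl z (by simp [hz]))
                exact ⟨k :: ks, by simp [hk, hks1], by simp [hks2]⟩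
          obtain ⟨ks, rfl, hkslen⟩ := hks
          rw [List.length_map] at hlen
          have hksne : ks ≠ [] := by
            intro h
            rw [h] at hlen
            simp at hlen
          obtain ⟨k₀, w, zs, hzs, hzslen, hprod⟩ := regroup_prod b U' V ks hksne
          rw [hprod]
          have hzsI : zs.prod ∈ I := by
            refine hK₂ zs (fun z hz => ?_) ?_
            · obtain ⟨k, k', rfl⟩ := hzs z hz
              exact ⟨(k, k'), rfl⟩
            · omega
          exact (hI (U' k₀) _ ((hI (b*w) _ hzsI).2)).1
        have hfin := Submodule.add_mem I (hmod (K₂+1)) hσI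
        rw [sub_add_cancel] at hfin
        exact hfin

end PAX

section MAIN
variable {A : Type*} [Ring A]

theorem pax_uniform (m : ℕ) (hcomm : ∀ x y : A, (x*y - y*x)^m = 0)
    (a : A) (n : ℕ) (hn : a^n = 0) :
    ∃ Q, 1 ≤ Q ∧ ∀ x : A, (a*x)^Q = 0 := by
  have hcommP : ∀ f g : A → A, (f*g - g*f)^m = 0 := by
    intro f g
    funext t
    simp only [Pi.pow_apply, Pi.sub_apply, Pi.mul_apply, Pi.zero_apply]
    exact hcomm (f t) (g t)
  have haP : (fun _ : A => a)^n ∈ (⊥ : Submodule ℤ (A → A)) := by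
    simp only [Submodule.mem_bot]
    funext t
    simp only [Pi.pow_apply, Pi.zero_apply]
    exact hn
  obtain ⟨Q, hQ1, hQ⟩ := paxrel m hcommP n ⊥ isIdl_bot (fun _ => a) id haP
  refine ⟨Q, hQ1, fun x => ?_⟩
  rw [Submodule.mem_bot] at hQ
  have h2 := congrFun hQ x
  simpa using h2

theorem main_words (m : ℕ) (hcomm : ∀ x y : A, (x*y - y*x)^m = 0) :
    ∀ (gens : List A), (∀ g ∈ gens, IsNilpotent g) →
    ∃ N, 1 ≤ N ∧ ∀ w : List A, (∀ x ∈ w, x ∈ gens) → N ≤ w.length → w.prod = 0 := by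
  intro gens
  induction gens with
  | nil =>
      intro _
      refine ⟨1, le_rfl, fun w hw hlen => ?_⟩
      cases w with
      | nil => simp at hlen
      | cons x rest => exact absurd (hw x (by simp)) (by simp)
  | cons α gens' ih =>
      intro hnil
      obtain ⟨N', hN'1, hIH⟩ := ih (fun g hg => hnil g (by simp [hg]))
      obtain ⟨n, hn⟩ := hnil α (by simp)
      obtain ⟨Q, hQ1, hQ⟩ := pax_uniform m hcomm α n hn
      classical
      set Zs : Set A :=
        {z : A | ∃ g : List A, (∀ x ∈ g, x ∈ gens') ∧ g.length < N' ∧ z = α * g.prod}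
        with hZsdef
      have hZsfin : Zs.Finite := by
        have hsub : Zs ⊆ ⋃ k ∈ Finset.range N', (fun g : List A => α * g.prod) ''
            {l : List A | (∀ x ∈ l, x ∈ {y : A | y ∈ gens'}) ∧ l.length = k} := by
          rintro z ⟨g, hg, hglen, rfl⟩
          simp only [Set.mem_iUnion]
          exact ⟨g.length, Finset.mem_range.mpr hglen, g, ⟨hg, rfl⟩, rfl⟩
        refine Set.Finite.subset ?_ hsub
        refine Set.Finite.biUnion (Finset.finite_toSet _) fun k _ => ?_
        exact Set.Finite.image _ (finite_lists (List.finite_toSet gens') k)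
      have hform : ∀ z ∈ NonUnitalSubring.closure Zs, ∃ w : A, z = α * w := by
        intro z hz
        refine NonUnitalSubring.closure_induction ?_ ?_ ?_ ?_ ?_ hz
        · rintro z ⟨g, hg, hglen, rfl⟩
          exact ⟨g.prod, rfl⟩
        · exact ⟨0, by simp⟩
        · rintro z₁ z₂ _ _ ⟨w₁, rfl⟩ ⟨w₂, rfl⟩
          exact ⟨w₁ + w₂, by rw [mul_add]⟩
        · rintro z₁ _ ⟨w₁, rfl⟩
          exact ⟨-w₁, by rw [mul_neg]⟩
        · rintro z₁ z₂ _ _ ⟨w₁, rfl⟩ ⟨w₂, rfl⟩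
          exact ⟨w₁ * α * w₂, by noncomm_ring⟩
      have hqq : ∀ z ∈ NonUnitalSubring.closure Zs, z^Q ∈ (⊥ : Submodule ℤ A) := by
        intro z hz
        obtain ⟨w, rfl⟩ := hform z hz
        simp only [Submodule.mem_bot]
        exact hQ w
      have habsZ : ∀ s' ∈ NonUnitalSubring.closure Zs, ∀ x' ∈ (⊥ : Submodule ℤ A),
          s' * x' ∈ (⊥ : Submodule ℤ A) ∧ x' * s' ∈ (⊥ : Submodule ℤ A) :=
        fun s' _ x' hx' => isIdl_bot s' x' hx'
      obtain ⟨K, hK1, hKill⟩ := levrel Zs hZsfin Q ⊥ habsZ hqq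
      have hsplit : ∀ w : List A, (∀ x ∈ w, x ∈ α :: gens') →
          (w.prod = 0 ∨ ∃ (g₀ zs : List A),
            (∀ x ∈ g₀, x ∈ gens') ∧ g₀.length < N' ∧ (∀ z ∈ zs, z ∈ Zs) ∧
            w.prod = g₀.prod * zs.prod ∧ w.length ≤ g₀.length + zs.length * N') := by
        intro w
        induction w with
        | nil =>
            intro _
            right
            exact ⟨[], [], by simp, by simp; omega, by simp, by simp, by simp⟩
        | cons x rest ihw =>
            intro hw
            have hrest := ihw (fun z hz => hw z (by simp [hz]))
            by_cases hx : x = α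
            · rcases hrest with h0 | ⟨g₀, zs, hg₀, hg₀len, hzs, hprod, hlen⟩
              · left
                rw [List.prod_cons, h0, mul_zero]
              · right
                refine ⟨[], (α * g₀.prod) :: zs, by simp, by simp; omega, ?_, ?_, ?_⟩
                · intro z hz
                  rcases List.mem_cons.mp hz with h | h
                  · rw [h]
                    exact ⟨g₀, hg₀, hg₀len, rfl⟩
                  · exact hzs z h
                · rw [List.prod_cons, hprod, hx, List.prod_cons, List.prod_nil, one_mul,
                    ← mul_assoc]
                · simp only [List.length_cons, List.length_nil]
                  have e : (zs.length + 1) * N' = zs.length * N' + N' := by ring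
                  omega
            · have hxg : x ∈ gens' := by
                rcases List.mem_cons.mp (hw x (by simp)) with h | h
                · exact absurd h hx
                · exact h
              rcases hrest with h0 | ⟨g₀, zs, hg₀, hg₀len, hzs, hprod, hlen⟩
              · left
                rw [List.prod_cons, h0, mul_zero]
              · by_cases hg : g₀.length + 1 < N'
                · right
                  refine ⟨x :: g₀, zs, ?_, by simpa using hg, hzs, ?_, ?_⟩
                  · intro z hz
                    rcases List.mem_cons.mp hz with h | h
                    · rw [h]; exact hxg
                    · exact hg₀ z h
                  · rw [List.prod_cons, hprod, List.prod_cons, ← mul_assoc]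
                  · simp only [List.length_cons]
                    omega
                · left
                  have hglen2 : (x :: g₀).length = N' := by
                    simp only [List.length_cons]
                    omega
                  have h1 : (x :: g₀).prod = 0 := by
                    refine hIH (x :: g₀) ?_ (le_of_eq hglen2.symm)
                    intro z hz
                    rcases List.mem_cons.mp hz with h | h
                    · rw [h]; exact hxg
                    · exact hg₀ z h
                  rw [List.prod_cons, hprod, ← mul_assoc, ← List.prod_cons (a := x), h1,
                    zero_mul]
      refine ⟨N' * (K + 1), Nat.one_le_iff_ne_zero.mpr
        (Nat.mul_ne_zero (by omega) (by omega)), fun w hw hlen => ?_⟩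
      rcases hsplit w hw with h0 | ⟨g₀, zs, hg₀, hg₀len, hzs, hprod, hlenb⟩
      · exact h0
      · have hKzs : K ≤ zs.length := by
          by_contra hcon
          push_neg at hcon
          have e1 : N' * (K+1) = N' * K + N' := by ring
          have e2 : zs.length * N' ≤ (K-1) * N' + 0 := by
            have : zs.length ≤ K - 1 := by omega
            exact Nat.add_le_add (Nat.mul_le_mul_right N' this) (le_refl 0)
          have e3 : (K-1) * N' + N' = K * N' := by
            have : K - 1 + 1 = K := by omega
            calc (K-1) * N' + N' = (K-1+1) * N' := by ring
            _ = K * N' := by rw [this]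
          have e4 : N' * K = K * N' := by ring
          omega
        have hzero : zs.prod = 0 := by
          have := hKill zs hzs hKzs
          simpa using this
        rw [hprod, hzero, mul_zero]

end MAIN


theorem subalgebra_of_nilpotents_is_nilpotent
    (k A : Type*) [CommRing k] [Ring A] [Algebra k A]
    (m : ℕ) (hm : 1 ≤ m) (hid : IsPolyId k A (commPow k m))
    (t : ℕ) (a : Fin t → A) (ha : ∀ i, IsNilpotent (a i)) :
    ∃ N : ℕ, ∀ l : List A, l.length = N →
      (∀ x ∈ l, x ∈ NonUnitalAlgebra.adjoin k (Set.range a)) → l.prod = 0 := by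
  classical
  have hcomm : ∀ x y : A, (x*y - y*x)^m = 0 := by
    intro x y
    have h1 := hid (fun i => if i = 0 then x else y)
    simpa [commPow, map_pow, map_sub, map_mul, FreeAlgebra.lift_ι_apply] using h1
  obtain ⟨N, hN1, hkill⟩ := main_words m hcomm (List.ofFn a) (by
    intro g hg
    obtain ⟨i, rfl⟩ := List.mem_ofFn.mp hg
    exact ha i)
  set S : ℕ → Set A := fun j =>
    {x : A | ∃ w : List A, (∀ y ∈ w, y ∈ Set.range a) ∧ j ≤ w.length ∧ x = w.prod}
    with hSdef
  set M : ℕ → Submodule k A := fun j => Submodule.span k (S j) with hMdef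
  have hMmul : ∀ i j : ℕ, ∀ x ∈ M i, ∀ y ∈ M j, x * y ∈ M (i+j) := by
    intro i j x hx y hy
    have h1 : x * y ∈ M i * M j := Submodule.mul_mem_mul hx hy
    have h2 : M i * M j = Submodule.span k (S i * S j) := Submodule.span_mul_span k _ _
    rw [h2] at h1
    refine Submodule.span_le.mpr ?_ h1
    rintro z ⟨p, ⟨w1, hw1, hl1, rfl⟩, p2, ⟨w2, hw2, hl2, rfl⟩, rfl⟩
    apply Submodule.subset_span
    refine ⟨w1 ++ w2, ?_, ?_, ?_⟩
    · intro y hy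
      rcases List.mem_append.mp hy with h | h
      · exact hw1 y h
      · exact hw2 y h
    · rw [List.length_append]
      omega
    · rw [List.prod_append]
  have hMmono : ∀ i j : ℕ, j ≤ i → M i ≤ M j := by
    intro i j hij
    apply Submodule.span_mono
    rintro z ⟨w, hw, hl, rfl⟩
    exact ⟨w, hw, by omega, rfl⟩
  have hadj : ∀ x ∈ NonUnitalAlgebra.adjoin k (Set.range a), x ∈ M 1 := by
    intro x hx
    refine NonUnitalAlgebra.adjoin_induction ?_ ?_ ?_ ?_ ?_ hx
    · intro z hz
      exact Submodule.subset_span ⟨[z], by simpa using hz, by simp, by simp⟩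
    · intro z y _ _ hz hy
      exact Submodule.add_mem _ hz hy
    · exact Submodule.zero_mem _
    · intro z y _ _ hz hy
      exact hMmono 2 1 (by omega) (hMmul 1 1 z hz y hy)
    · intro r z _ hz
      exact Submodule.smul_mem _ r hz
  have hlistM : ∀ l : List A, (∀ x ∈ l, x ∈ M 1) → l.prod ∈ M l.length := by
    intro l
    induction l with
    | nil =>
        intro _
        exact Submodule.subset_span ⟨[], by simp, by simp, by simp⟩
    | cons x rest ihl =>
        intro hl
        have h1 := hMmul 1 rest.length x (hl x (by simp)) rest.prod
          (ihl fun z hz => hl z (by simp [hz]))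
        rw [List.prod_cons]
        have he : (1 : ℕ) + rest.length = (x :: rest).length := by simp; omega
        rw [← he]
        exact h1
  refine ⟨N, fun l hlen hl => ?_⟩
  have h1 : l.prod ∈ M N := by
    rw [← hlen]
    exact hlistM l (fun x hx => hadj x (hl x hx))
  have h2 : M N ≤ ⊥ := by
    rw [hMdef]
    rw [Submodule.span_le]
    rintro z ⟨w, hw, hwl, rfl⟩
    simp only [SetLike.mem_coe, Submodule.mem_bot]
    refine hkill w (fun x hx => ?_) hwl
    exact List.mem_ofFn.mpr (hw x hx)
  simpa using h2 h1
end

section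
/- Let k be a commutative unital ring, let m ≥ 1, and let A be a k-algebra such that [x₁,x₂]^m is a polynomial identity of A. If a ∈ A is nilpotent, then the two-sided ideal of A generated by a is a nil ideal (every element of it is nilpotent), and likewise the right ideal aA and the left ideal Aa are nil. -/
section RingPart

variable {R : Type*} [Ring R] {m : ℕ}

private lemma shift_pow (a x : R) (j : ℕ) : a * (x * a) ^ j = (a * x) ^ j * a := by
  induction j with
  | zero => simp
  | succ j ih =>
    rw [pow_succ, pow_succ, ← mul_assoc, ih]
    simp only [mul_assoc]

private lemma l1aux (a x : R) (ha : a * a = 0) :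
    ∀ j : ℕ, a * (a * x - x * a) ^ j = (-1 : R) ^ j * (a * (x * a) ^ j) := by
  intro j
  induction j with
  | zero => simp
  | succ j ih =>
    have junc : a * (x * a) ^ j * (a * x) = 0 := by
      rw [shift_pow, mul_assoc, ← mul_assoc a a x, ha]
      simp
    rw [pow_succ, ← mul_assoc, ih, mul_sub, mul_assoc, mul_assoc] at *
    rw [junc, mul_zero, zero_sub]
    simp [pow_succ, mul_assoc, mul_neg, neg_mul]

private lemma l1 (hcomm : ∀ x y : R, (x * y - y * x) ^ m = 0)
    (a x : R) (ha : a * a = 0) : a * (x * a) ^ m = 0 := by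
  have h := l1aux a x ha m
  rw [hcomm a x, mul_zero] at h
  rcases neg_one_pow_eq_or R m with h1 | h1 <;> rw [h1] at h
  · simpa using h.symm
  · simpa [neg_one_mul, neg_eq_zero] using h.symm

private lemma l1' (hcomm : ∀ x y : R, (x * y - y * x) ^ m = 0)
    (a w : R) (ha : a * a = 0) : (a * w) ^ (m + 1) = 0 := by
  rw [pow_succ, ← mul_assoc, ← shift_pow a w m, l1 hcomm a w ha, zero_mul]

private lemma key_expand {p q : R} (hqp : q * p = 0) (n : ℕ) :
    ∃ D : R, (p + q) ^ (n + 1) = p ^ (n + 1) + p ^ n * q + D * (q * q) := by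
  have hqpn : ∀ j : ℕ, q * p ^ (j + 1) = 0 := fun j => by
    rw [pow_succ', ← mul_assoc, hqp, zero_mul]
  induction n with
  | zero => exact ⟨0, by simp⟩
  | succ n ih =>
    obtain ⟨D, hD⟩ := ih
    set e : R := if n = 0 then 1 else 0 with he
    have h2 : q * p ^ n * q = e * (q * q) := by
      cases n with
      | zero => simp [he]
      | succ l => rw [hqpn l]; simp [he]
    refine ⟨p * D + q * D + e, ?_⟩
    have expand : (p + q) * (p ^ (n + 1) + p ^ n * q + D * (q * q)) =
        p ^ (n + 2) + p ^ (n + 1) * q + (p * D) * (q * q)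
          + (q * p ^ (n + 1) + q * p ^ n * q + (q * D) * (q * q)) := by
      noncomm_ring
      simp only [← mul_assoc, ← pow_succ, ← pow_succ']
      abel
    rw [pow_succ' (p + q) (n + 1), hD, expand, hqpn n, h2]
    simp only [add_mul, zero_add]
    abel

end RingPart

section Descent

variable {R : Type*} [Ring R] {m : ℕ}
variable (hcomm : ∀ x y : R, (x * y - y * x) ^ m = 0)
variable (hsemi : ∀ c : R, (∀ z : R, c * z * c = 0) → c = 0)

include hcomm hsemi

private lemma descent (a : R) (ha : a * a = 0) (k : ℕ)
    (hk : ∀ x : R, a * (x * a) ^ (k + 1) = 0) :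
    ∀ x : R, a * (x * a) ^ k = 0 := by
  intro x
  set c : R := a * (x * a) ^ k with hc
  apply hsemi
  intro z
  set p : R := x * a with hp
  set q : R := z * c with hq
  have hcp : c * p = 0 := by
    rw [hc, hp, mul_assoc, ← pow_succ]
    exact hk x
  have hqp : q * p = 0 := by rw [hq, mul_assoc, hcp, mul_zero]
  obtain ⟨D, hD⟩ := key_expand hqp k
  have hs : (x + z * (a * x) ^ k) * a = p + q := by
    rw [add_mul, hp, hq, hc, mul_assoc, shift_pow]
  have h0 : a * (p + q) ^ (k + 1) = 0 := by
    rw [← hs]; exact hk _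
  rw [hD, mul_add, mul_add] at h0
  have e1 : a * p ^ (k + 1) = 0 := hk x
  have e2 : a * (p ^ k * q) = c * z * c := by
    simp only [hq, hc, hp, mul_assoc]
  have e3 : a * (D * (q * q)) = (a * (D * z)) * (c * z * c) := by
    simp only [hq, hc, hp, mul_assoc]
  rw [e1, e2, e3, zero_add] at h0
  have hB : IsNilpotent (a * (D * z)) := ⟨m + 1, l1' hcomm a (D * z) ha⟩
  have hu : IsUnit (1 + a * (D * z)) := hB.isUnit_one_add
  have h1 : (1 + a * (D * z)) * (c * z * c) = 0 := by
    rw [add_mul, one_mul]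
    exact h0
  exact (hu.mul_right_eq_zero).mp h1

private lemma sq_zero (a : R) (ha : a * a = 0) : a = 0 := by
  have main : ∀ k : ℕ, (∀ x : R, a * (x * a) ^ k = 0) → a = 0 := by
    intro k
    induction k with
    | zero => intro h; simpa using h 1
    | succ k ih => intro h; exact ih (descent hcomm hsemi a ha k h)
  exact main m (fun x => l1 hcomm a x ha)

private lemma nilpotent_eq_zero (b : R) (hb : IsNilpotent b) : b = 0 := by
  obtain ⟨n, hn⟩ := hb
  induction n using Nat.strong_induction_on generalizing b with
  | _ n ih =>
    match n, hn with
    | 0, hn => simpa using congrArg (b * ·) hn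
    | 1, hn => simpa using hn
    | (n + 2), hn =>
      have ht : b ^ ((n + 2 + 1) / 2) * b ^ ((n + 2 + 1) / 2) = 0 := by
        rw [← pow_add]
        have : n + 2 ≤ (n + 2 + 1) / 2 + (n + 2 + 1) / 2 := by omega
        calc b ^ ((n + 2 + 1) / 2 + (n + 2 + 1) / 2)
            = b ^ (n + 2) * b ^ ((n + 2 + 1) / 2 + (n + 2 + 1) / 2 - (n + 2)) := by
              rw [← pow_add]; congr 1; omega
          _ = 0 := by rw [hn, zero_mul]
      have hlt : (n + 2 + 1) / 2 < n + 2 := by omega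
      exact ih ((n + 2 + 1) / 2) hlt b (sq_zero hcomm hsemi _ ht)

end Descent


section IdealPart

open Pointwise

variable {A : Type*} [Ring A]

private lemma span_mul_span_mem (P : TwoSidedIdeal A) (u v : A)
    (huv : ∀ r : A, u * r * v ∈ P) :
    ∀ y ∈ TwoSidedIdeal.span ({u} : Set A), ∀ y' ∈ TwoSidedIdeal.span ({v} : Set A),
      y * y' ∈ P := by
  have gen : ∀ y ∈ AddSubgroup.closure ((Set.univ : Set A) * ({u} : Set A) * (Set.univ : Set A)),
      ∀ y' ∈ AddSubgroup.closure ((Set.univ : Set A) * ({v} : Set A) * (Set.univ : Set A)), y * y' ∈ P := by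
    intro y hy
    induction hy using AddSubgroup.closure_induction with
    | mem t ht =>
      intro y' hy'
      induction hy' using AddSubgroup.closure_induction with
      | mem t' ht' =>
        obtain ⟨g, hg, s2, -, rfl⟩ := ht
        obtain ⟨r, -, u1, hu1, rfl⟩ := hg
        obtain ⟨g', hg', s2', -, rfl⟩ := ht'
        obtain ⟨r', -, v1, hv1, rfl⟩ := hg'
        rw [Set.mem_singleton_iff] at hu1 hv1
        rw [hu1, hv1]
        have h : r * u * s2 * (r' * v * s2') = r * (u * (s2 * r') * v) * s2' := by
          simp only [mul_assoc]
        rw [h]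
        exact P.mul_mem_right _ _ (P.mul_mem_left _ _ (huv _))
      | zero => rw [mul_zero]; exact P.zero_mem
      | add p q hp hq ihp ihq => rw [mul_add]; exact P.add_mem ihp ihq
      | neg p hp ihp => rw [mul_neg]; exact P.neg_mem ihp
    | zero => intro y' _; rw [zero_mul]; exact P.zero_mem
    | add p q hp hq ihp ihq =>
      intro y' hy'; rw [add_mul]; exact P.add_mem (ihp y' hy') (ihq y' hy')
    | neg p hp ihp => intro y' hy'; rw [neg_mul]; exact P.neg_mem (ihp y' hy')
  intro y hy y' hy'
  rw [TwoSidedIdeal.mem_span_iff_mem_addSubgroup_closure] at hy hy'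
  exact gen y hy y' hy'

private lemma exists_prime_avoiding (x : A) (hx : ¬ IsNilpotent x) :
    ∃ P : TwoSidedIdeal A, (∀ n : ℕ, x ^ (n + 1) ∉ P) ∧
      (∀ u v : A, (∀ r : A, u * r * v ∈ P) → u ∈ P ∨ v ∈ P) := by
  set S : Set (TwoSidedIdeal A) := {I | ∀ n : ℕ, x ^ (n + 1) ∉ I} with hS
  have hbot : (⊥ : TwoSidedIdeal A) ∈ S := by
    intro n hmem
    rw [TwoSidedIdeal.mem_bot] at hmem
    exact hx ⟨n + 1, hmem⟩
  have hchainUB : ∀ c ⊆ S, IsChain (· ≤ ·) c → ∀ y ∈ c, ∃ ub ∈ S, ∀ z ∈ c, z ≤ ub := by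
    intro c hcS hchain y hyc
    have hzero : (0 : A) ∈ ⋃ I ∈ c, (I : Set A) :=
      Set.mem_biUnion hyc (TwoSidedIdeal.zero_mem y)
    have hadd : ∀ {p q : A}, p ∈ (⋃ I ∈ c, (I : Set A)) → q ∈ (⋃ I ∈ c, (I : Set A)) →
        p + q ∈ ⋃ I ∈ c, (I : Set A) := by
      intro p q hp hq
      simp only [Set.mem_iUnion, SetLike.mem_coe, exists_prop] at hp hq
      obtain ⟨I, hIc, hpI⟩ := hp
      obtain ⟨J, hJc, hqJ⟩ := hq
      by_cases hIJ : I = J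
      · subst hIJ; exact Set.mem_biUnion hIc (TwoSidedIdeal.add_mem I hpI hqJ)
      · rcases hchain hIc hJc hIJ with h | h
        · exact Set.mem_biUnion hJc (TwoSidedIdeal.add_mem J (h hpI) hqJ)
        · exact Set.mem_biUnion hIc (TwoSidedIdeal.add_mem I hpI (h hqJ))
    have hneg : ∀ {p : A}, p ∈ (⋃ I ∈ c, (I : Set A)) → -p ∈ ⋃ I ∈ c, (I : Set A) := by
      intro p hp
      simp only [Set.mem_iUnion, SetLike.mem_coe, exists_prop] at hp
      obtain ⟨I, hIc, hpI⟩ := hp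
      exact Set.mem_biUnion hIc (TwoSidedIdeal.neg_mem I hpI)
    have hml : ∀ {r p : A}, p ∈ (⋃ I ∈ c, (I : Set A)) → r * p ∈ ⋃ I ∈ c, (I : Set A) := by
      intro r p hp
      simp only [Set.mem_iUnion, SetLike.mem_coe, exists_prop] at hp
      obtain ⟨I, hIc, hpI⟩ := hp
      exact Set.mem_biUnion hIc (TwoSidedIdeal.mul_mem_left I r p hpI)
    have hmr : ∀ {p r : A}, p ∈ (⋃ I ∈ c, (I : Set A)) → p * r ∈ ⋃ I ∈ c, (I : Set A) := by
      intro p r hp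
      simp only [Set.mem_iUnion, SetLike.mem_coe, exists_prop] at hp
      obtain ⟨I, hIc, hpI⟩ := hp
      exact Set.mem_biUnion hIc (TwoSidedIdeal.mul_mem_right I p r hpI)
    refine ⟨TwoSidedIdeal.mk' (⋃ I ∈ c, (I : Set A)) hzero hadd hneg hml hmr, ?_, ?_⟩
    · intro n hn
      rw [TwoSidedIdeal.mem_mk'] at hn
      simp only [Set.mem_iUnion, SetLike.mem_coe, exists_prop] at hn
      obtain ⟨I, hIc, hI⟩ := hn
      exact hcS hIc n hI
    · intro J hJc t ht
      rw [TwoSidedIdeal.mem_mk']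
      exact Set.mem_biUnion hJc ht
  obtain ⟨P, -, hPmax⟩ := zorn_le_nonempty₀ S hchainUB ⊥ hbot
  refine ⟨P, hPmax.1, ?_⟩
  intro u v huv
  by_contra hcon
  push_neg at hcon
  obtain ⟨hu, hv⟩ := hcon
  have h1 : ∃ n : ℕ, x ^ (n + 1) ∈ P ⊔ TwoSidedIdeal.span {u} := by
    by_contra h; push_neg at h
    have hle := hPmax.2 (fun n => h n) le_sup_left
    exact hu (hle (TwoSidedIdeal.mem_sup_right
      (TwoSidedIdeal.subset_span (Set.mem_singleton u))))
  have h2 : ∃ n : ℕ, x ^ (n + 1) ∈ P ⊔ TwoSidedIdeal.span {v} := by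
    by_contra h; push_neg at h
    have hle := hPmax.2 (fun n => h n) le_sup_left
    exact hv (hle (TwoSidedIdeal.mem_sup_right
      (TwoSidedIdeal.subset_span (Set.mem_singleton v))))
  obtain ⟨n, hn⟩ := h1
  obtain ⟨n', hn'⟩ := h2
  have hprod : x ^ (n + 1) * x ^ (n' + 1) ∈ P := by
    rw [TwoSidedIdeal.mem_sup] at hn hn'
    obtain ⟨p, hp, y, hy, heq⟩ := hn
    obtain ⟨p', hp', y', hy', heq'⟩ := hn'
    rw [← heq, ← heq']
    have hexp : (p + y) * (p' + y') = p * (p' + y') + y * p' + y * y' := by noncomm_ring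
    rw [hexp]
    exact TwoSidedIdeal.add_mem P
      (TwoSidedIdeal.add_mem P (TwoSidedIdeal.mul_mem_right P _ _ hp)
        (TwoSidedIdeal.mul_mem_left P _ _ hp'))
      (span_mul_span_mem P u v huv y hy y' hy')
  have hfin : x ^ (n + n' + 1 + 1) ∈ P := by
    have : x ^ (n + n' + 1 + 1) = x ^ (n + 1) * x ^ (n' + 1) := by
      rw [← pow_add]; congr 1; omega
    rw [this]; exact hprod
  exact hPmax.1 (n + n' + 1) hfin

end IdealPart

section QuotPart

variable {A : Type*} [Ring A]

private lemma mem_of_nilpotent_prime {m : ℕ}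
    (hcomm : ∀ x y : A, (x * y - y * x) ^ m = 0)
    (P : TwoSidedIdeal A)
    (hP : ∀ u v : A, (∀ r : A, u * r * v ∈ P) → u ∈ P ∨ v ∈ P)
    (a : A) (ha : IsNilpotent a) : a ∈ P := by
  let Q := P.ringCon.Quotient
  let π : A →+* Q := RingCon.mk' P.ringCon
  have hπ0 : ∀ t : A, π t = 0 ↔ t ∈ P := by
    intro t
    rw [TwoSidedIdeal.mem_iff]
    constructor
    · intro h
      exact P.ringCon.eq.mp (by rw [RingCon.coe_zero]; exact h)
    · intro h
      rw [show π t = (t : Q) from rfl, ← RingCon.coe_zero P.ringCon]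
      exact P.ringCon.eq.mpr h
  have hsurj : Function.Surjective π := fun y => Quot.inductionOn y (fun t => ⟨t, rfl⟩)
  have hcommQ : ∀ X Y : Q, (X * Y - Y * X) ^ m = 0 := by
    intro X Y
    obtain ⟨x, rfl⟩ := hsurj X
    obtain ⟨y, rfl⟩ := hsurj Y
    rw [← map_mul, ← map_mul, ← map_sub, ← map_pow, hcomm, map_zero]
  have hsemiQ : ∀ C : Q, (∀ Z : Q, C * Z * C = 0) → C = 0 := by
    intro C hC
    obtain ⟨t, rfl⟩ := hsurj C
    rw [hπ0]
    rcases hP t t (fun r => by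
      rw [← hπ0, map_mul, map_mul]; exact hC (π r)) with h | h <;> exact h
  have hz := nilpotent_eq_zero hcommQ hsemiQ (π a) (ha.map π)
  exact (hπ0 a).mp hz

end QuotPart

theorem ideals_generated_by_nilpotent_are_nil
    (k A : Type*) [CommRing k] [Ring A] [Algebra k A]
    (m : ℕ) (hm : 1 ≤ m) (hid : IsPolyId k A (commPow k m))
    (a : A) (ha : IsNilpotent a) :
    (∀ x ∈ TwoSidedIdeal.span ({a} : Set A), IsNilpotent x) ∧
    (∀ x : A, IsNilpotent (a * x)) ∧
    (∀ x : A, IsNilpotent (x * a)) := by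
  have hcomm : ∀ x y : A, (x * y - y * x) ^ m = 0 := by
    intro x y
    have h := hid (fun n => if n = 0 then x else y)
    unfold commPow at h
    rw [map_pow, map_sub, map_mul, map_mul, FreeAlgebra.lift_ι_apply,
      FreeAlgebra.lift_ι_apply] at h
    simpa using h
  have key : ∀ x ∈ TwoSidedIdeal.span ({a} : Set A), IsNilpotent x := by
    intro x hx
    by_contra hnx
    obtain ⟨P, hPS, hPprime⟩ := exists_prime_avoiding x hnx
    have haP : a ∈ P := mem_of_nilpotent_prime hcomm P hPprime a ha
    have hxP : x ∈ P := by
      rw [TwoSidedIdeal.mem_span_iff] at hx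
      exact hx P (Set.singleton_subset_iff.mpr haP)
    have h0 := hPS 0
    rw [pow_one] at h0
    exact h0 hxP
  refine ⟨key, fun x => key _ ?_, fun x => key _ ?_⟩
  · exact TwoSidedIdeal.mul_mem_right _ _ _ (TwoSidedIdeal.subset_span (Set.mem_singleton a))
  · exact TwoSidedIdeal.mul_mem_left _ _ _ (TwoSidedIdeal.subset_span (Set.mem_singleton a))
end

section
/- Let k be a commutative unital ring and let A be a k-algebra such that [x₁,x₂]^m is a polynomial identity of A for some m ≥ 1. Then the set of nilpotent elements of A is a two-sided ideal of A (it is closed under addition, under multiplication by scalars from k, and under left and right multiplication by arbitrary elements of A). -/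
namespace NilpAux
variable {R : Type*} [Ring R]

def wpp (c : R) (l : List R) : R := (l.map (fun z => z * c)).prod
@[simp] lemma wpp_nil (c : R) : wpp c [] = 1 := rfl
@[simp] lemma wpp_cons (c z : R) (l : List R) : wpp c (z :: l) = z * c * wpp c l := by
  simp [wpp]
lemma wpp_replicate (c y : R) (s : ℕ) : wpp c (List.replicate s y) = (y * c) ^ s := by
  induction s with
  | zero => simp
  | succ n ih => rw [List.replicate_succ, wpp_cons, ih, pow_succ']

lemma expand (c : R) {β : Type*} [Fintype β] (n : ℕ) (v : β → R) :
    wpp c (List.replicate n (∑ i : β, v i))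
      = ∑ g : Fin n → β, wpp c (List.ofFn (fun k => v (g k))) := by
  classical
  induction n with
  | zero =>
    simp [List.ofFn_zero]
  | succ n ih =>
    rw [List.replicate_succ, wpp_cons, ih]
    rw [← Equiv.sum_comp (Fin.consEquiv (fun _ : Fin (n+1) => β))
      (fun g : Fin (n+1) → β => wpp c (List.ofFn (fun k => v (g k))))]
    rw [Fintype.sum_prod_type, Finset.sum_mul, Finset.sum_mul]
    refine Finset.sum_congr rfl (fun j _ => ?_)
    rw [Finset.mul_sum]
    refine Finset.sum_congr rfl (fun g _ => ?_)
    have hv : List.ofFn (fun k => v ((Fin.consEquiv (fun _ : Fin (n+1) => β)) (j, g) k))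
        = v j :: List.ofFn (fun k => v (g k)) := by
      rw [List.ofFn_succ]
      simp [Fin.consEquiv]
    rw [hv, wpp_cons]

lemma bridge {α β M : Type*} [Fintype α] [DecidableEq α] [Fintype β] [DecidableEq β]
    [AddCommMonoid M] (T : Finset β) (Φ : Finset (α → β))
    (hΦ : ∀ g, g ∈ Φ ↔ ∀ a, g a ∈ T) (F : (α → β) → M) :
    ∑ g : α → {x // x ∈ T}, F (fun a => (g a : β)) = ∑ g ∈ Φ, F g := by
  classical
  refine Finset.sum_bij (fun g _ => fun a => (g a : β)) ?_ ?_ ?_ ?_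
  · intro g _
    exact (hΦ _).mpr (fun a => (g a).2)
  · intro g₁ _ g₂ _ h
    funext a
    exact Subtype.ext (congrFun h a)
  · intro g hg
    exact ⟨fun a => ⟨g a, (hΦ _).mp hg a⟩, Finset.mem_univ _, rfl⟩
  · intro g _; rfl

end NilpAux

namespace NilpAux
variable {R : Type*} [Ring R]

structure IsIdl (S : Set R) : Prop where
  zero : (0:R) ∈ S
  add : ∀ {a b : R}, a ∈ S → b ∈ S → a + b ∈ S
  neg : ∀ {a : R}, a ∈ S → -a ∈ S
  mulL : ∀ (r : R) {a : R}, a ∈ S → r * a ∈ S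
  mulR : ∀ {a : R} (r : R), a ∈ S → a * r ∈ S

lemma IsIdl.sub {S : Set R} (h : IsIdl S) {a b : R} (ha : a ∈ S) (hb : b ∈ S) :
    a - b ∈ S := by rw [sub_eq_add_neg]; exact h.add ha (h.neg hb)

lemma IsIdl.sum {S : Set R} (h : IsIdl S) {ι : Type*} (t : Finset ι) (f : ι → R)
    (hf : ∀ i ∈ t, f i ∈ S) : (∑ i ∈ t, f i) ∈ S := by
  classical
  induction t using Finset.induction_on with
  | empty => simpa using h.zero
  | @insert x t hx ih =>
    rw [Finset.sum_insert hx]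
    exact h.add (hf _ (Finset.mem_insert_self _ _))
      (ih fun i hi => hf i (Finset.mem_insert_of_mem hi))

lemma polar {S : Set R} (hS : IsIdl S) {s : ℕ} {c : R} (hD : ∀ y : R, c*(y*c)^s ∈ S)
    (z : Fin s → R) :
    (∑ σ : Equiv.Perm (Fin s), c * wpp c (List.ofFn (fun k => z (σ k)))) ∈ S := by
  classical
  set F : (Fin s → Fin s) → R := fun g => c * wpp c (List.ofFn (fun k => z (g k))) with hF
  set A : Finset (Fin s) → R :=
    fun T => ∑ g ∈ Finset.univ.filter
      (fun g : Fin s → Fin s => Finset.image g Finset.univ = T), F g with hA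
  have step1 : ∀ T : Finset (Fin s),
      ∑ T' ∈ T.powerset, A T' = c * wpp c (List.replicate s (∑ i ∈ T, z i)) := by
    intro T
    have e1 : c * wpp c (List.replicate s (∑ i ∈ T, z i))
        = ∑ g : Fin s → {x // x ∈ T}, F (fun a => ((g a : Fin s))) := by
      rw [← Finset.sum_coe_sort T z, expand c s (fun j : {x // x ∈ T} => z (j : Fin s)),
        Finset.mul_sum]
    set Φ : Finset (Fin s → Fin s) := Finset.univ.filter (fun g => ∀ a, g a ∈ T) with hΦ
    have hΦmem : ∀ g, g ∈ Φ ↔ ∀ a, g a ∈ T := by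
      intro g; rw [hΦ]; simp
    rw [e1, bridge T Φ hΦmem F]
    have hmaps : ∀ g ∈ Φ, Finset.image g Finset.univ ∈ T.powerset := by
      intro g hg
      rw [Finset.mem_powerset]
      intro x hx
      obtain ⟨a, _, rfl⟩ := Finset.mem_image.mp hx
      exact (hΦmem g).mp hg a
    rw [← Finset.sum_fiberwise_of_maps_to hmaps F]
    refine Finset.sum_congr rfl (fun T' hT' => ?_)
    rw [Finset.mem_powerset] at hT'
    show (∑ g ∈ Finset.univ.filter
      (fun g : Fin s → Fin s => Finset.image g Finset.univ = T'), F g) = _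
    refine Finset.sum_congr ?_ (fun _ _ => rfl)
    ext g
    simp only [Finset.mem_filter, Finset.mem_univ, true_and, hΦmem g]
    constructor
    · intro him
      refine ⟨fun a => ?_, him⟩
      exact hT' (him ▸ Finset.mem_image_of_mem g (Finset.mem_univ a))
    · exact fun h => h.2
  have hAT : ∀ T : Finset (Fin s), A T ∈ S := by
    intro T
    induction T using Finset.strongInductionOn with
    | _ T ih =>
      have h1 := step1 T
      have htot : c * wpp c (List.replicate s (∑ i ∈ T, z i)) ∈ S := by
        rw [wpp_replicate]; exact hD _
      have h2 : A T = (∑ T' ∈ T.powerset, A T')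
          - ∑ T' ∈ T.powerset.erase T, A T' := by
        rw [← Finset.add_sum_erase _ A (Finset.mem_powerset_self T)]
        abel
      rw [h2, h1]
      refine hS.sub htot (hS.sum _ _ ?_)
      intro T' hT'
      rw [Finset.mem_erase, Finset.mem_powerset] at hT'
      exact ih T' (lt_of_le_of_ne hT'.2 hT'.1)
  have final : (∑ σ : Equiv.Perm (Fin s), c * wpp c (List.ofFn (fun k => z (σ k))))
      = A Finset.univ := by
    rw [hA]
    refine Finset.sum_bij (fun σ _ => (σ : Fin s → Fin s)) ?_ ?_ ?_ ?_
    · intro σ _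
      simp only [Finset.mem_filter, Finset.mem_univ, true_and]
      refine Finset.eq_univ_iff_forall.mpr (fun y => ?_)
      exact Finset.mem_image.mpr ⟨σ.symm y, Finset.mem_univ _, σ.apply_symm_apply y⟩
    · intro σ₁ _ σ₂ _ h
      exact Equiv.ext (fun x => congrFun h x)
    · intro g hg
      simp only [Finset.mem_filter, Finset.mem_univ, true_and] at hg
      have hsurj : Function.Surjective g := by
        intro y
        have : y ∈ Finset.image g Finset.univ := by rw [hg]; exact Finset.mem_univ y
        obtain ⟨a, _, ha⟩ := Finset.mem_image.mp this
        exact ⟨a, ha⟩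
      have hbij := Finite.surjective_iff_bijective.mp hsurj
      exact ⟨Equiv.ofBijective g hbij, Finset.mem_univ _, rfl⟩
    · intro σ _; rfl
  rw [final]
  exact hAT Finset.univ

end NilpAux

namespace NilpAux
variable {R : Type*} [Ring R]

lemma pow_shift (a b : R) (s : ℕ) : (a * b) ^ s * a = a * (b * a) ^ s := by
  induction s with
  | zero => simp
  | succ n ih =>
    calc (a*b)^(n+1)*a = (a*b)^n * (a*b*a) := by rw [pow_succ, mul_assoc]
    _ = (a*b)^n * a * (b*a) := by rw [mul_assoc a b a, ← mul_assoc]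
    _ = a * (b*a)^n * (b*a) := by rw [ih]
    _ = a * (b*a)^(n+1) := by rw [mul_assoc, ← pow_succ]


section Core
variable {S : Set R} (hS : IsIdl S) {m : ℕ}
  (hI : ∀ x y : R, (x*y - y*x)^m = 0)

include hS in
lemma bybk {b y : R} (hb : b*b ∈ S) : ∀ k, b*(y*b)^k*b ∈ S := by
  intro k
  cases k with
  | zero => simpa using hb
  | succ n =>
    have : b*(y*b)^(n+1)*b = (b*(y*b)^n*y)*(b*b) := by
      rw [pow_succ]; simp only [mul_assoc]
    rw [this]
    exact hS.mulL _ hb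

include hS hI in
lemma lemA {b : R} (hb : b*b ∈ S) (y : R) : b*(y*b)^m ∈ S := by
  set d := y*b - b*y with hd
  have claim : ∀ k, b*d^k - b*(y*b)^k ∈ S := by
    intro k
    induction k with
    | zero => simpa using hS.zero
    | succ n ih =>
      have key : b*d^(n+1) - b*(y*b)^(n+1) = (b*d^n - b*(y*b)^n)*d - (b*(y*b)^n*b)*y := by
        rw [hd, pow_succ, pow_succ]; noncomm_ring
      rw [key]
      exact hS.sub (hS.mulR d ih) (hS.mulR y (bybk hS hb n))
  have h0 := claim m
  rw [hd, hI y b, mul_zero, zero_sub] at h0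
  simpa using hS.neg h0

end Core

-- good word computation
lemma goodword {j : ℕ} (c X : R) (w : Fin (j+1) → R) (τ : Equiv.Perm (Fin (j+1))) :
    c * wpp c (List.ofFn (fun k =>
        (Fin.cons X (fun i => w i * c * X) : Fin (j+2) → R)
          ((Equiv.Perm.decomposeFin.symm (0, τ)) k)))
      = (c*X*c) * wpp (c*X*c) (List.ofFn (fun k => w (τ k))) := by
  rw [List.ofFn_succ]
  simp only [Equiv.Perm.decomposeFin_symm_apply_zero,
    Equiv.Perm.decomposeFin_symm_apply_succ, Equiv.swap_self, Equiv.refl_apply,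
    Fin.cons_zero, Fin.cons_succ]
  rw [wpp_cons]
  have h2 : wpp c (List.ofFn (fun k => w (τ k) * c * X))
      = wpp (c*X*c) (List.ofFn (fun k => w (τ k))) := by
    unfold wpp
    have hfe : ((fun z => z * c) ∘ fun k => w (τ k) * c * X)
        = ((fun z => z * (c*X*c)) ∘ fun k => w (τ k)) := by
      funext k; simp [Function.comp, mul_assoc]
    rw [List.map_ofFn, List.map_ofFn, hfe]
  rw [h2]
  simp [mul_assoc]

-- bad word lies in S
lemma badword {S : Set R} (hS : IsIdl S) {s : ℕ} {c y : R}
    (hD : ∀ z : R, c*(z*c)^s ∈ S) {t' : ℕ} (hts : s ≤ 2*(t'+1))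
    {j : ℕ} (w : Fin (j+1) → R) (σ : Equiv.Perm (Fin (j+2))) (hσ : σ 0 ≠ 0) :
    c * wpp c (List.ofFn (fun k =>
        (Fin.cons (y*(c*y)^t') (fun i => w i * c * (y*(c*y)^t')) : Fin (j+2) → R)
          (σ k))) ∈ S := by
  set X := y*(c*y)^t' with hX
  set sl : Fin (j+2) → R := Fin.cons X (fun i => w i * c * X) with hsl
  set q : Fin (j+2) := σ.symm 0 with hqdef
  have hq : σ q = 0 := σ.apply_symm_apply 0
  have hq0 : q ≠ 0 := fun h => hσ (h ▸ hq)
  have hn1 : 1 ≤ (q : ℕ) := Nat.one_le_iff_ne_zero.mpr (fun h => hq0 (Fin.ext h))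
  have hnlt : (q : ℕ) < j + 2 := q.isLt
  set L : List R := List.ofFn (fun k => sl (σ k) * c) with hL
  have hLlen : L.length = j + 2 := by simp [hL]
  have hword : c * wpp c (List.ofFn (fun k => sl (σ k))) = c * L.prod := by
    unfold wpp
    rw [List.map_ofFn, hL]
    rfl
  have hgm : L[(q:ℕ)-1]'(by omega) = sl (σ ⟨(q:ℕ)-1, by omega⟩) * c := by
    simp only [hL]
    rw [List.getElem_ofFn]
  have hgq : L[(q:ℕ)]'(by omega) = X * c := by
    simp only [hL]
    rw [List.getElem_ofFn]
    have hqq : (⟨(q:ℕ), by simpa using hnlt⟩ : Fin (j+2)) = q := Fin.ext rfl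
    rw [hqq, hq, hsl, Fin.cons_zero]
  have hsplitL : L = L.take ((q:ℕ)-1) ++
      (sl (σ ⟨(q:ℕ)-1, by omega⟩) * c) :: (X * c) :: L.drop ((q:ℕ)+1) := by
    conv_lhs => rw [← List.take_append_drop ((q:ℕ)-1) L]
    congr 1
    rw [List.drop_eq_getElem_cons (by omega), hgm]
    congr 1
    have h1 : (q:ℕ)-1+1 = (q:ℕ) := by omega
    rw [h1, List.drop_eq_getElem_cons (by omega), hgq]
  -- the previous-slot value is of the form w i0 * c * X
  have hne : σ ⟨(q:ℕ)-1, by omega⟩ ≠ 0 := by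
    intro h
    have := σ.injective (h.trans hq.symm)
    have : ((q:ℕ)-1 : ℕ) = (q:ℕ) := congrArg Fin.val this
    omega
  obtain ⟨i0, hi0⟩ : ∃ i0 : Fin (j+1), σ ⟨(q:ℕ)-1, by omega⟩ = i0.succ := by
    refine ⟨(σ ⟨(q:ℕ)-1, by omega⟩).pred hne, ?_⟩
    rw [Fin.succ_pred]
  have hslot : sl (σ ⟨(q:ℕ)-1, by omega⟩) = w i0 * c * X := by
    rw [hi0, hsl, Fin.cons_succ]
  -- key middle factor
  have hmid : c*X*c*X*c ∈ S := by
    have e1 : c*X = (c*y)^(t'+1) := by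
      rw [hX, pow_succ']
      simp [mul_assoc]
    have e2 : c*X*c*X*c = (c*y)^(t'+1) * ((c*y)^(t'+1) * c) := by
      rw [← e1]
      simp only [mul_assoc]
    have e3 : (c*y)^(t'+1) * ((c*y)^(t'+1)*c) = (c*y)^(2*(t'+1)-s) * ((c*y)^s * c) := by
      rw [← mul_assoc, ← pow_add, show t'+1+(t'+1) = (2*(t'+1)-s) + s by omega, pow_add,
        mul_assoc]
    rw [e2, e3, pow_shift]
    exact hS.mulL _ (hD y)
  rw [hword, hsplitL, hslot]
  have hre : c * (L.take ((q:ℕ)-1) ++ (w i0 * c * X * c) :: (X * c) :: L.drop ((q:ℕ)+1)).prod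
      = (c * (L.take ((q:ℕ)-1)).prod * w i0) * (c*X*c*X*c) * (L.drop ((q:ℕ)+1)).prod := by
    rw [List.prod_append, List.prod_cons, List.prod_cons]
    simp only [mul_assoc]
  rw [hre]
  exact hS.mulR _ (hS.mulL _ hmid)


end NilpAux

namespace NilpAux
variable {R : Type*} [Ring R]

theorem keyP {S : Set R} (hS : IsIdl S)
    (prime : ∀ x y : R, (∀ r : R, x*r*y ∈ S) → x ∈ S ∨ y ∈ S) :
    ∀ s : ℕ, 1 ≤ s → ∀ b : R, b*b ∈ S → (∀ y : R, b*(y*b)^s ∈ S) → b ∈ S := by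
  intro s
  induction s using Nat.strong_induction_on with
  | _ s IH =>
    intro hs1 b hbb hD
    rcases Nat.lt_or_ge s 2 with hs2 | hs2
    · -- s = 1
      have hseq : s = 1 := by omega
      subst hseq
      refine (prime b b (fun r => ?_)).elim id id
      have := hD r
      rw [pow_one, ← mul_assoc] at this
      exact this
    · -- s ≥ 2
      obtain ⟨t', ht'⟩ : ∃ t', (s+1)/2 = t'+1 := ⟨(s+1)/2 - 1, by omega⟩
      have hts : s ≤ 2*(t'+1) := by omega
      have htlt : t'+1 < s := by omega
      -- inner induction on j
      have inner : ∀ j : ℕ, ∀ c : R, c*c ∈ S → (∀ z : R, c*(z*c)^s ∈ S) →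
          (∀ w : Fin (j+1) → R,
            (∑ σ : Equiv.Perm (Fin (j+1)),
              c * wpp c (List.ofFn (fun k => w (σ k)))) ∈ S) →
          c ∈ S := by
        intro j
        induction j with
        | zero =>
          intro c hcc hDc hG
          refine (prime c c (fun r => ?_)).elim id id
          have h1 := hG (fun _ => r)
          have h2 : (∑ _σ : Equiv.Perm (Fin 1),
              c * wpp c (List.ofFn (fun _ : Fin 1 => r))) = c*r*c := by
            rw [Finset.sum_const, Finset.card_univ]
            simp [Fintype.card_perm, List.ofFn_succ, mul_assoc]
          rw [h2] at h1
          exact h1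
        | succ j ihj =>
          intro c hcc hDc hG
          -- for each y, show B := c*(y*c)^(t'+1) ∈ S
          have hBmem : ∀ y : R, c*(y*c)^(t'+1) ∈ S := by
            intro y
            set X : R := y*(c*y)^t' with hX
            set B : R := c*X*c with hBdef
            have hBB : B*B ∈ S := by
              have e : B*B = (c*X)*((c*c)*(X*c)) := by
                rw [hBdef]; simp only [mul_assoc]
              rw [e]
              exact hS.mulL _ (hS.mulR _ hcc)
            have hDB : ∀ z : R, B*(z*B)^s ∈ S := by
              intro z
              have e : B*(z*B)^s = (c*X) * (c*((z*(c*X))*c)^s) := by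
                rw [hBdef]; simp only [mul_assoc]
              rw [e]
              exact hS.mulL _ (hDc _)
            have hGB : ∀ w : Fin (j+1) → R,
                (∑ τ : Equiv.Perm (Fin (j+1)),
                  B * wpp B (List.ofFn (fun k => w (τ k)))) ∈ S := by
              intro w
              set sl : Fin (j+2) → R := Fin.cons X (fun i => w i * c * X) with hsl
              have htot := hG sl
              have hsplit : (∑ σ : Equiv.Perm (Fin (j+2)),
                  c * wpp c (List.ofFn fun k => sl (σ k)))
                  = (∑ τ : Equiv.Perm (Fin (j+1)), c * wpp c (List.ofFn fun k =>
                      sl ((Equiv.Perm.decomposeFin.symm (0, τ)) k)))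
                    + ∑ p : Fin (j+1), ∑ τ : Equiv.Perm (Fin (j+1)),
                      c * wpp c (List.ofFn fun k =>
                        sl ((Equiv.Perm.decomposeFin.symm (p.succ, τ)) k)) := by
                rw [← Equiv.sum_comp (Equiv.Perm.decomposeFin.symm)
                  (fun σ : Equiv.Perm (Fin (j+2)) =>
                    c * wpp c (List.ofFn fun k => sl (σ k)))]
                rw [Fintype.sum_prod_type, Fin.sum_univ_succ]
              have hbad : (∑ p : Fin (j+1), ∑ τ : Equiv.Perm (Fin (j+1)),
                  c * wpp c (List.ofFn fun k =>
                    sl ((Equiv.Perm.decomposeFin.symm (p.succ, τ)) k))) ∈ S := by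
                refine hS.sum _ _ (fun p _ => hS.sum _ _ (fun τ _ => ?_))
                refine badword hS hDc hts w _ ?_
                rw [Equiv.Perm.decomposeFin_symm_apply_zero]
                exact Fin.succ_ne_zero p
              have hgood : ∀ τ : Equiv.Perm (Fin (j+1)),
                  c * wpp c (List.ofFn fun k =>
                    sl ((Equiv.Perm.decomposeFin.symm (0, τ)) k))
                  = B * wpp B (List.ofFn (fun k => w (τ k))) := by
                intro τ
                rw [hsl, hBdef]
                exact goodword c X w τ
              have hfin : (∑ τ : Equiv.Perm (Fin (j+1)),
                  B * wpp B (List.ofFn (fun k => w (τ k))))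
                  = (∑ σ : Equiv.Perm (Fin (j+2)),
                      c * wpp c (List.ofFn fun k => sl (σ k)))
                    - ∑ p : Fin (j+1), ∑ τ : Equiv.Perm (Fin (j+1)),
                      c * wpp c (List.ofFn fun k =>
                        sl ((Equiv.Perm.decomposeFin.symm (p.succ, τ)) k)) := by
                rw [hsplit, Finset.sum_congr rfl (fun τ _ => hgood τ)]
                abel
              rw [hfin]
              exact hS.sub htot hbad
            have hBS : B ∈ S := ihj B hBB hDB hGB
            have hBeq : B = c*(y*c)^(t'+1) := by
              rw [hBdef, hX]
              calc c*(y*(c*y)^t')*c = ((c*y)*(c*y)^t')*c := by simp only [mul_assoc]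
              _ = (c*y)^(t'+1)*c := by rw [← pow_succ']
              _ = c*(y*c)^(t'+1) := pow_shift c y (t'+1)
            rw [← hBeq]
            exact hBS
          exact IH (t'+1) htlt (by omega) c hcc hBmem
      obtain ⟨s', hs'⟩ : ∃ s', s = s'+1 := ⟨s-1, by omega⟩
      subst hs'
      exact inner s' b hbb hD (fun w => polar hS hD w)

end NilpAux

namespace NilpAux
variable {R : Type*} [Ring R]

lemma closure_mulL (x r : R) {v : R}
    (hv : v ∈ AddSubgroup.closure {t : R | ∃ a b : R, t = a*x*b}) :
    r*v ∈ AddSubgroup.closure {t : R | ∃ a b : R, t = a*x*b} := by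
  refine AddSubgroup.closure_induction ?_ ?_ ?_ ?_ hv
  · rintro t ⟨a, b, rfl⟩
    exact AddSubgroup.subset_closure ⟨r*a, b, by simp [mul_assoc]⟩
  · rw [mul_zero]; exact zero_mem _
  · intro p q _ _ hp hq
    rw [mul_add]; exact add_mem hp hq
  · intro p _ hp
    rw [mul_neg]; exact neg_mem hp

lemma closure_mulR (x r : R) {v : R}
    (hv : v ∈ AddSubgroup.closure {t : R | ∃ a b : R, t = a*x*b}) :
    v*r ∈ AddSubgroup.closure {t : R | ∃ a b : R, t = a*x*b} := by
  refine AddSubgroup.closure_induction ?_ ?_ ?_ ?_ hv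
  · rintro t ⟨a, b, rfl⟩
    exact AddSubgroup.subset_closure ⟨a, b*r, by simp [mul_assoc]⟩
  · rw [zero_mul]; exact zero_mem _
  · intro p q _ _ hp hq
    rw [add_mul]; exact add_mem hp hq
  · intro p _ hp
    rw [neg_mul]; exact neg_mem hp

lemma closure_mul_mem {S : Set R} (hS : IsIdl S) {x y : R} (hxy : ∀ r : R, x*r*y ∈ S)
    {v u : R} (hv : v ∈ AddSubgroup.closure {t : R | ∃ a b : R, t = a*x*b})
    (hu : u ∈ AddSubgroup.closure {t : R | ∃ a b : R, t = a*y*b}) :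
    v*u ∈ S := by
  revert hu
  refine AddSubgroup.closure_induction (k := {t : R | ∃ a b : R, t = a*x*b})
    ?_ ?_ ?_ ?_ hv
  · rintro t ⟨a, b, rfl⟩ hu
    refine AddSubgroup.closure_induction ?_ ?_ ?_ ?_ hu
    · rintro t' ⟨a', b', rfl⟩
      have e : a*x*b*(a'*y*b') = a*(x*(b*a')*y)*b' := by simp only [mul_assoc]
      rw [e]
      exact hS.mulR _ (hS.mulL _ (hxy _))
    · rw [mul_zero]; exact hS.zero
    · intro p q _ _ hp hq
      rw [mul_add]; exact hS.add hp hq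
    · intro p _ hp
      rw [mul_neg]; exact hS.neg hp
  · intro _
    rw [zero_mul]; exact hS.zero
  · intro p q _ _ hp hq hu
    rw [add_mul]; exact hS.add (hp hu) (hq hu)
  · intro p _ hp hu
    rw [neg_mul]; exact hS.neg (hp hu)

lemma separation {c : R} (hc : ∀ n : ℕ, c^n ≠ 0) :
    ∃ S : Set R, IsIdl S ∧ (∀ n : ℕ, c^n ∉ S) ∧
      (∀ x y : R, (∀ r : R, x*r*y ∈ S) → x ∈ S ∨ y ∈ S) := by
  classical
  set 𝒜 : Set (Set R) := {S | IsIdl S ∧ ∀ n : ℕ, c^n ∉ S} with h𝒜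
  have h0 : ({0} : Set R) ∈ 𝒜 := by
    constructor
    · exact { zero := rfl
              add := fun ha hb => by simp_all
              neg := fun ha => by simp_all
              mulL := fun r ha => by simp_all
              mulR := fun r ha => by simp_all }
    · intro n hn
      exact hc n (by simpa using hn)
  have hchain : ∀ ch ⊆ 𝒜, IsChain (· ⊆ ·) ch → ch.Nonempty →
      ∃ ub ∈ 𝒜, ∀ s ∈ ch, s ⊆ ub := by
    intro ch hch hchain ⟨S1, hS1⟩
    refine ⟨⋃₀ ch, ⟨?_, ?_⟩, fun s hs => Set.subset_sUnion_of_mem hs⟩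
    · constructor
      · exact ⟨S1, hS1, (hch hS1).1.zero⟩
      · rintro a b ⟨Sa, hSa, ha⟩ ⟨Sb, hSb, hb⟩
        rcases hchain.total hSa hSb with h | h
        · exact ⟨Sb, hSb, (hch hSb).1.add (h ha) hb⟩
        · exact ⟨Sa, hSa, (hch hSa).1.add ha (h hb)⟩
      · rintro a ⟨Sa, hSa, ha⟩
        exact ⟨Sa, hSa, (hch hSa).1.neg ha⟩
      · rintro r a ⟨Sa, hSa, ha⟩
        exact ⟨Sa, hSa, (hch hSa).1.mulL r ha⟩
      · rintro a r ⟨Sa, hSa, ha⟩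
        exact ⟨Sa, hSa, (hch hSa).1.mulR r ha⟩
    · rintro n ⟨Sa, hSa, ha⟩
      exact (hch hSa).2 n ha
  obtain ⟨S₀, hsub, hmax⟩ := zorn_subset_nonempty 𝒜 hchain {0} h0
  refine ⟨S₀, hmax.prop.1, hmax.prop.2, ?_⟩
  intro x y hxy
  by_contra hcon
  push_neg at hcon
  obtain ⟨hx, hy⟩ := hcon
  have hS₀ := hmax.prop.1
  -- enlarged ideal for an element w ∉ S₀
  have key : ∀ w : R, w ∉ S₀ → ∃ n : ℕ, ∃ a ∈ S₀,
      ∃ v ∈ AddSubgroup.closure {t : R | ∃ p q : R, t = p*w*q}, c^n = a + v := by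
    intro w hw
    set Sw : Set R := {u | ∃ a ∈ S₀,
      ∃ v ∈ AddSubgroup.closure {t : R | ∃ p q : R, t = p*w*q}, u = a + v} with hSw
    have hSwIdl : IsIdl Sw := by
      constructor
      · exact ⟨0, hS₀.zero, 0, zero_mem _, by simp⟩
      · rintro u1 u2 ⟨a1, ha1, v1, hv1, rfl⟩ ⟨a2, ha2, v2, hv2, rfl⟩
        exact ⟨a1+a2, hS₀.add ha1 ha2, v1+v2, add_mem hv1 hv2, by abel⟩
      · rintro u ⟨a, ha, v, hv, rfl⟩
        exact ⟨-a, hS₀.neg ha, -v, neg_mem hv, by abel⟩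
      · rintro r u ⟨a, ha, v, hv, rfl⟩
        exact ⟨r*a, hS₀.mulL r ha, r*v, closure_mulL w r hv, by rw [mul_add]⟩
      · rintro u r ⟨a, ha, v, hv, rfl⟩
        exact ⟨a*r, hS₀.mulR r ha, v*r, closure_mulR w r hv, by rw [add_mul]⟩
    have hwSw : w ∈ Sw :=
      ⟨0, hS₀.zero, w, AddSubgroup.subset_closure ⟨1, 1, by simp⟩, by simp⟩
    have hsubSw : S₀ ⊆ Sw := fun a ha => ⟨a, ha, 0, zero_mem _, by simp⟩
    have hSwnot : Sw ∉ 𝒜 := by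
      intro hin
      exact hw (hmax.le_of_ge hin hsubSw hwSw)
    rw [h𝒜] at hSwnot
    simp only [Set.mem_setOf_eq, not_and, not_forall, not_not] at hSwnot
    obtain ⟨n, hn⟩ := hSwnot hSwIdl
    obtain ⟨a, ha, v, hv, he⟩ := hn
    exact ⟨n, a, ha, v, hv, he⟩
  obtain ⟨n₁, a1, ha1, v1, hv1, he1⟩ := key x hx
  obtain ⟨n₂, a2, ha2, v2, hv2, he2⟩ := key y hy
  have : c^(n₁+n₂) ∈ S₀ := by
    rw [pow_add, he1, he2]
    have e : (a1+v1)*(a2+v2) = a1*(a2+v2) + v1*a2 + v1*v2 := by noncomm_ring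
    rw [e]
    exact hS₀.add (hS₀.add (hS₀.mulR _ ha1) (hS₀.mulL _ ha2))
      (closure_mul_mem hS₀ hxy hv1 hv2)
  exact hmax.prop.2 _ this

end NilpAux

namespace NilpAux
variable {R : Type*} [Ring R]

lemma nilmem {S : Set R} (hS : IsIdl S)
    (prime : ∀ x y : R, (∀ r : R, x*r*y ∈ S) → x ∈ S ∨ y ∈ S)
    {m : ℕ} (hm : 1 ≤ m) (hI : ∀ x y : R, (x*y - y*x)^m = 0) :
    ∀ n : ℕ, ∀ d : R, d^n ∈ S → d ∈ S := by
  intro n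
  induction n using Nat.strong_induction_on with
  | _ n IH =>
    intro d hd
    rcases Nat.lt_or_ge n 2 with hn2 | hn2
    · interval_cases n
      · simpa using hS.mulL d hd
      · simpa using hd
    · set u := (n+1)/2 with hu
      have hun : n ≤ u + u := by omega
      have hult : u < n := by omega
      have hbb : d^u * d^u ∈ S := by
        rw [← pow_add, show u + u = n + (u+u-n) by omega, pow_add]
        exact hS.mulR _ hd
      have hD : ∀ y : R, d^u*(y*d^u)^m ∈ S := fun y => lemA hS hI hbb y
      have hb : d^u ∈ S := keyP hS prime m hm (d^u) hbb hD
      exact IH u hult d hb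

/-- Main abstract result: in a ring satisfying `(xy-yx)^m = 0`, if `c` is not
nilpotent and `d` is nilpotent, then ... we package: any non-nilpotent element
admits a prime ideal-set containing all nilpotents but no power of `c`. -/
theorem main_abstract {m : ℕ} (hm : 1 ≤ m) (hI : ∀ x y : R, (x*y - y*x)^m = 0)
    {c : R} (hc : ¬ IsNilpotent c) :
    ∃ S : Set R, IsIdl S ∧ (∀ n : ℕ, c^n ∉ S) ∧ (∀ d : R, IsNilpotent d → d ∈ S) := by
  have hc' : ∀ n : ℕ, c^n ≠ 0 := fun n hn => hc ⟨n, hn⟩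
  obtain ⟨S, hS, hpow, hprime⟩ := separation hc'
  refine ⟨S, hS, hpow, ?_⟩
  rintro d ⟨n, hn⟩
  exact nilmem hS hprime hm hI n d (by rw [hn]; exact hS.zero)

end NilpAux


theorem nilpotents_form_twoSided_ideal
    (k A : Type*) [CommRing k] [Ring A] [Algebra k A]
    (m : ℕ) (hm : 1 ≤ m) (hid : IsPolyId k A (commPow k m)) :
    (∀ a b : A, IsNilpotent a → IsNilpotent b → IsNilpotent (a + b)) ∧
    (∀ (c : k) (a : A), IsNilpotent a → IsNilpotent (c • a)) ∧
    (∀ (x a : A), IsNilpotent a → IsNilpotent (x * a)) ∧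
    (∀ (x a : A), IsNilpotent a → IsNilpotent (a * x)) := by
  have hI : ∀ x y : A, (x*y - y*x)^m = 0 := by
    intro x y
    have := hid (fun n => if n = 0 then x else y)
    rw [commPow] at this
    simpa [map_pow, map_sub, map_mul, FreeAlgebra.lift_ι_apply] using this
  refine ⟨?_, ?_, ?_, ?_⟩
  · intro a b ha hb
    by_contra hc
    obtain ⟨S, hS, hpow, hnil⟩ := NilpAux.main_abstract hm hI hc
    have : a + b ∈ S := hS.add (hnil a ha) (hnil b hb)
    exact hpow 1 (by simpa using this)
  · rintro c a ⟨n, hn⟩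
    exact ⟨n, by rw [smul_pow, hn, smul_zero]⟩
  · intro x a ha
    by_contra hc
    obtain ⟨S, hS, hpow, hnil⟩ := NilpAux.main_abstract hm hI hc
    have : x * a ∈ S := hS.mulL x (hnil a ha)
    exact hpow 1 (by simpa using this)
  · intro x a ha
    by_contra hc
    obtain ⟨S, hS, hpow, hnil⟩ := NilpAux.main_abstract hm hI hc
    have : a * x ∈ S := hS.mulR x (hnil a ha)
    exact hpow 1 (by simpa using this)
end

section
/- Let k be a commutative unital ring, let m ≥ 1, and let A be a unital k-algebra such that [x₁,x₂]^m is a polynomial identity of A. Then an element a ∈ A is nilpotent if and only if a belongs to every two-sided ideal I of A for which the quotient ring A/I is a (nontrivial) commutative integral domain. (Equivalently, A modulo its ideal of nilpotent elements is a subdirect product of commutative integral domains.) -/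
section NilpAuxSection

namespace NilpAux
variable {R : Type*} [Ring R]

/-- `(a*v)^j * a = a * (v*a)^j`. -/
lemma shift_pow (a v : R) : ∀ j : ℕ, (a*v)^j * a = a * (v*a)^j := by
  intro j
  induction j with
  | zero => simp
  | succ j ih =>
      rw [pow_succ', pow_succ']
      calc a*v * (a*v)^j * a = a*v*((a*v)^j * a) := by rw [mul_assoc]
        _ = a*v*(a*(v*a)^j) := by rw [ih]
        _ = a * (v*a * (v*a)^j) := by noncomm_ring

lemma ya_pow_mul_ay (a y : R) (ha : a * a = 0) : ∀ k : ℕ, 1 ≤ k → (y*a)^k * (a*y) = 0 := by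
  intro k hk
  obtain ⟨k', rfl⟩ : ∃ k', k = k' + 1 := ⟨k - 1, by omega⟩
  rw [pow_succ, mul_assoc]
  have h2 : y*a*(a*y) = y*(a*a)*y := by noncomm_ring
  rw [h2, ha, mul_zero, zero_mul, mul_zero]

lemma comm_expand (a y : R) (ha : a * a = 0) :
    ∀ j : ℕ, (a*y - y*a)^j
      = ∑ i ∈ Finset.range (j+1), (-1:ℤ)^(j-i) • ((a*y)^i * (y*a)^(j-i)) := by
  intro j
  induction j with
  | zero => simp
  | succ j ih =>
      rw [pow_succ, ih, mul_sub, Finset.sum_mul, Finset.sum_mul]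
      have hS1 : (∑ i ∈ Finset.range (j+1), ((-1:ℤ)^(j-i) • ((a*y)^i * (y*a)^(j-i))) * (a*y))
          = (a*y)^(j+1) := by
        rw [Finset.sum_eq_single j]
        · simp [pow_succ]
        · intro i hi hne
          rw [Finset.mem_range] at hi
          have h1 : 1 ≤ j - i := by omega
          rw [smul_mul_assoc, mul_assoc, ya_pow_mul_ay a y ha _ h1, mul_zero, smul_zero]
        · intro h
          exact absurd (Finset.self_mem_range_succ j) h
      have hS2 : ∀ i ∈ Finset.range (j+1),
          ((-1:ℤ)^(j-i) • ((a*y)^i * (y*a)^(j-i))) * (y*a)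
          = -((-1:ℤ)^(j+1-i) • ((a*y)^i * (y*a)^(j+1-i))) := by
        intro i hi
        rw [Finset.mem_range] at hi
        have h1 : j + 1 - i = (j - i) + 1 := by omega
        rw [smul_mul_assoc, mul_assoc, ← pow_succ, h1, pow_succ ((-1:ℤ)), ← neg_smul]
        congr 1
        noncomm_ring
      rw [Finset.sum_congr rfl hS2, hS1, Finset.sum_range_succ (n := j+1)]
      have h3 : (-1:ℤ)^(j+1-(j+1)) • ((a*y)^(j+1) * (y*a)^(j+1-(j+1))) = (a*y)^(j+1) := by
        simp
      rw [h3]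
      simp only [Finset.sum_neg_distrib]
      abel


lemma a_mul_av_pow (a v : R) (ha : a * a = 0) : ∀ i : ℕ, 1 ≤ i → a * (a*v)^i = 0 := by
  intro i hi
  obtain ⟨k, rfl⟩ : ∃ k, i = k + 1 := ⟨i - 1, by omega⟩
  rw [pow_succ']
  calc a * (a*v * (a*v)^k) = (a*a) * (v * (a*v)^k) := by noncomm_ring
    _ = 0 := by rw [ha, zero_mul]

/-- Lemma A : if `a² = 0` and `(a v − v a)^m = 0` then `a (v a)^m = 0`. -/
lemma lemA_s8 (a v : R) (m : ℕ) (ha : a * a = 0) (hc : (a*v - v*a)^m = 0) :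
    a * (v*a)^m = 0 := by
  have h0 : a * ((a*v - v*a)^m) = 0 := by rw [hc, mul_zero]
  rw [comm_expand a v ha m, Finset.mul_sum] at h0
  have hterm : ∀ i ∈ Finset.range (m+1),
      a * ((-1:ℤ)^(m-i) • ((a*v)^i * (v*a)^(m-i)))
      = if i = 0 then (-1:ℤ)^m • (a * (v*a)^m) else 0 := by
    intro i hi
    rcases Nat.eq_zero_or_pos i with h | h
    · subst h
      rw [if_pos rfl]
      simp only [pow_zero, one_mul, Nat.sub_zero]
      rw [mul_smul_comm]
    · rw [if_neg (by omega)]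
      rw [mul_smul_comm, ← mul_assoc, a_mul_av_pow a v ha i h, zero_mul, smul_zero]
  rw [Finset.sum_congr rfl hterm, Finset.sum_ite_eq' (Finset.range (m+1)) 0,
    if_pos (Finset.mem_range.mpr (by omega))] at h0
  -- h0 : (-1)^m • (a * (v*a)^m) = 0
  have h2 := congrArg (fun z => ((-1:ℤ)^m) • z) h0
  simp only [smul_zero, smul_smul, ← pow_add] at h2
  rwa [Even.neg_one_pow ⟨m, rfl⟩, one_smul] at h2


/-- Noncommutative expansion of a power of a finite sum, as a sum over tuples. -/
lemma sum_pow_piFinset {ι : Type*} [Fintype ι] [DecidableEq ι] (s : Finset ι) (g : ι → R) :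
    ∀ n : ℕ, (∑ i ∈ s, g i) ^ n
      = ∑ f ∈ Fintype.piFinset (fun _ : Fin n => s), (List.ofFn fun k => g (f k)).prod := by
  intro n
  induction n with
  | zero =>
      rw [pow_zero]
      have huniv : Fintype.piFinset (fun _ : Fin 0 => s) = Finset.univ := by
        ext f
        simp [Fintype.mem_piFinset]
      rw [huniv]
      rw [Finset.sum_congr rfl (fun f _ => by simp : ∀ f ∈ (Finset.univ : Finset (Fin 0 → ι)), (List.ofFn fun k => g (f k)).prod = 1)]
      simp
  | succ n ih =>
      rw [pow_succ', ih, Finset.mul_sum]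
      have hexp : ∀ f ∈ Fintype.piFinset (fun _ : Fin n => s),
          (∑ i ∈ s, g i) * (List.ofFn fun k => g (f k)).prod
          = ∑ i ∈ s, g i * (List.ofFn fun k => g (f k)).prod := fun f _ => Finset.sum_mul ..
      rw [Finset.sum_congr rfl hexp, ← Finset.sum_product']
      refine Finset.sum_nbij' (i := fun p => Fin.cons p.2 p.1)
        (j := fun F => (fun k => F k.succ, F 0)) ?_ ?_ ?_ ?_ ?_
      · intro p hp
        rw [Finset.mem_product] at hp
        rw [Fintype.mem_piFinset]
        intro k
        refine Fin.cases ?_ ?_ k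
        · simpa using hp.2
        · intro k'
          simp only [Fin.cons_succ]
          exact Fintype.mem_piFinset.mp hp.1 k'
      · intro F hF
        rw [Finset.mem_product]
        constructor
        · rw [Fintype.mem_piFinset]
          intro k
          exact Fintype.mem_piFinset.mp hF k.succ
        · exact Fintype.mem_piFinset.mp hF 0
      · intro p hp
        simp
      · intro F hF
        funext k
        refine Fin.cases ?_ ?_ k <;> simp
      · intro p hp
        rw [List.ofFn_succ]
        simp only [Fin.cons_zero, Fin.cons_succ, List.prod_cons]

lemma coeff_sum {ι : Type*} [Fintype ι] [DecidableEq ι] (T : Finset ι) :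
    ∑ S ∈ Finset.univ.powerset.filter (fun S => T ⊆ S), (-1:ℤ)^S.card
      = if T = Finset.univ then (-1:ℤ)^(Fintype.card ι) else 0 := by
  have step1 : ∑ S ∈ Finset.univ.powerset.filter (fun S => T ⊆ S), (-1:ℤ)^S.card
      = ∑ W ∈ Tᶜ.powerset, (-1:ℤ)^(W.card + T.card) := by
    refine Finset.sum_nbij' (i := fun S => S \ T) (j := fun W => W ∪ T) ?_ ?_ ?_ ?_ ?_
    · intro S hS
      rw [Finset.mem_filter] at hS
      rw [Finset.mem_powerset]
      intro x hx
      rw [Finset.mem_sdiff] at hx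
      simp [hx.2]
    · intro W hW
      rw [Finset.mem_filter]
      exact ⟨Finset.mem_powerset.mpr (Finset.subset_univ _), Finset.subset_union_right⟩
    · intro S hS
      rw [Finset.mem_filter] at hS
      exact Finset.sdiff_union_of_subset hS.2
    · intro W hW
      rw [Finset.mem_powerset] at hW
      have hd : Disjoint W T := by
        rw [Finset.disjoint_left]
        intro x hxW hxT
        have := hW hxW
        simp [hxT] at this
      show (W ∪ T) \ T = W
      rw [Finset.union_sdiff_distrib, Finset.sdiff_self, Finset.union_empty,
        Finset.sdiff_eq_self_of_disjoint hd]
    · intro S hS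
      rw [Finset.mem_filter] at hS
      show _ = (-1:ℤ)^((S \ T).card + T.card)
      congr 1
      rw [Finset.card_sdiff_add_card_eq_card hS.2]
  rw [step1]
  have step2 : ∑ W ∈ Tᶜ.powerset, (-1:ℤ)^(W.card + T.card)
      = (∑ W ∈ Tᶜ.powerset, (-1:ℤ)^W.card) * (-1:ℤ)^T.card := by
    rw [Finset.sum_mul]
    exact Finset.sum_congr rfl fun W _ => (pow_add _ _ _)
  rw [step2, Finset.sum_powerset_neg_one_pow_card]
  by_cases h : T = Finset.univ
  · subst h
    rw [if_pos (by simp), if_pos rfl, one_mul, Finset.card_univ]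
  · rw [if_neg h, if_neg ?_, zero_mul]
    intro hc
    exact h (by simpa [Finset.compl_eq_empty_iff] using hc)

lemma perm_sum_zero (a : R) (e : ℕ) (hD : ∀ v : R, a * (v * a) ^ e = 0) (x : Fin e → R) :
    ∑ σ : Equiv.Perm (Fin e), a * (List.ofFn fun k => x (σ k) * a).prod = 0 := by
  classical
  set W : (Fin e → Fin e) → R := fun f => a * (List.ofFn fun k => x (f k) * a).prod with hWdef
  have hS : ∀ S : Finset (Fin e), ∑ f ∈ Fintype.piFinset (fun _ => S), W f = 0 := by
    intro S
    have h1 : a * ((∑ i ∈ S, x i) * a)^e = 0 := hD _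
    rw [Finset.sum_mul, sum_pow_piFinset S (fun i => x i * a) e, Finset.mul_sum] at h1
    exact h1
  have hA : ∑ S ∈ (Finset.univ : Finset (Fin e)).powerset,
        (-1:ℤ)^S.card • (∑ f ∈ Fintype.piFinset (fun _ => S), W f)
      = ∑ f : Fin e → Fin e,
        (if Finset.image f Finset.univ = Finset.univ then (-1:ℤ)^e • W f else 0) := by
    have h3 : ∀ S ∈ (Finset.univ : Finset (Fin e)).powerset,
        (-1:ℤ)^S.card • (∑ f ∈ Fintype.piFinset (fun _ => S), W f)
        = ∑ f : Fin e → Fin e,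
            (if Finset.image f Finset.univ ⊆ S then (-1:ℤ)^S.card • W f else 0) := by
      intro S _
      have hfil : (Fintype.piFinset (fun _ => S))
          = Finset.univ.filter (fun f : Fin e → Fin e => Finset.image f Finset.univ ⊆ S) := by
        ext f
        simp [Fintype.mem_piFinset, Finset.image_subset_iff]
      rw [hfil, ← Finset.sum_filter, Finset.smul_sum]
    rw [Finset.sum_congr rfl h3, Finset.sum_comm]
    refine Finset.sum_congr rfl fun f _ => ?_
    rw [← Finset.sum_filter, ← Finset.sum_smul, coeff_sum, ite_smul, zero_smul,
      Fintype.card_fin]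
  have hzero : ∑ f : Fin e → Fin e,
      (if Finset.image f Finset.univ = Finset.univ then (-1:ℤ)^e • W f else 0) = 0 := by
    rw [← hA]
    refine Finset.sum_eq_zero fun S _ => ?_
    rw [hS S, smul_zero]
  rw [← Finset.sum_filter, ← Finset.smul_sum] at hzero
  have hfsum : ∑ f ∈ Finset.univ.filter
      (fun f : Fin e → Fin e => Finset.image f Finset.univ = Finset.univ), W f = 0 := by
    have h4 := congrArg (fun z => ((-1:ℤ)^e) • z) hzero
    simp only [smul_zero, smul_smul, ← pow_add] at h4
    rwa [Even.neg_one_pow ⟨e, rfl⟩, one_smul] at h4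
  have hbij : ∀ f : Fin e → Fin e,
      Finset.image f Finset.univ = Finset.univ → Function.Bijective f := by
    intro f hf
    have hsurj : Function.Surjective f := by
      intro y
      have hy : y ∈ Finset.image f Finset.univ := by rw [hf]; exact Finset.mem_univ y
      obtain ⟨x, _, hx⟩ := Finset.mem_image.mp hy
      exact ⟨x, hx⟩
    exact ⟨Finite.injective_iff_surjective.mpr hsurj, hsurj⟩
  have hperm : ∑ σ : Equiv.Perm (Fin e), W ⇑σ
      = ∑ f ∈ Finset.univ.filter
          (fun f : Fin e → Fin e => Finset.image f Finset.univ = Finset.univ), W f := by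
    refine Finset.sum_nbij' (i := fun σ => ⇑σ)
      (j := fun f => if h : Function.Bijective f then Equiv.ofBijective f h else 1) ?_ ?_ ?_ ?_ ?_
    · intro σ _
      simp only [Finset.mem_filter, Finset.mem_univ, true_and]
      ext y
      simp only [Finset.mem_image, Finset.mem_univ, true_and, iff_true]
      exact ⟨σ.symm y, σ.apply_symm_apply y⟩
    · intro f _
      exact Finset.mem_univ _
    · intro σ _
      simp only [dif_pos σ.bijective]
      exact Equiv.ext fun x => rfl
    · intro f hf
      rw [Finset.mem_filter] at hf
      simp only [dif_pos (hbij f hf.2)]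
      rfl
    · intro σ _
      rfl
  rw [hWdef] at hperm
  simp only at hperm
  rw [hperm]
  rw [hWdef] at hfsum
  exact hfsum


/-- `chainProd g j c = g j * g (j+1) * ⋯ * g (j+c-1)`. -/
def chainProd (g : ℕ → R) : ℕ → ℕ → R
  | _, 0 => 1
  | j, c+1 => g j * chainProd g (j+1) c

lemma chainProd_succ (g : ℕ → R) (j c : ℕ) :
    chainProd g j (c+1) = g j * chainProd g (j+1) c := rfl

lemma chainProd_congr (g g' : ℕ → R) :
    ∀ c j, (∀ i, j ≤ i → g i = g' i) → chainProd g j c = chainProd g' j c := by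
  intro c
  induction c with
  | zero => intro j _; rfl
  | succ c ih =>
      intro j h
      rw [chainProd_succ, chainProd_succ, h j le_rfl, ih (j+1) (fun i hi => h i (by omega))]

lemma ofFn_chainProd (g : ℕ → R) :
    ∀ c j, (List.ofFn fun k : Fin c => g (j + (k:ℕ))).prod = chainProd g j c := by
  intro c
  induction c with
  | zero => intro j; simp [chainProd]
  | succ c ih =>
      intro j
      rw [List.ofFn_succ, List.prod_cons, chainProd_succ]
      simp only [Fin.val_zero, Nat.add_zero, Fin.val_succ]
      have hfun : (fun i : Fin c => g (j + ((i:ℕ) + 1))) = fun i : Fin c => g ((j+1) + (i:ℕ)) := by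
        funext i
        congr 1
        omega
      rw [hfun, ih (j+1)]


lemma ofFn_adj_zero : ∀ (n : ℕ) (g : Fin n → R) (k : ℕ) (hk : k + 1 < n),
    g ⟨k, by omega⟩ * g ⟨k+1, hk⟩ = 0 → (List.ofFn g).prod = 0 := by
  intro n g k
  induction k generalizing n g with
  | zero =>
      intro hk h
      obtain ⟨n', rfl⟩ : ∃ n', n = n' + 2 := ⟨n - 2, by omega⟩
      rw [List.ofFn_succ, List.prod_cons, List.ofFn_succ, List.prod_cons, ← mul_assoc]
      have h01 : g 0 * g (0 : Fin (n'+1)).succ = 0 := by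
        convert h using 3 <;> simp [Fin.ext_iff]
      rw [h01, zero_mul]
  | succ k ih =>
      intro hk h
      obtain ⟨n', rfl⟩ : ∃ n', n = n' + 1 := ⟨n - 1, by omega⟩
      rw [List.ofFn_succ, List.prod_cons]
      have htail : (List.ofFn fun i : Fin n' => g i.succ).prod = 0 := by
        refine ih n' (fun i => g i.succ) (by omega) ?_
        convert h using 3 <;> simp [Fin.ext_iff]
      rw [htail, mul_zero]

lemma perm_descent {n : ℕ} (σ : Equiv.Perm (Fin n)) (hσ : σ ≠ 1) :
    ∃ k : ℕ, ∃ hk : k + 1 < n, ((σ ⟨k+1, hk⟩ : Fin n) : ℕ) < ((σ ⟨k, by omega⟩ : Fin n) : ℕ) := by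
  by_contra hcon
  push_neg at hcon
  have hlt : ∀ (k : ℕ) (hk : k + 1 < n), ((σ ⟨k, by omega⟩ : Fin n) : ℕ) < ((σ ⟨k+1, hk⟩ : Fin n) : ℕ) := by
    intro k hk
    have hle := hcon k hk
    have hne : (σ ⟨k, by omega⟩ : Fin n) ≠ (σ ⟨k+1, hk⟩ : Fin n) := by
      intro hEq
      have := σ.injective hEq
      simp [Fin.ext_iff] at this
    exact lt_of_le_of_ne hle (fun hEq => hne (Fin.ext hEq))
  have hup : ∀ (k : ℕ) (hk : k < n), k ≤ ((σ ⟨k, hk⟩ : Fin n) : ℕ) := by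
    intro k
    induction k with
    | zero => intro _; exact Nat.zero_le _
    | succ k ih =>
        intro hk
        have h1 := hlt k hk
        have h2 := ih (by omega)
        omega
  have hdown : ∀ (d : ℕ), d ≤ n - 1 → ∀ (hk : n - 1 - d < n), ((σ ⟨n-1-d, hk⟩ : Fin n) : ℕ) ≤ n - 1 - d := by
    intro d
    induction d with
    | zero =>
        intro _ hk
        have := (σ ⟨n-1-0, hk⟩).isLt
        omega
    | succ d ih =>
        intro hd hk
        have hn : n - 1 - (d+1) + 1 = n - 1 - d := by omega
        have hk2 : (n - 1 - (d+1)) + 1 < n := by omega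
        have h1 := hlt (n-1-(d+1)) hk2
        have h2 := ih (by omega) (by omega)
        have h3 : ((σ ⟨n-1-(d+1)+1, hk2⟩ : Fin n) : ℕ) = ((σ ⟨n-1-d, by omega⟩ : Fin n) : ℕ) :=
          congrArg (fun z => ((σ z : Fin n) : ℕ)) (Fin.ext hn)
        omega
  apply hσ
  ext i
  have hi := i.isLt
  have h1 := hup i.val hi
  have h2 := hdown (n - 1 - i.val) (by omega) (by omega)
  have h3 : n - 1 - (n - 1 - i.val) = i.val := by omega
  have h4 : ((σ ⟨n-1-(n-1-i.val), by omega⟩ : Fin n) : ℕ) = ((σ i : Fin n) : ℕ) :=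
    congrArg (fun z => ((σ z : Fin n) : ℕ)) (Fin.ext h3)
  have h6 : ((σ ⟨i.val, hi⟩ : Fin n) : ℕ) = ((σ i : Fin n) : ℕ) :=
    congrArg (fun z => ((σ z : Fin n) : ℕ)) (Fin.ext rfl)
  simp only [Equiv.Perm.coe_one, id_eq]
  have h5 : ((σ i : Fin n) : ℕ) = i.val := by omega
  exact h5


/-- Key descent: from `D e` to `D (e-1)` in a "prime" ring. -/
lemma descent (hprime : ∀ x y : R, (∀ r : R, x * r * y = 0) → x = 0 ∨ y = 0)
    (a : R) (e : ℕ) (he : 1 ≤ e) (hD : ∀ v : R, a * (v * a) ^ e = 0) (v : R) :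
    a * (v * a) ^ (e - 1) = 0 := by
  obtain ⟨e', rfl⟩ : ∃ e', e = e' + 1 := ⟨e - 1, by omega⟩
  simp only [Nat.add_sub_cancel]
  by_contra hv
  have hq : a * (v*a)^e' ≠ 0 := hv
  -- the list entries
  set g : (ℕ → R) → ℕ → R := fun γ i => (v*a)^(e' - i) * γ i * (a*v)^i * a with hgdef
  -- pairwise kill for descents
  have hkill : ∀ (γ : ℕ → R) (i j : ℕ), j < i → i ≤ e' → g γ i * g γ j = 0 := by
    intro γ i j hji hie
    have h1 : (a*v)^i * a = a * (v*a)^i := shift_pow a v i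
    have h2 : i + (e' - j) = (e'+1) + (i - 1 - j) := by omega
    have hM : a * (v*a)^(i + (e' - j)) = 0 := by
      rw [h2, pow_add, ← mul_assoc, hD v, zero_mul]
    have expand : g γ i * g γ j
        = (v*a)^(e' - i) * γ i * (a * (v*a)^(i + (e' - j))) * (γ j * ((a*v)^j * a)) := by
      rw [hgdef]
      simp only
      rw [pow_add (v*a) i (e' - j), ← mul_assoc a ((v*a)^i) ((v*a)^(e'-j)), ← h1]
      noncomm_ring
    rw [expand, hM, mul_zero, zero_mul]
  -- the identity word vanishes
  have hword0 : ∀ γ : ℕ → R, a * chainProd (g γ) 0 (e'+1) = 0 := by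
    intro γ
    have hps := perm_sum_zero a (e'+1) hD
      (fun i : Fin (e'+1) => (v*a)^(e' - (i:ℕ)) * γ (i:ℕ) * (a*v)^(i:ℕ))
    rw [Finset.sum_eq_single (1 : Equiv.Perm (Fin (e'+1)))] at hps
    · simp only [Equiv.Perm.one_apply] at hps
      rw [← ofFn_chainProd (g γ) (e'+1) 0]
      have hfun : (fun k : Fin (e'+1) => g γ (0 + (k:ℕ)))
          = fun k : Fin (e'+1) => (v*a)^(e' - (k:ℕ)) * γ (k:ℕ) * (a*v)^(k:ℕ) * a := by
        funext k
        rw [hgdef, Nat.zero_add]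
      rw [hfun]
      exact hps
    · intro σ _ hσ
      obtain ⟨k, hk1, hlt⟩ := perm_descent σ hσ
      have hz : (List.ofFn fun kk : Fin (e'+1) =>
          ((v*a)^(e' - ((σ kk : Fin (e'+1)):ℕ)) * γ ((σ kk : Fin (e'+1)):ℕ)
            * (a*v)^((σ kk : Fin (e'+1)):ℕ)) * a).prod = 0 := by
        refine ofFn_adj_zero (e'+1) _ k hk1 ?_
        have := hkill γ ((σ ⟨k, by omega⟩ : Fin (e'+1)) : ℕ) ((σ ⟨k+1, hk1⟩ : Fin (e'+1)) : ℕ)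
          hlt (by omega)
        rw [hgdef] at this
        simp only at this
        simpa [mul_assoc] using this
      have hsame : (List.ofFn fun kk : Fin (e'+1) =>
          ((v*a)^(e' - ((σ kk : Fin (e'+1)):ℕ)) * γ ((σ kk : Fin (e'+1)):ℕ)
            * (a*v)^((σ kk : Fin (e'+1)):ℕ)) * a).prod
          = (List.ofFn fun kk : Fin (e'+1) =>
            ((fun i : Fin (e'+1) => (v*a)^(e' - (i:ℕ)) * γ (i:ℕ) * (a*v)^(i:ℕ)) (σ kk)) * a).prod := rfl
      rw [hsame] at hz
      rw [hz, mul_zero]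
    · intro h1; exact absurd (Finset.mem_univ _) h1
  -- cascade
  have casc : ∀ j : ℕ, j ≤ e' → ∀ γ : ℕ → R,
      (a*v)^j * (a * chainProd (g γ) (j+1) (e' - j)) = 0 := by
    intro j
    induction j with
    | zero =>
        intro _ γ
        have hstep : ∀ r : R, (a * (v*a)^e') * r * (a * chainProd (g γ) 1 e') = 0 := by
          intro r
          have h0 := hword0 (Function.update γ 0 r)
          rw [chainProd_succ] at h0
          have hcg : chainProd (g (Function.update γ 0 r)) 1 e' = chainProd (g γ) 1 e' := by
            refine chainProd_congr _ _ e' 1 (fun i hi => ?_)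
            rw [hgdef]
            simp only
            rw [Function.update_of_ne (by omega)]
          rw [hcg] at h0
          have hg0 : g (Function.update γ 0 r) 0 = (v*a)^e' * r * a := by
            rw [hgdef]
            simp
          rw [hg0] at h0
          calc (a * (v*a)^e') * r * (a * chainProd (g γ) 1 e')
              = a * ((v*a)^e' * r * a * chainProd (g γ) 1 e') := by noncomm_ring
            _ = 0 := h0
        rcases hprime _ _ hstep with h | h
        · exact absurd h hq
        · simpa using h
    | succ j ih =>
        intro hj γ
        have hexp : ∀ γ' : ℕ → R, (a*v)^j * (a * chainProd (g γ') (j+1) (e' - j))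
            = (a * (v*a)^(e'-1)) * γ' (j+1)
              * ((a*v)^(j+1) * (a * chainProd (g γ') (j+2) (e' - (j+1)))) := by
          intro γ'
          have hc : e' - j = (e' - (j+1)) + 1 := by omega
          rw [hc, chainProd_succ]
          have h1 : (a*v)^j * a = a * (v*a)^j := shift_pow a v j
          have h2 : j + (e' - (j+1)) = e' - 1 := by omega
          have h3 : a * (v*a)^j * (v*a)^(e' - (j+1)) = a * (v*a)^(e'-1) := by
            rw [mul_assoc, ← pow_add, h2]
          have hgj : g γ' (j+1) = (v*a)^(e' - (j+1)) * γ' (j+1) * (a*v)^(j+1) * a := by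
            rw [hgdef]
          rw [hgj]
          calc (a*v)^j * (a * (((v*a)^(e' - (j+1)) * γ' (j+1) * (a*v)^(j+1) * a)
                * chainProd (g γ') (j+2) (e' - (j+1))))
              = ((a*v)^j * a * (v*a)^(e' - (j+1))) * γ' (j+1)
                * ((a*v)^(j+1) * (a * chainProd (g γ') (j+2) (e' - (j+1)))) := by noncomm_ring
            _ = (a * (v*a)^(e'-1)) * γ' (j+1)
                * ((a*v)^(j+1) * (a * chainProd (g γ') (j+2) (e' - (j+1)))) := by
                  rw [h1, h3]
        have hstep : ∀ r : R,
            (a * (v*a)^(e'-1)) * r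
              * ((a*v)^(j+1) * (a * chainProd (g γ) (j+2) (e' - (j+1)))) = 0 := by
          intro r
          have h0 := ih (by omega) (Function.update γ (j+1) r)
          rw [hexp (Function.update γ (j+1) r)] at h0
          rw [Function.update_self] at h0
          have hcg : chainProd (g (Function.update γ (j+1) r)) (j+2) (e' - (j+1))
              = chainProd (g γ) (j+2) (e' - (j+1)) := by
            refine chainProd_congr _ _ _ _ (fun i hi => ?_)
            rw [hgdef]
            simp only
            rw [Function.update_of_ne (by omega)]
          rw [hcg] at h0
          exact h0
        rcases hprime _ _ hstep with h | h
        · exfalso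
          apply hq
          have he1 : e' = (e' - 1) + 1 := by omega
          calc a * (v*a)^e' = a * (v*a)^((e'-1)+1) := by rw [← he1]
            _ = (a * (v*a)^(e'-1)) * (v*a) := by rw [pow_succ, mul_assoc]
            _ = 0 := by rw [h, zero_mul]
        · exact h
  have hfin := casc e' le_rfl (fun _ => 0)
  rw [Nat.sub_self] at hfin
  have hone : chainProd (g (fun _ => 0)) (e'+1) 0 = 1 := rfl
  rw [hone, mul_one, shift_pow a v e'] at hfin
  exact hq hfin


lemma core_sq_zero (hprime : ∀ x y : R, (∀ r : R, x * r * y = 0) → x = 0 ∨ y = 0)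
    (m : ℕ) (hid2 : ∀ x y : R, (x*y - y*x)^m = 0) :
    ∀ a : R, a * a = 0 → a = 0 := by
  intro a ha
  have hD : ∀ v : R, a * (v*a)^m = 0 := fun v => lemA_s8 a v m ha (hid2 a v)
  have main : ∀ e, (∀ v : R, a * (v*a)^e = 0) → a = 0 := by
    intro e
    induction e with
    | zero =>
        intro h
        have := h 1
        simpa using this
    | succ e ih =>
        intro h
        refine ih (fun v => ?_)
        have := descent hprime a (e+1) (by omega) h v
        simpa using this
  exact main m hD

lemma core_reduced (hprime : ∀ x y : R, (∀ r : R, x * r * y = 0) → x = 0 ∨ y = 0)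
    (m : ℕ) (hid2 : ∀ x y : R, (x*y - y*x)^m = 0) :
    ∀ (n : ℕ) (x : R), x^n = 0 → x = 0 := by
  intro n
  induction n using Nat.strong_induction_on with
  | _ n ih =>
    intro x hx
    match n, hx with
    | 0, hx =>
        rw [pow_zero] at hx
        calc x = x * 1 := (mul_one x).symm
          _ = x * 0 := by rw [hx]
          _ = 0 := mul_zero x
    | 1, hx => simpa using hx
    | (k+2), hx =>
        have h2 : (x^(k+1)) * (x^(k+1)) = 0 := by
          rw [← pow_add]
          have he : (k+1)+(k+1) = (k+2) + k := by omega
          rw [he, pow_add, hx, zero_mul]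
        have h3 : x^(k+1) = 0 := core_sq_zero hprime m hid2 _ h2
        exact ih (k+1) (by omega) x h3

lemma core_comm (hprime : ∀ x y : R, (∀ r : R, x * r * y = 0) → x = 0 ∨ y = 0)
    (m : ℕ) (hid2 : ∀ x y : R, (x*y - y*x)^m = 0) :
    ∀ x y : R, x * y = y * x := by
  intro x y
  have h := core_reduced hprime m hid2 m (x*y - y*x) (hid2 x y)
  rwa [sub_eq_zero] at h


end NilpAux

end NilpAuxSection

universe u v

theorem nilpotent_iff_in_all_commDomain_kernels
    (k : Type u) (A : Type v) [CommRing k] [Ring A] [Algebra k A]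
    (m : ℕ) (hm : 1 ≤ m) (hid : IsPolyId k A (commPow k m)) (a : A) :
    IsNilpotent a ↔
      ∀ (B : Type v) [CommRing B] [IsDomain B] (f : A →+* B),
        Function.Surjective f → f a = 0 := by
  classical
  have hid2 : ∀ x y : A, (x*y - y*x)^m = 0 := by
    intro x y
    have h := hid (fun n => if n = 0 then x else y)
    simpa [commPow, map_pow, map_sub, map_mul, FreeAlgebra.lift_ι_apply] using h
  constructor
  · rintro ⟨n, hn⟩ B _ _ f hf
    exact IsReduced.eq_zero _ ⟨n, by rw [← map_pow, hn, map_zero]⟩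
  · intro hall
    by_contra hnil
    -- the family of two-sided ideals avoiding all powers of `a`
    set S : Set (Set A) := {P | ((0:A) ∈ P ∧ (∀ x y, x ∈ P → y ∈ P → x + y ∈ P)
        ∧ (∀ r x, x ∈ P → r*x ∈ P) ∧ (∀ r x, x ∈ P → x*r ∈ P))
      ∧ ∀ n : ℕ, a^(n+1) ∉ P} with hSdef
    have h0S : {(0:A)} ∈ S := by
      constructor
      · refine ⟨rfl, ?_, ?_, ?_⟩
        · intro x y hx hy
          rw [Set.mem_singleton_iff] at *
          rw [hx, hy, add_zero]
        · intro r x hx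
          rw [Set.mem_singleton_iff] at *
          rw [hx, mul_zero]
        · intro r x hx
          rw [Set.mem_singleton_iff] at *
          rw [hx, zero_mul]
      · intro n hn
        rw [Set.mem_singleton_iff] at hn
        exact hnil ⟨n+1, hn⟩
    have hchainub : ∀ C ⊆ S, IsChain (· ⊆ ·) C → C.Nonempty → ∃ ub ∈ S, ∀ s ∈ C, s ⊆ ub := by
      intro C hCS hchain hCne
      refine ⟨⋃₀ C, ?_, fun s hs => Set.subset_sUnion_of_mem hs⟩
      obtain ⟨P₀, hP₀⟩ := hCne
      constructor
      · refine ⟨Set.mem_sUnion.mpr ⟨P₀, hP₀, (hCS hP₀).1.1⟩, ?_, ?_, ?_⟩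
        · intro x y hx hy
          obtain ⟨Px, hPx, hxPx⟩ := hx
          obtain ⟨Py, hPy, hyPy⟩ := hy
          rcases hchain.total hPx hPy with h | h
          · exact ⟨Py, hPy, (hCS hPy).1.2.1 x y (h hxPx) hyPy⟩
          · exact ⟨Px, hPx, (hCS hPx).1.2.1 x y hxPx (h hyPy)⟩
        · intro r x hx
          obtain ⟨Px, hPx, hxPx⟩ := hx
          exact ⟨Px, hPx, (hCS hPx).1.2.2.1 r x hxPx⟩
        · intro r x hx
          obtain ⟨Px, hPx, hxPx⟩ := hx
          exact ⟨Px, hPx, (hCS hPx).1.2.2.2 r x hxPx⟩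
      · intro n hn
        obtain ⟨Px, hPx, hxPx⟩ := hn
        exact (hCS hPx).2 n hxPx
    obtain ⟨P, hsubP, hmax⟩ := zorn_subset_nonempty S hchainub {(0:A)} h0S
    have hPS : P ∈ S := hmax.1
    have hP0 : (0:A) ∈ P := hPS.1.1
    have hPadd := hPS.1.2.1
    have hPleft := hPS.1.2.2.1
    have hPright := hPS.1.2.2.2
    have hPavoid := hPS.2
    -- primeness from maximality
    have hprimeP : ∀ x y : A, x ∉ P → y ∉ P → ∃ r, x*r*y ∉ P := by
      intro x y hx hy
      by_contra hcon
      push_neg at hcon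
      set M : A → Set A := fun z => (AddSubmonoid.closure {w : A | ∃ u v', w = u * z * v'} : Set A)
        with hMdef
      have hMleft : ∀ z r t, t ∈ M z → r * t ∈ M z := by
        intro z r t ht
        induction ht using AddSubmonoid.closure_induction with
        | mem w hw =>
            obtain ⟨u, v', rfl⟩ := hw
            exact AddSubmonoid.subset_closure ⟨r*u, v', by noncomm_ring⟩
        | zero =>
            have : r * (0:A) = 0 := mul_zero r
            rw [this]
            exact AddSubmonoid.zero_mem _
        | add t₁ t₂ h₁ h₂ ih₁ ih₂ =>
            have : r * (t₁ + t₂) = r * t₁ + r * t₂ := mul_add r t₁ t₂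
            rw [this]
            exact AddSubmonoid.add_mem _ ih₁ ih₂
      have hMright : ∀ z r t, t ∈ M z → t * r ∈ M z := by
        intro z r t ht
        induction ht using AddSubmonoid.closure_induction with
        | mem w hw =>
            obtain ⟨u, v', rfl⟩ := hw
            exact AddSubmonoid.subset_closure ⟨u, v'*r, by noncomm_ring⟩
        | zero =>
            rw [zero_mul]
            exact AddSubmonoid.zero_mem _
        | add t₁ t₂ h₁ h₂ ih₁ ih₂ =>
            rw [add_mul]
            exact AddSubmonoid.add_mem _ ih₁ ih₂
      have hQ : ∀ z : A, z ∉ P → ∃ (n : ℕ) (p t : A), p ∈ P ∧ t ∈ M z ∧ a^(n+1) = p + t := by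
        intro z hz
        by_contra hno
        push_neg at hno
        apply hz
        have hQS : {w : A | ∃ p ∈ P, ∃ t ∈ M z, w = p + t} ∈ S := by
          constructor
          · refine ⟨⟨0, hP0, 0, AddSubmonoid.zero_mem _, by rw [add_zero]⟩, ?_, ?_, ?_⟩
            · rintro _ _ ⟨p₁, hp₁, t₁, ht₁, rfl⟩ ⟨p₂, hp₂, t₂, ht₂, rfl⟩
              exact ⟨p₁ + p₂, hPadd _ _ hp₁ hp₂, t₁ + t₂, AddSubmonoid.add_mem _ ht₁ ht₂,
                by abel⟩
            · rintro r _ ⟨p₁, hp₁, t₁, ht₁, rfl⟩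
              exact ⟨r * p₁, hPleft r _ hp₁, r * t₁, hMleft z r t₁ ht₁, by noncomm_ring⟩
            · rintro r _ ⟨p₁, hp₁, t₁, ht₁, rfl⟩
              exact ⟨p₁ * r, hPright r _ hp₁, t₁ * r, hMright z r t₁ ht₁, by noncomm_ring⟩
          · rintro n ⟨p₁, hp₁, t₁, ht₁, hEq⟩
            exact hno n p₁ t₁ hp₁ ht₁ hEq
        have hPQ : P ⊆ {w : A | ∃ p ∈ P, ∃ t ∈ M z, w = p + t} := by
          intro w hw
          exact ⟨w, hw, 0, AddSubmonoid.zero_mem _, by rw [add_zero]⟩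
        have hQP := hmax.2 hQS hPQ
        apply hQP
        exact ⟨0, hP0, 1*z*1, AddSubmonoid.subset_closure ⟨1, 1, rfl⟩, by noncomm_ring⟩
      obtain ⟨n₁, p₁, t₁, hp₁, ht₁, he₁⟩ := hQ x hx
      obtain ⟨n₂, p₂, t₂, hp₂, ht₂, he₂⟩ := hQ y hy
      have htt : ∀ t ∈ M x, ∀ t' ∈ M y, t * t' ∈ P := by
        intro t ht
        induction ht using AddSubmonoid.closure_induction with
        | mem w hw =>
            obtain ⟨u, v', rfl⟩ := hw
            intro t' ht'
            induction ht' using AddSubmonoid.closure_induction with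
            | mem w2 hw2 =>
                obtain ⟨u2, v2, rfl⟩ := hw2
                have hrearr : (u * x * v') * (u2 * y * v2) = u * ((x * (v' * u2) * y) * v2) := by
                  noncomm_ring
                rw [hrearr]
                exact hPleft u _ (hPright v2 _ (hcon (v' * u2)))
            | zero =>
                rw [mul_zero]
                exact hP0
            | add s₁ s₂ hs₁ hs₂ ih₁ ih₂ =>
                rw [mul_add]
                exact hPadd _ _ ih₁ ih₂
        | zero =>
            intro t' ht'
            rw [zero_mul]
            exact hP0
        | add s₁ s₂ hs₁ hs₂ ih₁ ih₂ =>
            intro t' ht'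
            rw [add_mul]
            exact hPadd _ _ (ih₁ t' ht') (ih₂ t' ht')
      have hbig : a^((n₁+n₂+1)+1) ∈ P := by
        have hEq : a^((n₁+n₂+1)+1) = a^(n₁+1) * a^(n₂+1) := by
          rw [← pow_add]
          congr 1
          omega
        rw [hEq, he₁, he₂]
        have hexp : (p₁+t₁)*(p₂+t₂) = ((p₁*(p₂+t₂) + t₁*p₂) + t₁*t₂) := by noncomm_ring
        rw [hexp]
        refine hPadd _ _ (hPadd _ _ ?_ ?_) ?_
        · exact hPright _ _ hp₁
        · exact hPleft _ _ hp₂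
        · exact htt t₁ ht₁ t₂ ht₂
      exact hPavoid _ hbig
    -- the quotient ring
    have hPneg : ∀ x ∈ P, -x ∈ P := by
      intro x hx
      have := hPleft (-1) x hx
      rwa [neg_one_mul] at this
    let c : RingCon A :=
      { r := fun x y => x - y ∈ P
        iseqv := ⟨fun x => by simpa using hP0,
          fun {x y} h => by
            have := hPneg _ h
            rwa [neg_sub] at this,
          fun {x y z} hxy hyz => by
            have := hPadd _ _ hxy hyz
            rwa [sub_add_sub_cancel] at this⟩
        add' := fun {w x y z} h1 h2 => by
          have := hPadd _ _ h1 h2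
          have hEq : w - x + (y - z) = w + y - (x + z) := by noncomm_ring
          rwa [hEq] at this
        mul' := fun {w x y z} h1 h2 => by
          have hEq : w*y - x*z = w*(y - z) + (w - x)*z := by noncomm_ring
          show w*y - x*z ∈ P
          rw [hEq]
          exact hPadd _ _ (hPleft w _ h2) (hPright z _ h1) }
    have hQmk : ∀ z : A, ((z : c.Quotient)) = 0 ↔ z ∈ P := by
      intro z
      rw [show (0 : c.Quotient) = ((0:A) : c.Quotient) from rfl, RingCon.eq]
      show z - 0 ∈ P ↔ z ∈ P
      rw [sub_zero]
    set f : A →+* c.Quotient := c.mk' with hfdef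
    have hfcoe : ∀ z : A, f z = (z : c.Quotient) := fun z => rfl
    have hfsurj : Function.Surjective f := fun q => Quot.inductionOn q fun z => ⟨z, rfl⟩
    have hid2Q : ∀ x y : c.Quotient, (x*y - y*x)^m = 0 := by
      intro x y
      obtain ⟨x₀, rfl⟩ := hfsurj x
      obtain ⟨y₀, rfl⟩ := hfsurj y
      rw [← map_mul, ← map_mul, ← map_sub, ← map_pow, hid2, map_zero]
    have hprimeQ : ∀ x y : c.Quotient, (∀ r, x * r * y = 0) → x = 0 ∨ y = 0 := by
      intro x y
      obtain ⟨x₀, rfl⟩ := hfsurj x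
      obtain ⟨y₀, rfl⟩ := hfsurj y
      intro h
      by_cases hx : x₀ ∈ P
      · left
        rw [hfcoe, hQmk]
        exact hx
      by_cases hy : y₀ ∈ P
      · right
        rw [hfcoe, hQmk]
        exact hy
      exfalso
      obtain ⟨r, hr⟩ := hprimeP x₀ y₀ hx hy
      apply hr
      rw [← hQmk]
      have := h (f r)
      rw [← map_mul, ← map_mul] at this
      exact this
    have hred := NilpAux.core_reduced hprimeQ m hid2Q
    have hcomm := NilpAux.core_comm hprimeQ m hid2Q
    letI : CommRing c.Quotient := { (inferInstance : Ring c.Quotient) with mul_comm := hcomm }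
    have hfa : f a ≠ 0 := by
      rw [hfcoe, Ne, hQmk]
      intro h
      exact hPavoid 0 (by rwa [zero_add, pow_one])
    letI : Nontrivial c.Quotient := ⟨⟨f a, 0, hfa⟩⟩
    letI : NoZeroDivisors c.Quotient :=
      ⟨fun {x y} hxy => hprimeQ x y (fun r => by
        rw [mul_assoc, hcomm r y, ← mul_assoc, hxy, zero_mul])⟩
    letI : IsDomain c.Quotient := NoZeroDivisors.to_isDomain _
    exact hfa (hall c.Quotient f hfsurj)
end
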